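/- arXiv:1603.07809 — 10 statements merged into one kernel-verified Lean document; each statement's English description precedes it below -/
import Mathlib

section
/- Let t, k, v, N be integers with k ≥ t ≥ 2, v ≥ 2 and N ≥ 1. If C(k,t)·v^t·(1 − 1/v^t)^N < 1, then a covering array CA(N;t,k,v) exists; in particular CAN(t,k,v) ≤ N. -/
/-- An `N × k` array `A` over alphabet `Fin v` covers the `t`-way interaction
given by distinct columns `c` and values `a` if some row agrees with `a` on `c`. -/
def Covers {N k v t : ℕ} (A : Fin N → Fin k → Fin v)
    (c : Fin t → Fin k) (a : Fin t → Fin v) : Prop :=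
  ∃ r : Fin N, ∀ i : Fin t, A r (c i) = a i

/-- `A` is a covering array `CA(N; t, k, v)`: every `t`-way interaction is covered. -/
def IsCoveringArray (N t k v : ℕ) (A : Fin N → Fin k → Fin v) : Prop :=
  ∀ c : Fin t → Fin k, Function.Injective c → ∀ a : Fin t → Fin v, Covers A c a

/-- The covering array number `CAN(t, k, v)`: the least `N` admitting a `CA(N; t, k, v)`. -/
noncomputable def CAN (t k v : ℕ) : ℕ :=
  sInf {N : ℕ | ∃ A : Fin N → Fin k → Fin v, IsCoveringArray N t k v A}

/-- Rows matching `g` on the column set `S`. -/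
def Rmatch {k v : ℕ} (S : Finset (Fin k)) (g : Fin k → Fin v) : Finset (Fin k → Fin v) :=
  Fintype.piFinset (fun j => if j ∈ S then {g j} else Finset.univ)

/-- Arrays all of whose rows fail to match `g` on `S`. -/
def BadArr (N : ℕ) {k v : ℕ} (S : Finset (Fin k)) (g : Fin k → Fin v) :
    Finset (Fin N → Fin k → Fin v) :=
  Fintype.piFinset (fun _ => Finset.univ \ Rmatch S g)

/-- Canonical assignments: arbitrary on `S`, equal to `z` off `S`. -/
def Canon {k v : ℕ} (z : Fin v) (S : Finset (Fin k)) : Finset (Fin k → Fin v) :=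
  Fintype.piFinset (fun j => if j ∈ S then Finset.univ else {z})

lemma Rmatch_card {k v t : ℕ} (S : Finset (Fin k)) (hS : S.card = t) (g : Fin k → Fin v) :
    (Rmatch S g).card = v ^ (k - t) := by
  classical
  rw [Rmatch, Fintype.card_piFinset]
  have : ∀ j : Fin k, (if j ∈ S then ({g j} : Finset (Fin v)) else Finset.univ).card
      = if j ∈ S then 1 else v := by
    intro j; split <;> simp
  rw [Finset.prod_congr rfl (fun j _ => this j), Finset.prod_ite, Finset.prod_const,
    Finset.prod_const, one_pow, one_mul]
  congr 1
  rw [Finset.filter_not, Finset.filter_univ_mem, Finset.card_sdiff_of_subset (Finset.subset_univ _),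
    Finset.card_univ, Fintype.card_fin, hS]

lemma Canon_card {k v t : ℕ} (z : Fin v) (S : Finset (Fin k)) (hS : S.card = t) :
    (Canon z S).card = v ^ t := by
  classical
  rw [Canon, Fintype.card_piFinset]
  have : ∀ j : Fin k, (if j ∈ S then (Finset.univ : Finset (Fin v)) else {z}).card
      = if j ∈ S then v else 1 := by
    intro j; split <;> simp
  rw [Finset.prod_congr rfl (fun j _ => this j), Finset.prod_ite, Finset.prod_const,
    Finset.prod_const, one_pow, mul_one]
  congr 1
  rw [Finset.filter_univ_mem, hS]

lemma BadArr_card {N k v t : ℕ} (S : Finset (Fin k)) (hS : S.card = t) (g : Fin k → Fin v) :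
    (BadArr N S g).card = (v ^ k - v ^ (k - t)) ^ N := by
  classical
  rw [BadArr, Fintype.card_piFinset, Finset.prod_const, Finset.card_univ, Fintype.card_fin]
  congr 1
  rw [Finset.card_sdiff_of_subset (Finset.subset_univ _), Finset.card_univ, Rmatch_card S hS g]
  congr 1
  simp [Fintype.card_fun]

theorem slj_finite (t k v N : ℕ) (ht : 2 ≤ t) (hk : t ≤ k) (hv : 2 ≤ v) (hN : 1 ≤ N)
    (h : (Nat.choose k t : ℝ) * (v : ℝ) ^ t * (1 - 1 / (v : ℝ) ^ t) ^ N < 1) :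
    (∃ A : Fin N → Fin k → Fin v, IsCoveringArray N t k v A) ∧ CAN t k v ≤ N := by
  classical
  have hv0 : 0 < v := by omega
  set z : Fin v := ⟨0, hv0⟩ with hz
  set pcs : Finset (Finset (Fin k)) := Finset.powersetCard t Finset.univ with hpcs
  -- the key numeric inequality in ℕ
  have hle : v ^ (k - t) ≤ v ^ k := Nat.pow_le_pow_right hv0 (by omega)
  have hfin : Nat.choose k t * (v ^ t * (v ^ k - v ^ (k - t)) ^ N) < (v ^ k) ^ N := by
    have hvt : (0:ℝ) < (v:ℝ) ^ t := by positivity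
    have hkt : (v:ℝ) ^ (k - t) * (v:ℝ) ^ t = (v:ℝ) ^ k := by
      rw [← pow_add]; congr 1; omega
    have e1 : (v:ℝ) ^ k - (v:ℝ) ^ (k - t) = (v:ℝ) ^ k * (1 - 1 / (v:ℝ) ^ t) := by
      have hne : ((v:ℝ) ^ t) ≠ 0 := ne_of_gt hvt
      field_simp
      linear_combination -hkt
    have hcast : ((v ^ k - v ^ (k - t) : ℕ) : ℝ) = (v:ℝ) ^ k * (1 - 1 / (v:ℝ) ^ t) := by
      rw [Nat.cast_sub hle]; push_cast; linear_combination e1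
    have hpos : (0:ℝ) < ((v:ℝ) ^ k) ^ N := by positivity
    have hreal : (Nat.choose k t : ℝ) * ((v:ℝ) ^ t * ((v ^ k - v ^ (k - t) : ℕ) : ℝ) ^ N)
        < ((v:ℝ) ^ k) ^ N := by
      rw [hcast, mul_pow]
      calc (Nat.choose k t : ℝ) * ((v:ℝ) ^ t * (((v:ℝ) ^ k) ^ N * (1 - 1 / (v:ℝ) ^ t) ^ N))
          = ((Nat.choose k t : ℝ) * (v:ℝ) ^ t * (1 - 1 / (v:ℝ) ^ t) ^ N) * ((v:ℝ) ^ k) ^ N := by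
            ring
        _ < 1 * ((v:ℝ) ^ k) ^ N := by exact mul_lt_mul_of_pos_right h hpos
        _ = ((v:ℝ) ^ k) ^ N := one_mul _
    exact_mod_cast hreal
  -- existence of a good array by the union bound
  have hex : ∃ A : Fin N → Fin k → Fin v, ∀ S ∈ pcs, ∀ g ∈ Canon z S, A ∉ BadArr N S g := by
    by_contra hc
    push_neg at hc
    have hsub : (Finset.univ : Finset (Fin N → Fin k → Fin v)) ⊆
        pcs.biUnion (fun S => (Canon z S).biUnion (fun g => BadArr N S g)) := by
      intro A _
      obtain ⟨S, hS, g, hg, hA⟩ := hc A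
      exact Finset.mem_biUnion.2 ⟨S, hS, Finset.mem_biUnion.2 ⟨g, hg, hA⟩⟩
    have h1 := Finset.card_le_card hsub
    have h2 : (pcs.biUnion (fun S => (Canon z S).biUnion (fun g => BadArr N S g))).card
        ≤ ∑ S ∈ pcs, ∑ g ∈ Canon z S, (BadArr N S g).card :=
      le_trans Finset.card_biUnion_le
        (Finset.sum_le_sum fun S _ => Finset.card_biUnion_le)
    have h3 : ∑ S ∈ pcs, ∑ g ∈ Canon z S, (BadArr N S g).card
        = Nat.choose k t * (v ^ t * (v ^ k - v ^ (k - t)) ^ N) := by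
      rw [Finset.sum_congr rfl (fun S hS => ?_)]
      · rw [Finset.sum_const, smul_eq_mul]
        congr 1
        rw [hpcs, Finset.card_powersetCard, Finset.card_univ, Fintype.card_fin]
      · have hScard : S.card = t := (Finset.mem_powersetCard_univ.1 hS)
        rw [Finset.sum_congr rfl (fun g _ => BadArr_card S hScard g), Finset.sum_const,
          smul_eq_mul, Canon_card z S hScard]
    have h4 : (Finset.univ : Finset (Fin N → Fin k → Fin v)).card = (v ^ k) ^ N := by
      rw [Finset.card_univ]
      simp [Fintype.card_fun]
    omega
  obtain ⟨A, hA⟩ := hex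
  have hCA : IsCoveringArray N t k v A := by
    intro c hc a
    set S : Finset (Fin k) := Finset.image c Finset.univ with hS
    have hScard : S.card = t := by
      rw [hS, Finset.card_image_of_injective _ hc, Finset.card_univ, Fintype.card_fin]
    have hSpcs : S ∈ pcs := Finset.mem_powersetCard_univ.2 hScard
    set g : Fin k → Fin v := fun j => if hj : ∃ i, c i = j then a hj.choose else z with hg
    have hgG : g ∈ Canon z S := by
      rw [Canon, Fintype.mem_piFinset]
      intro j
      by_cases hj : j ∈ S
      · simp [hj]
      · have hne : ¬ ∃ i, c i = j := by
          rintro ⟨i, hi⟩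
          exact hj (Finset.mem_image.2 ⟨i, Finset.mem_univ i, hi⟩)
        simp [hg, hj, hne]
    have hAg := hA S hSpcs g hgG
    rw [BadArr, Fintype.mem_piFinset] at hAg
    push_neg at hAg
    obtain ⟨r, hr⟩ := hAg
    have hrm : A r ∈ Rmatch S g := by
      by_contra hcon
      exact hr (Finset.mem_sdiff.2 ⟨Finset.mem_univ _, hcon⟩)
    rw [Rmatch, Fintype.mem_piFinset] at hrm
    refine ⟨r, fun i => ?_⟩
    have hci : c i ∈ S := Finset.mem_image.2 ⟨i, Finset.mem_univ i, rfl⟩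
    have h5 := hrm (c i)
    rw [if_pos hci, Finset.mem_singleton] at h5
    rw [h5]
    have hex' : ∃ i', c i' = c i := ⟨i, rfl⟩
    simp only [hg, dif_pos hex']
    exact congrArg a (hc hex'.choose_spec)
  refine ⟨⟨A, hCA⟩, Nat.sInf_le ⟨A, hCA⟩⟩
end

section
/- (Stein–Lovász–Johnson bound) Let t, v be fixed integers with t ≥ 2 and v ≥ 2. Then d(t,v) = limsup_{k→∞} CAN(t,k,v)/log k ≤ t / log(v^t/(v^t − 1)). -/
open Finset

/-- There are at least `v ^ (k - t)` rows agreeing with `a` on the columns `c`. -/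
lemma good_rows_card {k v t : ℕ} (c : Fin t → Fin k) (hc : Function.Injective c)
    (a : Fin t → Fin v) :
    v ^ (k - t) ≤ (univ.filter (fun row : Fin k → Fin v => ∀ i, row (c i) = a i)).card := by
  classical
  have hcard : Fintype.card {x : Fin k // x ∉ Set.range c} = k - t := by
    have h1 : Fintype.card (Set.range c) = t := by
      rw [Set.card_range_of_injective hc, Fintype.card_fin]
    rw [Fintype.card_subtype_compl, Fintype.card_fin]
    congr 1
  set φ : ({x : Fin k // x ∉ Set.range c} → Fin v) → (Fin k → Fin v) := fun g x =>
    if h : ∃ i, c i = x then a h.choose else g ⟨x, by simpa using h⟩ with hφ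
  have hmem : ∀ g, φ g ∈ univ.filter (fun row : Fin k → Fin v => ∀ i, row (c i) = a i) := by
    intro g
    simp only [mem_filter, mem_univ, true_and]
    intro i
    have h : ∃ j, c j = c i := ⟨i, rfl⟩
    have := h.choose_spec
    simp only [hφ, dif_pos h]
    exact congrArg a (hc this)
  have hinj : Function.Injective φ := by
    intro g₁ g₂ hg
    funext x
    have h2 : ¬ ∃ i, c i = x.1 := by simpa [Set.mem_range] using x.2
    have := congrFun hg x.1
    simp only [hφ, dif_neg h2] at this
    convert this
  calc v ^ (k - t) = Fintype.card ({x : Fin k // x ∉ Set.range c} → Fin v) := by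
        rw [Fintype.card_fun, hcard, Fintype.card_fin]
    _ ≤ (univ.filter (fun row : Fin k → Fin v => ∀ i, row (c i) = a i)).card := by
        apply Finset.card_le_card_of_injOn φ (fun g _ => hmem g)
        exact fun g₁ _ g₂ _ h => hinj h

/-- There are at most `v ^ k - v ^ (k - t)` rows disagreeing with `a` somewhere on `c`. -/
lemma bad_rows_card {k v t : ℕ} (c : Fin t → Fin k) (hc : Function.Injective c)
    (a : Fin t → Fin v) :
    (univ.filter (fun row : Fin k → Fin v => ¬ ∀ i, row (c i) = a i)).card ≤
      v ^ k - v ^ (k - t) := by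
  classical
  have hg := good_rows_card c hc a
  have hsplit := Finset.card_filter_add_card_filter_not
    (s := (univ : Finset (Fin k → Fin v))) (p := fun row => ∀ i, row (c i) = a i)
  have htot : (univ : Finset (Fin k → Fin v)).card = v ^ k := by
    simp [Fintype.card_fun]
  refine Nat.le_sub_of_add_le ?_
  calc (univ.filter (fun row : Fin k → Fin v => ¬ ∀ i, row (c i) = a i)).card + v ^ (k - t)
      ≤ (univ.filter (fun row : Fin k → Fin v => ¬ ∀ i, row (c i) = a i)).card +
        (univ.filter (fun row : Fin k → Fin v => ∀ i, row (c i) = a i)).card :=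
        Nat.add_le_add_left hg _
    _ = v ^ k := by rw [Nat.add_comm, hsplit, htot]

/-- Stein–Lovász–Johnson counting: if `k^t v^t (v^k - v^{k-t})^N < (v^k)^N` then a
covering array with `N` rows exists. -/
lemma exists_CA (t k v N : ℕ)
    (h : k ^ t * v ^ t * (v ^ k - v ^ (k - t)) ^ N < (v ^ k) ^ N) :
    ∃ A : Fin N → Fin k → Fin v, IsCoveringArray N t k v A := by
  classical
  by_contra hno
  push_neg at hno
  simp only [IsCoveringArray, not_forall] at hno
  let BadR : (Fin t → Fin k) → (Fin t → Fin v) → Finset (Fin k → Fin v) :=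
    fun c a => univ.filter (fun row => ¬ ∀ i, row (c i) = a i)
  set P : Finset ((Fin t → Fin k) × (Fin t → Fin v)) :=
    (univ.filter (fun c : Fin t → Fin k => Function.Injective c)) ×ˢ univ with hP
  set Bad : ((Fin t → Fin k) × (Fin t → Fin v)) → Finset (Fin N → Fin k → Fin v) :=
    fun p => Fintype.piFinset (fun _ : Fin N => BadR p.1 p.2) with hBad
  have hsub : (univ : Finset (Fin N → Fin k → Fin v)) ⊆ P.biUnion Bad := by
    intro A _
    obtain ⟨c, hc, a, hcov⟩ := hno A
    rw [Finset.mem_biUnion]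
    refine ⟨⟨c, a⟩, by simp [hP, hc], ?_⟩
    rw [hBad, Fintype.mem_piFinset]
    intro r
    simp only [BadR, mem_filter, mem_univ, true_and]
    intro hall
    exact hcov ⟨r, hall⟩
  have hcardU : (univ : Finset (Fin N → Fin k → Fin v)).card = (v ^ k) ^ N := by
    simp [Fintype.card_fun]
  have hchain : (v ^ k) ^ N ≤ k ^ t * v ^ t * (v ^ k - v ^ (k - t)) ^ N := by
    calc (v ^ k) ^ N = (univ : Finset (Fin N → Fin k → Fin v)).card := hcardU.symm
      _ ≤ (P.biUnion Bad).card := Finset.card_le_card hsub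
      _ ≤ ∑ p ∈ P, (Bad p).card := Finset.card_biUnion_le
      _ ≤ ∑ _p ∈ P, (v ^ k - v ^ (k - t)) ^ N := by
          apply Finset.sum_le_sum
          intro p hp
          have hinj : Function.Injective p.1 := by
            rw [hP, Finset.mem_product] at hp
            simpa using hp.1
          rw [hBad]
          rw [Fintype.card_piFinset]
          calc ∏ _r : Fin N, (BadR p.1 p.2).card ≤ ∏ _r : Fin N, (v ^ k - v ^ (k - t)) :=
                Finset.prod_le_prod (fun _ _ => Nat.zero_le _)
                  (fun _ _ => bad_rows_card p.1 hinj p.2)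
            _ = (v ^ k - v ^ (k - t)) ^ N := by simp
      _ = P.card * (v ^ k - v ^ (k - t)) ^ N := by rw [Finset.sum_const, smul_eq_mul]
      _ ≤ k ^ t * v ^ t * (v ^ k - v ^ (k - t)) ^ N := by
          apply Nat.mul_le_mul_right
          calc P.card = (univ.filter (fun c : Fin t → Fin k => Function.Injective c)).card *
                (univ : Finset (Fin t → Fin v)).card := Finset.card_product _ _
            _ ≤ (univ : Finset (Fin t → Fin k)).card * (univ : Finset (Fin t → Fin v)).card :=
                Nat.mul_le_mul_right _ (Finset.card_le_card (Finset.filter_subset _ _))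
            _ = k ^ t * v ^ t := by simp [Fintype.card_fun]
  omega

/-- There is an `N` satisfying both the SLJ size bound and the counting hypothesis. -/
lemma exists_good_N (t v : ℕ) (ht : 2 ≤ t) (hv : 2 ≤ v) (k : ℕ) (hkt : t ≤ k) (hk2 : 2 ≤ k) :
    ∃ N : ℕ, (N : ℝ) ≤ ((t : ℝ) * Real.log k + Real.log ((v:ℝ)^t)) /
        Real.log ((v : ℝ) ^ t / ((v : ℝ) ^ t - 1)) + 1 ∧
      k ^ t * v ^ t * (v ^ k - v ^ (k - t)) ^ N < (v ^ k) ^ N := by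
  set q : ℝ := (v : ℝ) ^ t with hqdef
  have hv1 : (1 : ℝ) < v := by exact_mod_cast hv
  have hq1 : 1 < q := one_lt_pow₀ hv1 (by omega)
  have hq0 : 0 < q := by linarith
  have hq1' : 0 < q - 1 := by linarith
  set L : ℝ := Real.log (q / (q - 1)) with hLdef
  have hL : 0 < L := Real.log_pos ((one_lt_div hq1').mpr (by linarith))
  have hk1 : (1 : ℝ) ≤ (k : ℝ) := by exact_mod_cast (by omega : 1 ≤ k)
  have hlogk : 0 ≤ Real.log k := Real.log_nonneg hk1
  have hlogq : 0 < Real.log q := Real.log_pos hq1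
  set X : ℝ := (t : ℝ) * Real.log k + Real.log q with hXdef
  have hX0 : 0 ≤ X := by positivity
  refine ⟨⌊X / L⌋₊ + 1, ?_, ?_⟩
  · push_cast
    have := Nat.floor_le (a := X / L) (by positivity)
    linarith
  · set N : ℕ := ⌊X / L⌋₊ + 1 with hNdef
    have hXN : X < N * L := by
      have h1 : X / L < (N : ℕ) := by
        rw [hNdef]; push_cast; exact Nat.lt_floor_add_one _
      calc X = X / L * L := by field_simp
        _ < N * L := by exact mul_lt_mul_of_pos_right (by exact_mod_cast h1) hL
    have hple : v ^ (k - t) ≤ v ^ k := Nat.pow_le_pow_right (by omega) (by omega)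
    rw [← Nat.cast_lt (α := ℝ)]
    push_cast [hple]
    have hvk : (0 : ℝ) < (v : ℝ) ^ k := by positivity
    have hsub : (v : ℝ) ^ k - (v : ℝ) ^ (k - t) = (v : ℝ) ^ k * ((q - 1) / q) := by
      have hpow : (v : ℝ) ^ (k - t) * q = (v : ℝ) ^ k := by
        rw [hqdef, ← pow_add]
        congr 1
        omega
      field_simp
      linarith [hpow]
    rw [hsub]
    have hk0 : (0 : ℝ) < (k : ℝ) := by linarith
    have hr0 : 0 < (q - 1) / q := by positivity
    have hr1 : (q - 1) / q < 1 := (div_lt_one hq0).mpr (by linarith)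
    have hlogr : Real.log ((q - 1) / q) = -L := by
      rw [hLdef, Real.log_div (by linarith) (by linarith),
        Real.log_div (by linarith) (by linarith)]
      ring
    have hkey : (k : ℝ) ^ t * q * ((q - 1) / q) ^ N < 1 := by
      have hpos : (0 : ℝ) < (k : ℝ) ^ t * q * ((q - 1) / q) ^ N := by positivity
      refine (Real.log_neg_iff hpos).mp ?_
      rw [Real.log_mul (by positivity) (pow_ne_zero _ (ne_of_gt hr0)),
        Real.log_mul (by positivity) (ne_of_gt hq0), Real.log_pow, Real.log_pow,
        Real.log_pow, hlogr]
      have hXN' : (t : ℝ) * Real.log k + Real.log q < (N : ℝ) * L := by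
        rw [hXdef] at hXN; exact hXN
      have hlq : Real.log q = (t : ℝ) * Real.log v := by
        rw [hqdef, Real.log_pow]
      nlinarith [hXN', hlq]
    have hq' : (v : ℝ) ^ t = q := hqdef.symm
    calc (k : ℝ) ^ t * (v : ℝ) ^ t * ((v : ℝ) ^ k * ((q - 1) / q)) ^ N
        = ((k : ℝ) ^ t * q * ((q - 1) / q) ^ N) * ((v : ℝ) ^ k) ^ N := by
          rw [hq', mul_pow]; ring
      _ < 1 * ((v : ℝ) ^ k) ^ N := by
          exact mul_lt_mul_of_pos_right hkey (by positivity)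
      _ = ((v : ℝ) ^ k) ^ N := one_mul _

/-- Real-valued SLJ bound on `CAN`. -/
lemma CAN_real_bound (t v : ℕ) (ht : 2 ≤ t) (hv : 2 ≤ v) (k : ℕ) (hkt : t ≤ k) (hk2 : 2 ≤ k) :
    (CAN t k v : ℝ) ≤ ((t : ℝ) * Real.log k + Real.log ((v:ℝ)^t)) /
        Real.log ((v : ℝ) ^ t / ((v : ℝ) ^ t - 1)) + 1 := by
  obtain ⟨N, hN1, hN2⟩ := exists_good_N t v ht hv k hkt hk2
  have hle : CAN t k v ≤ N := Nat.sInf_le (exists_CA t k v N hN2)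
  calc (CAN t k v : ℝ) ≤ (N : ℝ) := by exact_mod_cast hle
    _ ≤ _ := hN1

theorem slj_asymptotic (t v : ℕ) (ht : 2 ≤ t) (hv : 2 ≤ v) :
    Filter.limsup (fun k : ℕ => (CAN t k v : ℝ) / Real.log k) Filter.atTop ≤
      (t : ℝ) / Real.log ((v : ℝ) ^ t / ((v : ℝ) ^ t - 1)) := by
  set L : ℝ := Real.log ((v : ℝ) ^ t / ((v : ℝ) ^ t - 1)) with hLdef
  have hv1 : (1 : ℝ) < v := by exact_mod_cast hv
  have hq1 : 1 < (v : ℝ) ^ t := one_lt_pow₀ hv1 (by omega)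
  have hL : 0 < L := Real.log_pos ((one_lt_div (by linarith)).mpr (by linarith))
  have hlogq : 0 < Real.log ((v : ℝ) ^ t) := Real.log_pos hq1
  have hcob : Filter.IsCoboundedUnder (· ≤ ·) Filter.atTop
      (fun k : ℕ => (CAN t k v : ℝ) / Real.log k) := by
    apply Filter.isCoboundedUnder_le_of_eventually_le Filter.atTop (x := 0)
    filter_upwards [Filter.eventually_ge_atTop 1] with k hk
    have : (0 : ℝ) ≤ Real.log k := Real.log_nonneg (by exact_mod_cast hk)
    positivity
  refine le_of_forall_pos_le_add fun ε hε => ?_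
  set M : ℝ := (Real.log ((v : ℝ) ^ t) / L + 1) / ε with hMdef
  have htend : Filter.Tendsto (fun k : ℕ => Real.log k) Filter.atTop Filter.atTop :=
    Real.tendsto_log_atTop.comp tendsto_natCast_atTop_atTop
  apply Filter.limsup_le_of_le hcob
  filter_upwards [htend.eventually_ge_atTop (M ⊔ 1), Filter.eventually_ge_atTop (t ⊔ 2)]
    with k hk1 hk2
  have hkt : t ≤ k := le_trans (le_max_left _ _) hk2
  have hk2' : 2 ≤ k := le_trans (le_max_right _ _) hk2
  have hlkM : M ≤ Real.log k := le_trans (le_max_left _ _) hk1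
  have hlk1 : (1 : ℝ) ≤ Real.log k := le_trans (le_max_right _ _) hk1
  have hlk0 : (0 : ℝ) < Real.log k := by linarith
  have hb := CAN_real_bound t v ht hv k hkt hk2'
  rw [div_le_iff₀ hlk0]
  have e1 : ((t : ℝ) * Real.log k + Real.log ((v:ℝ)^t)) / L + 1
      = ((t : ℝ) / L) * Real.log k + (Real.log ((v:ℝ)^t) / L + 1) := by ring
  have e2 : ε * M = Real.log ((v:ℝ)^t) / L + 1 := by
    rw [hMdef]; field_simp
  have e3 : ε * M ≤ ε * Real.log k := mul_le_mul_of_nonneg_left hlkM hε.le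
  have e4 : ((t : ℝ) / L + ε) * Real.log k = ((t : ℝ) / L) * Real.log k + ε * Real.log k := by
    ring
  rw [← hLdef] at hb
  linarith
end

section
/- (Discrete SLJ lower bound) Let t, k, v be integers with k ≥ t ≥ 2, v ≥ 2, and set y = 1 − 1/v^t. Define a sequence r by r(0) = C(k,t)·v^t and, for i ≥ 1, r(i) = ⌊y·r(i−1)⌋ if i = 1 or v^t does not divide r(i−1), and r(i) = y·r(i−1) − 1 if i > 1 and v^t divides r(i−1). If n is an index with r(n) = 0 and r(i) > 0 for all i < n, then n > log(C(k,t) + 1) / log(v^t/(v^t − 1)). -/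
/-- The discrete Stein-Lovász-Johnson sequence: `r 0 = C(k,t) v^t`, and `r (i+1)`
is `⌊y ⬝ r i⌋` when `i + 1 = 1` or `v^t` does not divide `r i`, and `y ⬝ r i - 1`
(which equals `⌊y ⬝ r i⌋ - 1` since `y ⬝ r i` is then an integer) otherwise,
where `y = 1 - 1/v^t`. -/
def rSeq (t v k : ℕ) : ℕ → ℤ
  | 0 => (Nat.choose k t : ℤ) * (v : ℤ) ^ t
  | (i + 1) =>
    if i + 1 = 1 ∨ ¬ ((v : ℤ) ^ t ∣ rSeq t v k i) then
      ⌊(1 - 1 / (v : ℚ) ^ t) * (rSeq t v k i : ℚ)⌋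
    else ⌊(1 - 1 / (v : ℚ) ^ t) * (rSeq t v k i : ℚ)⌋ - 1

lemma rSeq_step (t v k : ℕ) (hv : 1 ≤ v) (i : ℕ) :
    (1 - 1 / (v : ℚ) ^ t) * (rSeq t v k i : ℚ) - 1 ≤ (rSeq t v k (i + 1) : ℚ) := by
  have hv0 : ((v : ℚ)) ≠ 0 := by positivity
  have hV : ((v : ℚ) ^ t) ≠ 0 := by positivity
  rw [rSeq]
  split_ifs with h
  · have := Int.sub_one_lt_floor ((1 - 1 / (v : ℚ) ^ t) * (rSeq t v k i : ℚ))
    push_cast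
    linarith
  · push_neg at h
    obtain ⟨c, hc⟩ := h.2
    rw [hc]
    have hx : (1 - 1 / (v : ℚ) ^ t) * (((v : ℤ) ^ t * c : ℤ) : ℚ)
        = (((v : ℤ) ^ t * c - c : ℤ) : ℚ) := by
      push_cast
      field_simp
    rw [hx, Int.floor_intCast]
    push_cast
    linarith

lemma rSeq_one (t v k : ℕ) (hv : 1 ≤ v) :
    rSeq t v k 1 = (Nat.choose k t : ℤ) * ((v : ℤ) ^ t - 1) := by
  have hV : ((v : ℚ) ^ t) ≠ 0 := by positivity
  rw [rSeq, if_pos (Or.inl rfl)]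
  show ⌊(1 - 1 / (v : ℚ) ^ t) * ((rSeq t v k 0 : ℤ) : ℚ)⌋ = _
  rw [rSeq]
  have hx : (1 - 1 / (v : ℚ) ^ t) * (((Nat.choose k t : ℤ) * (v : ℤ) ^ t : ℤ) : ℚ)
      = (((Nat.choose k t : ℤ) * ((v : ℤ) ^ t - 1) : ℤ) : ℚ) := by
    push_cast
    field_simp
  rw [hx, Int.floor_intCast]

lemma rSeq_lower (t v k : ℕ) (hv : 1 ≤ v) (i : ℕ) :
    (1 - 1 / (v : ℚ) ^ t) ^ i * ((rSeq t v k 1 : ℚ) + (v : ℚ) ^ t)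
      ≤ (rSeq t v k (i + 1) : ℚ) + (v : ℚ) ^ t := by
  have hV : ((v : ℚ) ^ t) ≠ 0 := by positivity
  have h1 : (1 : ℚ) ≤ (v : ℚ) := by exact_mod_cast hv
  have h1V : (1 : ℚ) ≤ (v : ℚ) ^ t := one_le_pow₀ h1
  have hy0 : (0 : ℚ) ≤ 1 - 1 / (v : ℚ) ^ t := by
    rw [sub_nonneg]
    exact div_le_one_of_le₀ h1V (by linarith)
  induction i with
  | zero => simp
  | succ i ih =>
    have hstep := rSeq_step t v k hv (i + 1)
    have h2 := mul_le_mul_of_nonneg_left ih hy0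
    have hV1 : (1 - 1 / (v : ℚ) ^ t) * (v : ℚ) ^ t = (v : ℚ) ^ t - 1 := by
      field_simp
    have key : (1 - 1 / (v : ℚ) ^ t) ^ (i + 1) * ((rSeq t v k 1 : ℚ) + (v : ℚ) ^ t)
        = (1 - 1 / (v : ℚ) ^ t) * ((1 - 1 / (v : ℚ) ^ t) ^ i * ((rSeq t v k 1 : ℚ) + (v : ℚ) ^ t)) := by
      ring
    have h3 : (1 - 1 / (v : ℚ) ^ t) * ((rSeq t v k (i + 1) : ℚ) + (v : ℚ) ^ t)
        = (1 - 1 / (v : ℚ) ^ t) * (rSeq t v k (i + 1) : ℚ) + ((v : ℚ) ^ t - 1) := by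
      rw [mul_add, hV1]
    rw [key]
    linarith

theorem discrete_slj_lower (t k v n : ℕ) (ht : 2 ≤ t) (hk : t ≤ k) (hv : 2 ≤ v)
    (hn : rSeq t v k n = 0) (hpos : ∀ i < n, 0 < rSeq t v k i) :
    Real.log ((Nat.choose k t : ℝ) + 1) /
        Real.log ((v : ℝ) ^ t / ((v : ℝ) ^ t - 1)) < (n : ℝ) := by
  have hv1 : 1 ≤ v := by omega
  have hchoose : 0 < Nat.choose k t := Nat.choose_pos hk
  -- n ≥ 1
  obtain _ | m := n
  · rw [rSeq] at hn
    have h1 : (Nat.choose k t : ℤ) ≠ 0 := by exact_mod_cast hchoose.ne'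
    have h2 : ((v : ℤ) ^ t) ≠ 0 := by positivity
    exact absurd hn (mul_ne_zero h1 h2)
  -- rational inequality
  set V : ℚ := (v : ℚ) ^ t with hVdef
  set C : ℚ := (Nat.choose k t : ℚ) with hCdef
  have hv2 : (2 : ℚ) ≤ (v : ℚ) := by exact_mod_cast hv
  have hV1 : (1 : ℚ) < V := by
    have : (2 : ℚ) ≤ V := by
      calc (2 : ℚ) ≤ (v : ℚ) := hv2
      _ ≤ (v : ℚ) ^ t := le_self_pow₀ (by linarith) (by omega)
    linarith
  have hVpos : (0 : ℚ) < V := by linarith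
  have hC1 : (1 : ℚ) ≤ C := Nat.one_le_cast.mpr hchoose
  have hypos : (0 : ℚ) < 1 - 1 / V := by
    rw [sub_pos, div_lt_one hVpos]
    exact hV1
  have hlow := rSeq_lower t v k hv1 m
  rw [rSeq_one t v k hv1, hn] at hlow
  push_cast at hlow
  -- hlow : (1 - 1/V)^m * (C * (V - 1) + V) ≤ 0 + V
  have hyV : (1 - 1 / V) * V = V - 1 := by field_simp
  have hpm : (0 : ℚ) < (1 - 1 / V) ^ m := pow_pos hypos m
  have e : (C + 1) * (1 - 1 / V) ^ (m + 1) * V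
      = (1 - 1 / V) ^ m * (C * (V - 1) + V) - (1 - 1 / V) ^ m := by
    calc (C + 1) * (1 - 1 / V) ^ (m + 1) * V
        = (C + 1) * (1 - 1 / V) ^ m * ((1 - 1 / V) * V) := by ring
      _ = (C + 1) * (1 - 1 / V) ^ m * (V - 1) := by rw [hyV]
      _ = (1 - 1 / V) ^ m * (C * (V - 1) + V) - (1 - 1 / V) ^ m := by ring
  have hq : (C + 1) * (1 - 1 / V) ^ (m + 1) * V < 1 * V := by
    rw [one_mul]
    linarith
  have hq2 : (C + 1) * (1 - 1 / V) ^ (m + 1) < 1 := lt_of_mul_lt_mul_right hq hVpos.le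
  -- move to ℝ
  have hq2' : ((Nat.choose k t : ℚ) + 1) * (1 - 1 / (v : ℚ) ^ t) ^ (m + 1) < 1 := hq2
  have hR : ((Nat.choose k t : ℝ) + 1) * (1 - 1 / (v : ℝ) ^ t) ^ (m + 1) < 1 := by
    have h := (Rat.cast_lt (K := ℝ)).mpr hq2'
    push_cast at h
    convert h using 2 <;> norm_num
  have hV1' : (1 : ℚ) < (v : ℚ) ^ t := hV1
  have hVR1 : (1 : ℝ) < (v : ℝ) ^ t := by exact_mod_cast hV1'
  have hVRpos : (0 : ℝ) < (v : ℝ) ^ t := by linarith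
  have hB1 : (1 : ℝ) < (v : ℝ) ^ t / ((v : ℝ) ^ t - 1) :=
    (one_lt_div (by linarith)).mpr (by linarith)
  have hBpos : (0 : ℝ) < (v : ℝ) ^ t / ((v : ℝ) ^ t - 1) := by linarith
  have hlogB : (0 : ℝ) < Real.log ((v : ℝ) ^ t / ((v : ℝ) ^ t - 1)) := Real.log_pos hB1
  rw [div_lt_iff₀ hlogB]
  have hCpos : (0 : ℝ) < (Nat.choose k t : ℝ) + 1 := by positivity
  have hyB : (1 - 1 / (v : ℝ) ^ t) * ((v : ℝ) ^ t / ((v : ℝ) ^ t - 1)) = 1 := by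
    have h : (v : ℝ) ^ t - 1 ≠ 0 := by linarith
    field_simp
  have e2 : (((Nat.choose k t : ℝ) + 1) * (1 - 1 / (v : ℝ) ^ t) ^ (m + 1))
      * ((v : ℝ) ^ t / ((v : ℝ) ^ t - 1)) ^ (m + 1) = (Nat.choose k t : ℝ) + 1 := by
    rw [mul_assoc, ← mul_pow, hyB, one_pow, mul_one]
  have hfin : (Nat.choose k t : ℝ) + 1 < ((v : ℝ) ^ t / ((v : ℝ) ^ t - 1)) ^ (m + 1) := by
    calc (Nat.choose k t : ℝ) + 1
        = (((Nat.choose k t : ℝ) + 1) * (1 - 1 / (v : ℝ) ^ t) ^ (m + 1))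
            * ((v : ℝ) ^ t / ((v : ℝ) ^ t - 1)) ^ (m + 1) := e2.symm
      _ < 1 * ((v : ℝ) ^ t / ((v : ℝ) ^ t - 1)) ^ (m + 1) :=
          mul_lt_mul_of_pos_right hR (pow_pos hBpos _)
      _ = _ := one_mul _
  calc Real.log ((Nat.choose k t : ℝ) + 1)
      < Real.log (((v : ℝ) ^ t / ((v : ℝ) ^ t - 1)) ^ (m + 1)) := Real.log_lt_log hCpos hfin
    _ = (m + 1 : ℕ) * Real.log ((v : ℝ) ^ t / ((v : ℝ) ^ t - 1)) := Real.log_pow _ _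
    _ = (↑(m + 1) : ℝ) * Real.log ((v : ℝ) ^ t / ((v : ℝ) ^ t - 1)) := by push_cast; ring
end

section
/- (Finite Lovász local lemma bound) Let t, k, v, N be integers with k ≥ 2t, t ≥ 2, v ≥ 2 and N ≥ 1. If e·(1 − 1/v^t)^N·v^t·t·C(k,t−1) ≤ 1, then a covering array CA(N;t,k,v) exists; in particular CAN(t,k,v) ≤ N. (Here e is Euler's number.) -/
open Finset

variable {Ω : Type*} [Fintype Ω] [DecidableEq Ω] {ι : Type*} [Fintype ι] [DecidableEq ι]

/-- Set of points avoiding all events indexed by `S`. -/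
def CBad (A : ι → Finset Ω) (S : Finset ι) : Finset Ω :=
  univ.filter (fun ω => ∀ j ∈ S, ω ∉ A j)

lemma CBad_insert (A : ι → Finset Ω) (S : Finset ι) (j : ι) :
    CBad A (insert j S) = CBad A S \ A j := by
  ext ω
  simp only [CBad, mem_filter, mem_univ, true_and, mem_sdiff, Finset.mem_insert]
  constructor
  · intro h
    exact ⟨fun l hl => h l (Or.inr hl), h j (Or.inl rfl)⟩
  · rintro ⟨h1, h2⟩ l (rfl | hl)
    · exact h2
    · exact h1 l hl

lemma CBad_mono (A : ι → Finset Ω) {S T : Finset ι} (h : S ⊆ T) :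
    CBad A T ⊆ CBad A S := by
  intro ω hω
  simp only [CBad, mem_filter] at *
  exact ⟨hω.1, fun j hj => hω.2 j (h hj)⟩

lemma CBad_empty (A : ι → Finset Ω) : CBad A (∅ : Finset ι) = univ := by
  simp [CBad]

/-- `exp 1 * (1 - 1/D)^(D-1) ≥ 1` for `D ≥ 1`. -/
lemma exp_aux (D : ℕ) (hD : 1 ≤ D) : 1 ≤ Real.exp 1 * (1 - 1/(D:ℝ))^(D-1) := by
  obtain ⟨n, rfl⟩ : ∃ n, D = n + 1 := ⟨D - 1, by omega⟩
  rcases Nat.eq_zero_or_pos n with hn | hn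
  · subst hn
    have h := Real.add_one_le_exp (1:ℝ)
    push_cast
    norm_num
    try linarith
  · have hn0 : (0:ℝ) < n := by exact_mod_cast hn
    have h1 : (1:ℝ) - 1/((n+1:ℕ):ℝ) = n / (n+1) := by
      push_cast; field_simp; ring
    have hb : (1:ℝ) + 1/n ≤ Real.exp (1/n) := by
      have := Real.add_one_le_exp (1/(n:ℝ)); linarith
    have hb2 : ((n+1:ℝ)/n)^n ≤ Real.exp 1 := by
      have h3 : ((n+1:ℝ)/n) = 1 + 1/n := by field_simp
      calc ((n+1:ℝ)/n)^n ≤ (Real.exp (1/n))^n := by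
            apply pow_le_pow_left₀ (by positivity)
            rw [h3]; exact hb
        _ = Real.exp 1 := by
            rw [← Real.exp_nat_mul]
            congr 1; field_simp
    have hpos : (0:ℝ) < ((n+1:ℝ)/n)^n := by positivity
    have hinv : ((n:ℝ)/(n+1))^n = (((n+1:ℝ)/n)^n)⁻¹ := by
      rw [← inv_pow]; congr 1; rw [inv_div]
    have hD1 : (n+1) - 1 = n := by omega
    rw [hD1, h1, hinv, ← div_le_iff₀ (by positivity), one_div, inv_inv] at *
    exact hb2

theorem lll_general (A : ι → Finset Ω) (Γ : ι → Finset ι) (p : ℝ) (D : ℕ)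
    [Nonempty Ω]
    (hp0 : 0 ≤ p)
    (hp : ∀ i, ((A i).card : ℝ) ≤ p * Fintype.card Ω)
    (hself : ∀ i, i ∈ Γ i)
    (hΓ : ∀ i, (Γ i).card ≤ D)
    (hD : 2 ≤ D)
    (hind : ∀ i (S : Finset ι), (∀ j ∈ S, j ∉ Γ i) →
      (((A i) ∩ CBad A S).card : ℝ) * Fintype.card Ω = (A i).card * (CBad A S).card)
    (hcond : Real.exp 1 * p * D ≤ 1) :
    ∃ ω : Ω, ∀ i, ω ∉ A i := by
  have hΩpos : (0:ℝ) < Fintype.card Ω := by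
    exact_mod_cast Fintype.card_pos
  have hDpos : (0:ℝ) < D := by exact_mod_cast (by omega : 0 < D)
  set x : ℝ := 1/(D:ℝ) with hxdef
  have hx0 : 0 < x := by positivity
  have hx1 : x ≤ 1/2 := by
    rw [hxdef, div_le_div_iff₀ hDpos (by norm_num)]
    have : (2:ℝ) ≤ D := by exact_mod_cast hD
    linarith
  have h1x : 0 < 1 - x := by linarith
  have h1x1 : 1 - x ≤ 1 := by linarith
  have hexp1 : (0:ℝ) < Real.exp 1 := Real.exp_pos 1
  -- key bound : p ≤ x * (1-x)^(D-1)
  have hpx : p ≤ x * (1-x)^(D-1) := by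
    have he := exp_aux D (by omega)
    rw [← hxdef] at he
    have hpD : p ≤ 1/(Real.exp 1 * D) := by
      rw [le_div_iff₀ (by positivity)]
      calc p * (Real.exp 1 * D) = Real.exp 1 * p * D := by ring
        _ ≤ 1 := hcond
    have h2 : 1/(Real.exp 1 * D) ≤ x * (1-x)^(D-1) := by
      rw [div_le_iff₀ (by positivity)]
      calc (1:ℝ) ≤ Real.exp 1 * (1-x)^(D-1) := he
        _ = x * (1-x)^(D-1) * (Real.exp 1 * D) := by
            rw [hxdef]; field_simp
    linarith
  -- the normalized measure
  set ν : Finset Ω → ℝ := fun B => (B.card : ℝ) / Fintype.card Ω with hν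
  have hν0 : ∀ B, 0 ≤ ν B := fun B => by positivity
  have hνmono : ∀ {B C : Finset Ω}, B ⊆ C → ν B ≤ ν C := by
    intro B C h
    have h2 : ((B.card:ℝ)) ≤ C.card := by exact_mod_cast Finset.card_le_card h
    rw [hν]
    show (B.card:ℝ)/Fintype.card Ω ≤ (C.card:ℝ)/Fintype.card Ω
    gcongr
  -- splitting identity
  have hνsplit : ∀ (U : Finset ι) (j : ι), j ∉ U →
      ν (CBad A (insert j U)) = ν (CBad A U) - ν (A j ∩ CBad A U) := by
    intro U j hj
    rw [CBad_insert]
    have hc := Finset.card_sdiff_add_card_inter (CBad A U) (A j)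
    have : ((CBad A U \ A j).card : ℝ) = (CBad A U).card - (A j ∩ CBad A U).card := by
      rw [Finset.inter_comm]
      have := congrArg (fun n : ℕ => (n : ℝ)) hc
      push_cast at this
      linarith
    rw [hν]
    simp only
    rw [this]
    ring
  -- main induction
  have key : ∀ S : Finset ι, ∀ i, i ∉ S →
      ν (A i ∩ CBad A S) ≤ x * ν (CBad A S) := by
    intro S
    induction S using Finset.strongInduction with
    | _ S IH =>
      intro i hiS
      set S1 : Finset ι := S ∩ Γ i with hS1
      set S2 : Finset ι := S \ Γ i with hS2
      have hS12 : S2 ∪ S1 = S := Finset.sdiff_union_inter S (Γ i)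
      -- peeling
      have peel : ∀ T : Finset ι, T ⊆ S1 →
          (1 - x)^T.card * ν (CBad A S2) ≤ ν (CBad A (S2 ∪ T)) := by
        intro T
        induction T using Finset.induction_on with
        | empty => intro _; simp
        | @insert j T hj IHT =>
          intro hsub
          have hjS1 : j ∈ S1 := hsub (Finset.mem_insert_self j T)
          have hTS1 : T ⊆ S1 := fun l hl => hsub (Finset.mem_insert_of_mem hl)
          have hjS2 : j ∉ S2 := by
            rw [hS2]
            simp only [Finset.mem_sdiff, not_and, not_not]
            intro _
            exact (Finset.mem_inter.mp hjS1).2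
          have hjU : j ∉ S2 ∪ T := by
            simp only [Finset.mem_union]
            push_neg
            exact ⟨hjS2, hj⟩
          have hUsub : S2 ∪ T ⊂ S := by
            have hsub2 : S2 ∪ T ⊆ S := by
              rw [← hS12]; exact Finset.union_subset_union_right hTS1
            exact (Finset.ssubset_iff_of_subset hsub2).mpr
              ⟨j, (Finset.mem_inter.mp hjS1).1, hjU⟩
          have hrec := IH (S2 ∪ T) hUsub j hjU
          have heq : S2 ∪ insert j T = insert j (S2 ∪ T) :=
            Finset.union_insert j S2 T
          rw [heq, hνsplit (S2 ∪ T) j hjU]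
          have hIHT := IHT hTS1
          have hcard : (insert j T).card = T.card + 1 := Finset.card_insert_of_notMem hj
          rw [hcard]
          have hν2 : 0 ≤ ν (CBad A S2) := hν0 _
          calc (1-x)^(T.card+1) * ν (CBad A S2)
              = (1-x) * ((1-x)^T.card * ν (CBad A S2)) := by ring
            _ ≤ (1-x) * ν (CBad A (S2 ∪ T)) := by
                apply mul_le_mul_of_nonneg_left hIHT h1x.le
            _ = ν (CBad A (S2 ∪ T)) - x * ν (CBad A (S2 ∪ T)) := by ring
            _ ≤ ν (CBad A (S2 ∪ T)) - ν (A j ∩ CBad A (S2 ∪ T)) := by linarith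
      have hpeel := peel S1 (le_refl S1)
      rw [hS12] at hpeel
      -- independence part
      have hS2Γ : ∀ j ∈ S2, j ∉ Γ i := by
        intro j hj
        exact (Finset.mem_sdiff.mp hj).2
      have hindep := hind i S2 hS2Γ
      have hνind : ν (A i ∩ CBad A S2) = ((A i).card : ℝ)/Fintype.card Ω * ν (CBad A S2) := by
        rw [hν]
        simp only
        rw [div_mul_div_comm, ← hindep]
        field_simp
      have hcards1 : S1.card ≤ D - 1 := by
        have hsub : S1 ⊆ (Γ i).erase i := by
          intro l hl
          rw [Finset.mem_erase]
          refine ⟨?_, (Finset.mem_inter.mp hl).2⟩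
          rintro rfl
          exact hiS (Finset.mem_inter.mp hl).1
        calc S1.card ≤ ((Γ i).erase i).card := Finset.card_le_card hsub
          _ = (Γ i).card - 1 := Finset.card_erase_of_mem (hself i)
          _ ≤ D - 1 := by have := hΓ i; omega
      have hmono1 : ν (A i ∩ CBad A S) ≤ ν (A i ∩ CBad A S2) := by
        apply hνmono
        apply Finset.inter_subset_inter_left
        apply CBad_mono
        exact Finset.sdiff_subset
      have hpA : ((A i).card : ℝ)/Fintype.card Ω ≤ p := by
        rw [div_le_iff₀ hΩpos]
        exact hp i
      calc ν (A i ∩ CBad A S) ≤ ν (A i ∩ CBad A S2) := hmono1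
        _ = ((A i).card : ℝ)/Fintype.card Ω * ν (CBad A S2) := hνind
        _ ≤ p * ν (CBad A S2) := by
            apply mul_le_mul_of_nonneg_right hpA (hν0 _)
        _ ≤ x * (1-x)^(D-1) * ν (CBad A S2) := by
            apply mul_le_mul_of_nonneg_right hpx (hν0 _)
        _ ≤ x * (1-x)^S1.card * ν (CBad A S2) := by
            apply mul_le_mul_of_nonneg_right ?_ (hν0 _)
            apply mul_le_mul_of_nonneg_left ?_ hx0.le
            exact pow_le_pow_of_le_one h1x.le h1x1 hcards1
        _ = x * ((1-x)^S1.card * ν (CBad A S2)) := by ring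
        _ ≤ x * ν (CBad A S) := by
            apply mul_le_mul_of_nonneg_left hpeel hx0.le
  -- final peeling over all of ι
  have final : ∀ S : Finset ι, (1 - x)^S.card ≤ ν (CBad A S) := by
    intro S
    induction S using Finset.induction_on with
    | empty =>
        rw [CBad_empty, hν]
        simp only [Finset.card_empty, pow_zero, Finset.card_univ]
        rw [div_self (ne_of_gt hΩpos)]
    | @insert j S hj2 IHS =>
        rw [hνsplit S j hj2, Finset.card_insert_of_notMem hj2]
        have hk := key S j hj2
        calc (1-x)^(S.card+1) = (1-x) * (1-x)^S.card := by ring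
          _ ≤ (1-x) * ν (CBad A S) := by
              apply mul_le_mul_of_nonneg_left IHS h1x.le
          _ = ν (CBad A S) - x * ν (CBad A S) := by ring
          _ ≤ ν (CBad A S) - ν (A j ∩ CBad A S) := by linarith
  have hfin := final Finset.univ
  have hpos : 0 < ν (CBad A Finset.univ) := by
    calc (0:ℝ) < (1-x)^(Finset.univ : Finset ι).card := by positivity
      _ ≤ _ := hfin
  have hne : (CBad A Finset.univ).Nonempty := by
    rw [← Finset.card_pos]
    by_contra hc
    push_neg at hc
    interval_cases h : (CBad A Finset.univ).card
    · rw [hν] at hpos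
      simp [h] at hpos
  obtain ⟨ω, hω⟩ := hne
  refine ⟨ω, fun i => ?_⟩
  have := (Finset.mem_filter.mp hω).2
  exact this i (Finset.mem_univ i)

section Indep

variable {N k v : ℕ}

/-- Mix two arrays: take columns from `T` from the first, rest from the second. -/
def mixA (T : Finset (Fin k)) (ω ρ : Fin N → Fin k → Fin v) : Fin N → Fin k → Fin v :=
  fun r j => if j ∈ T then ω r j else ρ r j

lemma mixA_left (T : Finset (Fin k)) (ω ρ : Fin N → Fin k → Fin v) :
    ∀ r j, j ∈ T → mixA T ω ρ r j = ω r j := by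
  intro r j hj; simp [mixA, hj]

lemma mixA_right (T : Finset (Fin k)) (ω ρ : Fin N → Fin k → Fin v) :
    ∀ r j, j ∉ T → mixA T ω ρ r j = ρ r j := by
  intro r j hj; simp [mixA, hj]

lemma mixA_mix (T : Finset (Fin k)) (ω ρ : Fin N → Fin k → Fin v) :
    mixA T (mixA T ω ρ) (mixA T ρ ω) = ω := by
  funext r j
  by_cases hj : j ∈ T <;> simp [mixA, hj]

lemma indep_count (T : Finset (Fin k))
    (B1 B2 : Finset (Fin N → Fin k → Fin v))
    (h1 : ∀ ω ω' : Fin N → Fin k → Fin v,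
      (∀ r j, j ∈ T → ω r j = ω' r j) → (ω ∈ B1 ↔ ω' ∈ B1))
    (h2 : ∀ ω ω' : Fin N → Fin k → Fin v,
      (∀ r j, j ∉ T → ω r j = ω' r j) → (ω ∈ B2 ↔ ω' ∈ B2)) :
    (B1 ∩ B2).card * Fintype.card (Fin N → Fin k → Fin v) = B1.card * B2.card := by
  classical
  rw [← Finset.card_univ, ← Finset.card_product, ← Finset.card_product]
  apply Finset.card_bij'
    (i := fun (q : (Fin N → Fin k → Fin v) × (Fin N → Fin k → Fin v)) _ =>
      (mixA T q.1 q.2, mixA T q.2 q.1))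
    (j := fun (q : (Fin N → Fin k → Fin v) × (Fin N → Fin k → Fin v)) _ =>
      (mixA T q.1 q.2, mixA T q.2 q.1))
  · rintro ⟨ω, ρ⟩ hq
    rw [Finset.mem_product] at hq ⊢
    obtain ⟨hω, -⟩ := hq
    rw [Finset.mem_inter] at hω
    constructor
    · exact (h1 ω (mixA T ω ρ) (fun r j hj => (mixA_left T ω ρ r j hj).symm)).mp hω.1
    · exact (h2 ω (mixA T ρ ω) (fun r j hj => (mixA_right T ρ ω r j hj).symm)).mp hω.2
  · rintro ⟨α, β⟩ hq
    rw [Finset.mem_product] at hq ⊢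
    obtain ⟨hα, hβ⟩ := hq
    refine ⟨Finset.mem_inter.mpr ⟨?_, ?_⟩, Finset.mem_univ _⟩
    · exact (h1 α (mixA T α β) (fun r j hj => (mixA_left T α β r j hj).symm)).mp hα
    · exact (h2 β (mixA T α β) (fun r j hj => (mixA_right T α β r j hj).symm)).mp hβ
  · rintro ⟨ω, ρ⟩ _
    simp only [mixA_mix]
  · rintro ⟨α, β⟩ _
    simp only [mixA_mix]

end Indep

section Counting

open Classical in
/-- Rows forced to agree with `a` on the (injective) columns `c` correspond to
free choices on the complement of the range of `c`. -/
noncomputable def cylEquiv {k v t : ℕ} (c : Fin t → Fin k) (hc : Function.Injective c)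
    (a : Fin t → Fin v) :
    {g : Fin k → Fin v // ∀ i, g (c i) = a i} ≃ ({j : Fin k // j ∉ Set.range c} → Fin v) where
  toFun g j := g.1 j.1
  invFun g := ⟨fun j =>
      if h : ∃ i, c i = j then a h.choose else g ⟨j, by simpa [Set.mem_range] using h⟩, by
    intro i
    have h : ∃ i', c i' = c i := ⟨i, rfl⟩
    simp only [dif_pos h]
    have := h.choose_spec
    have h2 : h.choose = i := hc this
    rw [h2]⟩
  left_inv := by
    intro g
    apply Subtype.ext
    funext j
    simp only
    by_cases h : ∃ i, c i = j
    · rw [dif_pos h]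
      have hs := h.choose_spec
      have h3 := g.2 h.choose
      rw [hs] at h3
      exact h3.symm
    · rw [dif_neg h]
  right_inv := by
    intro g
    funext j
    simp only
    have h : ¬ ∃ i, c i = j.1 := by
      have := j.2
      simpa [Set.mem_range] using this
    rw [dif_neg h]

lemma card_forced {k v t : ℕ} (c : Fin t → Fin k) (hc : Function.Injective c)
    (a : Fin t → Fin v) (htk : t ≤ k) :
    Fintype.card {g : Fin k → Fin v // ∀ i, g (c i) = a i} = v ^ (k - t) := by
  classical
  rw [Fintype.card_congr (cylEquiv c hc a), Fintype.card_fun]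
  have h1 : Fintype.card {j : Fin k // j ∉ Set.range c} = k - t := by
    rw [Fintype.card_subtype_compl]
    have h2 : Fintype.card {j : Fin k // j ∈ Set.range c} = t := by
      have h4 := Set.card_range_of_injective hc
      rw [Fintype.card_fin] at h4
      convert h4 using 2
    rw [h2, Fintype.card_fin]
  rw [h1, Fintype.card_fin]

lemma card_badrow {k v t : ℕ} (c : Fin t → Fin k) (hc : Function.Injective c)
    (a : Fin t → Fin v) (htk : t ≤ k) :
    Fintype.card {g : Fin k → Fin v // ∃ i, g (c i) ≠ a i} = v^k - v^(k-t) := by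
  classical
  have h1 : Fintype.card {g : Fin k → Fin v // ¬ ∀ i, g (c i) = a i} = v^k - v^(k-t) := by
    rw [Fintype.card_subtype_compl, card_forced c hc a htk, Fintype.card_fun,
      Fintype.card_fin, Fintype.card_fin]
  rw [← h1]
  apply Fintype.card_congr (Equiv.subtypeEquivRight _)
  intro g
  push_neg
  rfl

lemma card_bad_event {N k v t : ℕ} (c : Fin t → Fin k) (hc : Function.Injective c)
    (a : Fin t → Fin v) (htk : t ≤ k) :
    (Finset.univ.filter
      (fun ω : Fin N → Fin k → Fin v => ∀ r, ∃ i, ω r (c i) ≠ a i)).card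
      = (v^k - v^(k-t))^N := by
  classical
  rw [← Fintype.card_subtype]
  rw [Fintype.card_congr
    (Equiv.subtypePiEquivPi (p := fun (_ : Fin N) (g : Fin k → Fin v) => ∃ i, g (c i) ≠ a i))]
  rw [Fintype.card_pi]
  rw [Finset.prod_congr rfl (fun r _ => card_badrow c hc a htk)]
  rw [Finset.prod_const, Finset.card_univ, Fintype.card_fin]

end Counting

section SMCount

variable {t k : ℕ}

instance decStrictMono : DecidablePred (StrictMono : (Fin t → Fin k) → Prop) := fun c =>
  decidable_of_iff (∀ i j : Fin t, i < j → c i < c j)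
    ⟨fun h _ _ hij => h _ _ hij, fun h i j hij => h hij⟩

lemma sm_eq_of_image_eq {c1 c2 : Fin t → Fin k} (h1 : StrictMono c1) (h2 : StrictMono c2)
    (h : Finset.image c1 Finset.univ = Finset.image c2 Finset.univ) : c1 = c2 := by
  classical
  have hcard : (Finset.image c1 Finset.univ).card = t := by
    rw [Finset.card_image_of_injective _ h1.injective, Finset.card_univ, Fintype.card_fin]
  have e1 := Finset.orderEmbOfFin_unique hcard
    (f := c1) (fun x => Finset.mem_image_of_mem c1 (Finset.mem_univ x)) h1
  have e2 := Finset.orderEmbOfFin_unique hcard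
    (f := c2) (fun x => by rw [h]; exact Finset.mem_image_of_mem c2 (Finset.mem_univ x)) h2
  rw [e1, e2]

lemma card_sm_col (ht : 1 ≤ t) (j : Fin k) :
    (Finset.univ.filter
      (fun c : {c : Fin t → Fin k // StrictMono c} => ∃ i, c.1 i = j)).card
      ≤ k.choose (t-1) := by
  classical
  have hleft : (Finset.powersetCard (t-1) (Finset.univ : Finset (Fin k))).card
      = k.choose (t-1) := by
    rw [Finset.card_powersetCard, Finset.card_univ, Fintype.card_fin]
  rw [← hleft]
  apply Finset.card_le_card_of_injOn (fun c => (Finset.image c.1 Finset.univ).erase j)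
  · intro c hc
    simp only [Finset.coe_filter, Set.mem_setOf_eq] at hc
    obtain ⟨-, i, hi⟩ := hc
    simp only [Finset.mem_coe, Finset.mem_powersetCard]
    refine ⟨fun _ _ => Finset.mem_univ _, ?_⟩
    rw [Finset.card_erase_of_mem (hi ▸ Finset.mem_image_of_mem c.1 (Finset.mem_univ i)),
      Finset.card_image_of_injective _ c.2.injective, Finset.card_univ, Fintype.card_fin]
  · intro c1 hc1 c2 hc2 heq
    simp only [Finset.coe_filter, Set.mem_setOf_eq] at hc1 hc2
    obtain ⟨-, i1, hi1⟩ := hc1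
    obtain ⟨-, i2, hi2⟩ := hc2
    have hj1 : j ∈ Finset.image c1.1 Finset.univ :=
      hi1 ▸ Finset.mem_image_of_mem c1.1 (Finset.mem_univ i1)
    have hj2 : j ∈ Finset.image c2.1 Finset.univ :=
      hi2 ▸ Finset.mem_image_of_mem c2.1 (Finset.mem_univ i2)
    have himg : Finset.image c1.1 Finset.univ = Finset.image c2.1 Finset.univ := by
      simp only at heq
      rw [← Finset.insert_erase hj1, ← Finset.insert_erase hj2, heq]
    exact Subtype.ext (sm_eq_of_image_eq c1.2 c2.2 himg)

lemma card_sm_overlap (ht : 1 ≤ t) (c : Fin t → Fin k) :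
    (Finset.univ.filter
      (fun c' : {c' : Fin t → Fin k // StrictMono c'} => ∃ l l', c'.1 l' = c l)).card
      ≤ t * k.choose (t-1) := by
  classical
  have hsub : (Finset.univ.filter
      (fun c' : {c' : Fin t → Fin k // StrictMono c'} => ∃ l l', c'.1 l' = c l))
      ⊆ Finset.univ.biUnion (fun l : Fin t =>
        Finset.univ.filter (fun c' : {c' : Fin t → Fin k // StrictMono c'} =>
          ∃ l', c'.1 l' = c l)) := by
    intro c' hc'
    rw [Finset.mem_filter] at hc'
    obtain ⟨-, l, l', hl⟩ := hc'
    rw [Finset.mem_biUnion]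
    exact ⟨l, Finset.mem_univ l, Finset.mem_filter.mpr ⟨Finset.mem_univ _, l', hl⟩⟩
  calc _ ≤ _ := Finset.card_le_card hsub
    _ ≤ ∑ l : Fin t, (Finset.univ.filter
        (fun c' : {c' : Fin t → Fin k // StrictMono c'} => ∃ l', c'.1 l' = c l)).card :=
      Finset.card_biUnion_le
    _ ≤ ∑ _l : Fin t, k.choose (t-1) := by
      apply Finset.sum_le_sum
      intro l _
      exact card_sm_col ht (c l)
    _ = t * k.choose (t-1) := by
      rw [Finset.sum_const, Finset.card_univ, Fintype.card_fin, smul_eq_mul]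

end SMCount

lemma exists_ca (t k v N : ℕ) (ht : 2 ≤ t) (hk : 2 * t ≤ k) (hv : 2 ≤ v) (hN : 1 ≤ N)
    (h : Real.exp 1 * (1 - 1 / (v : ℝ) ^ t) ^ N * (v : ℝ) ^ t * (t : ℝ) *
        (Nat.choose k (t - 1) : ℝ) ≤ 1) :
    ∃ A : Fin N → Fin k → Fin v, IsCoveringArray N t k v A := by
  classical
  have htk : t ≤ k := by omega
  have hvpos : 0 < v := by omega
  have hv1 : (1:ℝ) ≤ (v:ℝ) := by exact_mod_cast (by omega : 1 ≤ v)
  have hvt : (0:ℝ) < (v:ℝ)^t := by positivity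
  have hvt1 : (1:ℝ) ≤ (v:ℝ)^t := one_le_pow₀ hv1
  have hΩne : Nonempty (Fin N → Fin k → Fin v) := ⟨fun _ _ => ⟨0, hvpos⟩⟩
  set ι := ({c : Fin t → Fin k // StrictMono c} × (Fin t → Fin v)) with hι
  set A : ι → Finset (Fin N → Fin k → Fin v) := fun i =>
    Finset.univ.filter (fun ω => ∀ r, ∃ l, ω r (i.1.1 l) ≠ i.2 l) with hA
  set Γ : ι → Finset ι := fun i =>
    (Finset.univ.filter (fun c' : {c : Fin t → Fin k // StrictMono c} =>
      ∃ l l', c'.1 l' = i.1.1 l)) ×ˢ Finset.univ with hΓdef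
  set D : ℕ := t * k.choose (t-1) * v^t with hDdef
  have hch : 0 < k.choose (t-1) := Nat.choose_pos (by omega)
  have hvt2 : 2 ≤ v^t := le_trans hv (Nat.le_self_pow (by omega) v)
  have hD2 : 2 ≤ D := by
    calc 2 ≤ v^t := hvt2
      _ = 1 * 1 * v^t := by ring
      _ ≤ t * k.choose (t-1) * v^t := by
          apply Nat.mul_le_mul_right
          apply Nat.mul_le_mul <;> omega
  set p : ℝ := (1 - 1/(v:ℝ)^t)^N with hpdef
  have hp0 : 0 ≤ p := by
    apply pow_nonneg
    have : 1/(v:ℝ)^t ≤ 1 := by rw [div_le_one hvt]; exact hvt1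
    linarith
  have hΩcard : (Fintype.card (Fin N → Fin k → Fin v) : ℝ) = ((v:ℝ)^k)^N := by
    rw [Fintype.card_fun, Fintype.card_fun, Fintype.card_fin, Fintype.card_fin,
      Fintype.card_fin]
    push_cast
    ring
  have hsub : v^(k-t) ≤ v^k := Nat.pow_le_pow_right hvpos (by omega)
  have hcastsub : (((v^k - v^(k-t) : ℕ)) : ℝ) = (v:ℝ)^k - (v:ℝ)^(k-t) := by
    rw [Nat.cast_sub hsub]
    push_cast
    ring
  have hfactor : (v:ℝ)^k - (v:ℝ)^(k-t) = (1 - 1/(v:ℝ)^t) * (v:ℝ)^k := by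
    rw [pow_sub₀ (v:ℝ) (by positivity) htk]
    field_simp
  have hpA : ∀ i : ι, ((A i).card : ℝ) ≤ p * Fintype.card (Fin N → Fin k → Fin v) := by
    intro i
    have hcount := card_bad_event (N := N) (v := v) i.1.1 i.1.2.injective i.2 htk
    rw [hA]
    simp only
    rw [hcount, hΩcard, hpdef, Nat.cast_pow, hcastsub, hfactor, ← mul_pow]
  have hself : ∀ i : ι, i ∈ Γ i := by
    intro i
    rw [hΓdef]
    simp only
    rw [Finset.mem_product]
    refine ⟨Finset.mem_filter.mpr ⟨Finset.mem_univ _, ⟨⟨0, by omega⟩, ⟨0, by omega⟩, rfl⟩⟩,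
      Finset.mem_univ _⟩
  have hΓcard : ∀ i : ι, (Γ i).card ≤ D := by
    intro i
    rw [hΓdef]
    simp only
    rw [Finset.card_product]
    have h1 := card_sm_overlap (by omega : 1 ≤ t) (k := k) i.1.1
    have h2 : (Finset.univ : Finset (Fin t → Fin v)).card = v^t := by
      rw [Finset.card_univ, Fintype.card_fun, Fintype.card_fin, Fintype.card_fin]
    rw [h2, hDdef]
    exact Nat.mul_le_mul_right _ h1
  have hind : ∀ (i : ι) (S : Finset ι), (∀ j ∈ S, j ∉ Γ i) →
      (((A i) ∩ CBad A S).card : ℝ) * Fintype.card (Fin N → Fin k → Fin v)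
        = (A i).card * (CBad A S).card := by
    intro i S hS
    have := indep_count (Finset.image i.1.1 Finset.univ) (A i) (CBad A S) ?_ ?_
    · exact_mod_cast this
    · -- A i determined by columns in range of i.1.1
      intro ω ω' hagree
      have hpt : ∀ r l, ω r (i.1.1 l) = ω' r (i.1.1 l) := fun r l =>
        hagree r _ (Finset.mem_image_of_mem i.1.1 (Finset.mem_univ l))
      rw [hA]
      simp only [Finset.mem_filter, Finset.mem_univ, true_and]
      constructor
      · intro hh r
        obtain ⟨l, hl⟩ := hh r
        exact ⟨l, by rw [← hpt r l]; exact hl⟩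
      · intro hh r
        obtain ⟨l, hl⟩ := hh r
        exact ⟨l, by rw [hpt r l]; exact hl⟩
    · -- CBad A S determined by columns outside range of i.1.1
      intro ω ω' hagree
      simp only [CBad, Finset.mem_filter, Finset.mem_univ, true_and]
      have hcols : ∀ j ∈ S, ∀ l', j.1.1 l' ∉ Finset.image i.1.1 Finset.univ := by
        intro j hj l' hmem
        apply hS j hj
        rw [hΓdef]
        simp only
        rw [Finset.mem_product]
        refine ⟨Finset.mem_filter.mpr ⟨Finset.mem_univ _, ?_⟩, Finset.mem_univ _⟩
        obtain ⟨l, -, hl⟩ := Finset.mem_image.mp hmem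
        exact ⟨l, l', hl.symm⟩
      have hAiff : ∀ j ∈ S, (ω ∈ A j ↔ ω' ∈ A j) := by
        intro j hj
        have hpt : ∀ r l', ω r (j.1.1 l') = ω' r (j.1.1 l') := fun r l' =>
          hagree r _ (hcols j hj l')
        rw [hA]
        simp only [Finset.mem_filter, Finset.mem_univ, true_and]
        constructor
        · intro hh r
          obtain ⟨l, hl⟩ := hh r
          exact ⟨l, by rw [← hpt r l]; exact hl⟩
        · intro hh r
          obtain ⟨l, hl⟩ := hh r
          exact ⟨l, by rw [hpt r l]; exact hl⟩
      constructor
      · intro hh j hj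
        rw [← hAiff j hj]; exact hh j hj
      · intro hh j hj
        rw [hAiff j hj]; exact hh j hj
  have hcond : Real.exp 1 * p * (D:ℝ) ≤ 1 := by
    have hre : Real.exp 1 * p * ((D:ℕ):ℝ)
        = Real.exp 1 * p * (v:ℝ)^t * (t:ℝ) * (k.choose (t-1) : ℝ) := by
      rw [hDdef]
      push_cast
      ring
    rw [hre, hpdef]
    exact h
  obtain ⟨ω, hω⟩ := lll_general A Γ p D hp0 hpA hself hΓcard hD2 hind hcond
  refine ⟨ω, ?_⟩
  intro c hcinj a
  -- sort the columns
  set s : Finset (Fin k) := Finset.image c Finset.univ with hs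
  have hscard : s.card = t := by
    rw [hs, Finset.card_image_of_injective _ hcinj, Finset.card_univ, Fintype.card_fin]
  set m : Fin t → Fin k := ⇑(s.orderEmbOfFin hscard) with hm
  have hmmono : StrictMono m := (s.orderEmbOfFin hscard).strictMono
  have hsurj : ∀ i : Fin t, ∃ l, m l = c i := by
    intro i
    have hmem : c i ∈ Set.range m := by
      rw [hm, Finset.range_orderEmbOfFin]
      exact_mod_cast Finset.mem_image_of_mem c (Finset.mem_univ i)
    exact hmem
  set σ : Fin t → Fin t := fun i => (hsurj i).choose with hσdef
  have hσ : ∀ i, m (σ i) = c i := fun i => (hsurj i).choose_spec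
  have hσinj : Function.Injective σ := by
    intro i1 i2 h12
    apply hcinj
    rw [← hσ i1, ← hσ i2, h12]
  set e : Fin t ≃ Fin t := Equiv.ofBijective σ (Finite.injective_iff_bijective.mp hσinj)
    with he
  have hnom := hω (⟨⟨m, hmmono⟩, fun l => a (e.symm l)⟩ : ι)
  rw [hA] at hnom
  simp only [Finset.mem_filter, Finset.mem_univ, true_and, not_forall] at hnom
  obtain ⟨r, hr⟩ := hnom
  push_neg at hr
  refine ⟨r, fun i => ?_⟩
  have h1 := hr (e i)
  have h2 : m (e i) = c i := hσ i
  rw [h2, Equiv.symm_apply_apply] at h1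
  exact h1

theorem lll_finite (t k v N : ℕ) (ht : 2 ≤ t) (hk : 2 * t ≤ k) (hv : 2 ≤ v)
    (hN : 1 ≤ N)
    (h : Real.exp 1 * (1 - 1 / (v : ℝ) ^ t) ^ N * (v : ℝ) ^ t * (t : ℝ) *
        (Nat.choose k (t - 1) : ℝ) ≤ 1) :
    (∃ A : Fin N → Fin k → Fin v, IsCoveringArray N t k v A) ∧ CAN t k v ≤ N := by
  have hex : ∃ A : Fin N → Fin k → Fin v, IsCoveringArray N t k v A :=
    exists_ca t k v N ht hk hv hN h
  exact ⟨hex, Nat.sInf_le hex⟩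
end

section
/- (Godbole–Skipper–Sunley bound) Let t, v be fixed integers with t ≥ 2 and v ≥ 2. Then d(t,v) = limsup_{k→∞} CAN(t,k,v)/log k ≤ (t − 1) / log(v^t/(v^t − 1)). -/
open Finset
open scoped Classical

lemma agree_card {t K v : ℕ} (htK : t ≤ K) (c : Fin t → Fin K)
    (hc : Function.Injective c) (a : Fin t → Fin v) :
    v ^ (K - t) ≤ Fintype.card {row : Fin K → Fin v // ∀ i, row (c i) = a i} := by
  classical
  have hr : Fintype.card {x : Fin K // ∃ y, c y = x} = t := by
    have : Fintype.card {x : Fin K // ∃ y, c y = x} = Fintype.card (Set.range c) := by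
      apply Fintype.card_congr; rfl
    rw [this]
    simp [Set.card_range_of_injective hc]
  have hcard : Fintype.card {j : Fin K // j ∉ Set.range c} = K - t := by
    rw [Fintype.card_subtype_compl]
    simp only [Fintype.card_fin]
    congr 1
    exact (Fintype.card_congr (Equiv.subtypeEquivRight (fun x => Set.mem_range))).trans hr
  have hfun : Fintype.card ({j : Fin K // j ∉ Set.range c} → Fin v) = v ^ (K - t) := by
    rw [Fintype.card_fun, hcard, Fintype.card_fin]
  rw [← hfun]
  have key : ∀ g : {j : Fin K // j ∉ Set.range c} → Fin v,
      ∀ i, (fun j => if hj : ∃ i, c i = j then a hj.choose else g ⟨j, fun h => hj h⟩) (c i) = a i := by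
    intro g i
    have hj : ∃ i', c i' = c i := ⟨i, rfl⟩
    simp only [dif_pos hj]
    congr 1
    exact hc hj.choose_spec
  apply Fintype.card_le_of_injective
    (fun g => ⟨fun j => if hj : ∃ i, c i = j then a hj.choose else g ⟨j, fun h => hj h⟩, key g⟩)
  intro g₁ g₂ h
  have h' := congrArg Subtype.val h
  funext j
  have := congrFun h' j.1
  rcases j with ⟨j, hj⟩
  have hj' : ¬ ∃ i, c i = j := hj
  simpa [dif_neg hj'] using this

lemma miss_card {N t K v : ℕ} (htK : t ≤ K) (c : Fin t → Fin K)
    (hc : Function.Injective c) (a : Fin t → Fin v) :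
    Fintype.card {A : Fin N → Fin K → Fin v // ¬ Covers A c a} ≤
      (v ^ K - v ^ (K - t)) ^ N := by
  classical
  have h1 : Fintype.card {A : Fin N → Fin K → Fin v // ¬ Covers A c a}
      = Fintype.card {A : Fin N → Fin K → Fin v // ∀ r, ¬ ∀ i, A r (c i) = a i} := by
    apply Fintype.card_congr
    apply Equiv.subtypeEquivRight
    intro A
    simp [Covers]
  rw [h1]
  have h2 : Fintype.card {A : Fin N → Fin K → Fin v // ∀ r, ¬ ∀ i, A r (c i) = a i}
      = (Fintype.card {row : Fin K → Fin v // ¬ ∀ i, row (c i) = a i}) ^ N := by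
    have e : {A : Fin N → Fin K → Fin v // ∀ r, ¬ ∀ i, A r (c i) = a i} ≃
        (Fin N → {row : Fin K → Fin v // ¬ ∀ i, row (c i) = a i}) :=
      @Equiv.subtypePiEquivPi (Fin N) (fun _ => Fin K → Fin v)
        (fun _ row => ¬ ∀ i, row (c i) = a i)
    rw [Fintype.card_congr e]
    simp [Fintype.card_fun]
  rw [h2]
  apply Nat.pow_le_pow_left
  have h3 : Fintype.card {row : Fin K → Fin v // ¬ ∀ i, row (c i) = a i}
      = v ^ K - Fintype.card {row : Fin K → Fin v // ∀ i, row (c i) = a i} := by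
    rw [Fintype.card_subtype_compl]
    congr 1
    simp [Fintype.card_fun]
  rw [h3]
  exact Nat.sub_le_sub_left (agree_card htK c hc a) _

noncomputable def badSet {N t K v : ℕ} (A : Fin N → Fin K → Fin v) :
    Finset ((Fin t → Fin K) × (Fin t → Fin v)) :=
  Finset.univ.filter (fun p => Function.Injective p.1 ∧ ¬ Covers A p.1 p.2)

lemma exists_few_bad {N t K v : ℕ} (htK : t ≤ K) (m : ℕ) (hv : 1 ≤ v)
    (h : K ^ t * v ^ t * (v ^ K - v ^ (K - t)) ^ N < (m + 1) * v ^ (K * N)) :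
    ∃ A : Fin N → Fin K → Fin v, (badSet (t := t) A).card ≤ m := by
  classical
  by_contra hcon
  push_neg at hcon
  have hsum : ∑ A : Fin N → Fin K → Fin v, (badSet (t := t) A).card
      = ∑ p : (Fin t → Fin K) × (Fin t → Fin v),
          (Finset.univ.filter (fun A : Fin N → Fin K → Fin v =>
            Function.Injective p.1 ∧ ¬ Covers A p.1 p.2)).card := by
    simp only [badSet, Finset.card_filter]
    rw [Finset.sum_comm]
  have hub : ∀ p : (Fin t → Fin K) × (Fin t → Fin v),
      (Finset.univ.filter (fun A : Fin N → Fin K → Fin v =>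
        Function.Injective p.1 ∧ ¬ Covers A p.1 p.2)).card ≤ (v ^ K - v ^ (K - t)) ^ N := by
    intro p
    by_cases hinj : Function.Injective p.1
    · calc (Finset.univ.filter (fun A : Fin N → Fin K → Fin v =>
            Function.Injective p.1 ∧ ¬ Covers A p.1 p.2)).card
          ≤ (Finset.univ.filter (fun A : Fin N → Fin K → Fin v => ¬ Covers A p.1 p.2)).card := by
            apply Finset.card_le_card
            intro A hA
            simp only [Finset.mem_filter] at hA ⊢
            exact ⟨hA.1, hA.2.2⟩
        _ = Fintype.card {A : Fin N → Fin K → Fin v // ¬ Covers A p.1 p.2} := by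
            rw [Fintype.card_subtype]
        _ ≤ (v ^ K - v ^ (K - t)) ^ N := miss_card htK p.1 hinj p.2
    · have : (Finset.univ.filter (fun A : Fin N → Fin K → Fin v =>
          Function.Injective p.1 ∧ ¬ Covers A p.1 p.2)) = ∅ := by
        apply Finset.filter_false_of_mem
        intro A _ hA
        exact hinj hA.1
      simp [this]
  have hS : ∑ A : Fin N → Fin K → Fin v, (badSet (t := t) A).card
      ≤ K ^ t * v ^ t * (v ^ K - v ^ (K - t)) ^ N := by
    rw [hsum]
    calc _ ≤ ∑ _p : (Fin t → Fin K) × (Fin t → Fin v), (v ^ K - v ^ (K - t)) ^ N :=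
          Finset.sum_le_sum (fun p _ => hub p)
      _ = K ^ t * v ^ t * (v ^ K - v ^ (K - t)) ^ N := by
          simp [Finset.sum_const, Finset.card_univ, Fintype.card_prod, Fintype.card_fun]
  have hL : (m + 1) * v ^ (K * N) ≤ ∑ A : Fin N → Fin K → Fin v, (badSet (t := t) A).card := by
    calc (m + 1) * v ^ (K * N)
        = ∑ _A : Fin N → Fin K → Fin v, (m + 1) := by
          simp only [Finset.sum_const, Finset.card_univ, Fintype.card_fun, Fintype.card_fin,
            smul_eq_mul]
          rw [← pow_mul, Nat.mul_comm K N, Nat.mul_comm]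
      _ ≤ _ := Finset.sum_le_sum (fun A _ => hcon A)
  omega

lemma CAN_le {t v k K N : ℕ} (ht : 1 ≤ t) (htK : t ≤ K) (hkK : k ≤ K) (hv : 1 ≤ v)
    (h : K ^ t * v ^ t * (v ^ K - v ^ (K - t)) ^ N < (K - k + 1) * v ^ (K * N)) :
    CAN t k v ≤ N := by
  classical
  obtain ⟨A, hA⟩ := exists_few_bad htK (K - k) hv h
  set i0 : Fin t := ⟨0, ht⟩
  set S : Finset (Fin K) := (badSet (t := t) A).image (fun p => p.1 i0) with hS
  have hScard : S.card ≤ K - k := le_trans (Finset.card_image_le) hA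
  set G : Finset (Fin K) := Finset.univ \ S with hG
  have hGcard : k ≤ G.card := by
    rw [hG, Finset.card_sdiff_of_subset (Finset.subset_univ S)]
    simp only [Finset.card_univ, Fintype.card_fin]
    omega
  obtain ⟨G', hG'sub, hG'card⟩ := Finset.exists_subset_card_eq hGcard
  set e : Fin k → Fin K := fun i => (G'.orderIsoOfFin hG'card i : Fin K) with he
  have he_inj : Function.Injective e := by
    intro i j hij
    exact (G'.orderIsoOfFin hG'card).injective (Subtype.ext hij)
  have he_mem : ∀ i, e i ∈ G := fun i => hG'sub (G'.orderIsoOfFin hG'card i).2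
  have good : ∀ c : Fin t → Fin K, Function.Injective c → (∀ i, c i ∈ G) →
      ∀ a : Fin t → Fin v, Covers A c a := by
    intro c hc hcG a
    by_contra hnc
    have hmem : (c, a) ∈ badSet (t := t) A := by
      simp only [badSet, Finset.mem_filter, Finset.mem_univ, true_and]
      exact ⟨hc, hnc⟩
    have : c i0 ∈ S := Finset.mem_image.mpr ⟨(c, a), hmem, rfl⟩
    have := hcG i0
    rw [hG] at this
    simp only [Finset.mem_sdiff] at this
    exact this.2 ‹c i0 ∈ S›
  have hCA : IsCoveringArray N t k v (fun r i => A r (e i)) := by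
    intro c hc a
    obtain ⟨r, hr⟩ := good (e ∘ c) (he_inj.comp hc) (fun i => he_mem (c i)) a
    exact ⟨r, fun i => hr i⟩
  exact Nat.sInf_le ⟨_, hCA⟩

lemma can_upper (t v : ℕ) (ht : 2 ≤ t) (hv : 2 ≤ v) (k : ℕ) (hk : t ≤ k) (hk1 : 1 ≤ k) :
    CAN t k v ≤ ⌈(((t : ℝ) - 1) * Real.log k + ((t : ℝ) * Real.log 2 + t * Real.log v)) /
        Real.log ((v : ℝ) ^ t / ((v : ℝ) ^ t - 1))⌉₊ := by
  set L : ℝ := Real.log ((v : ℝ) ^ t / ((v : ℝ) ^ t - 1)) with hL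
  set C : ℝ := (t : ℝ) * Real.log 2 + t * Real.log v with hC
  set N : ℕ := ⌈(((t : ℝ) - 1) * Real.log k + C) / L⌉₊ with hN
  -- basic positivity facts
  have hv0 : (0 : ℝ) < (v : ℝ) := by positivity
  have hv1 : (1 : ℝ) ≤ (v : ℝ) := by exact_mod_cast (by omega : 1 ≤ v)
  have hvt1 : (2 : ℝ) ≤ (v : ℝ) ^ t := by
    calc (2:ℝ) ≤ (v:ℝ) := by exact_mod_cast hv
      _ = (v:ℝ)^1 := (pow_one _).symm
      _ ≤ (v:ℝ)^t := pow_le_pow_right₀ hv1 (by omega)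
  have hvt0 : (0 : ℝ) < (v : ℝ) ^ t := by linarith
  have hvtm1 : (0 : ℝ) < (v : ℝ) ^ t - 1 := by linarith
  have hLpos : 0 < L := by
    rw [hL]
    apply Real.log_pos
    rw [lt_div_iff₀ hvtm1]
    linarith
  have hLq : L = Real.log ((v:ℝ)^t) - Real.log ((v:ℝ)^t - 1) := by
    rw [hL, Real.log_div (by positivity) (by positivity)]
  -- the key numeric inequality, with K = 2k
  apply CAN_le (K := 2*k) (by omega) (by omega) (by omega) (by omega)
  have h2kt : t ≤ 2 * k := by omega
  rw [show 2 * k - k + 1 = k + 1 by omega]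
  have hle : v ^ (2*k - t) ≤ v ^ (2*k) := Nat.pow_le_pow_right (by omega) (by omega)
  have hcast : ((v ^ (2*k) - v ^ (2*k - t) : ℕ) : ℝ) = (v:ℝ) ^ (2*k) - (v:ℝ) ^ (2*k-t) := by
    rw [Nat.cast_sub hle]; push_cast; ring
  set q : ℝ := ((v:ℝ)^t - 1) / (v:ℝ)^t with hq
  have hq0 : 0 < q := by positivity
  have hq1 : q < 1 := by
    rw [hq, div_lt_one hvt0]; linarith
  have hsplit : (v:ℝ) ^ (2*k) - (v:ℝ) ^ (2*k - t) = (v:ℝ)^(2*k) * q := by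
    rw [hq]
    have hpw : (v:ℝ) ^ (2*k - t) * (v:ℝ)^t = (v:ℝ)^(2*k) := by
      rw [← pow_add]; congr 1; omega
    field_simp
    linarith [hpw]
  have hk0 : (0:ℝ) < (k:ℝ) := by exact_mod_cast hk1
  have key : ((2*k : ℕ):ℝ)^t * (v:ℝ)^t * q^N ≤ (k:ℝ) := by
    have h2k0 : (0:ℝ) < ((2*k : ℕ):ℝ) := by positivity
    have hqlog : Real.log q = -L := by
      rw [hq, Real.log_div (by positivity) (by positivity), hLq]; ring
    have hNL : ((t:ℝ) - 1) * Real.log k + C ≤ (N:ℝ) * L := by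
      have h1 : (((t : ℝ) - 1) * Real.log k + C) / L ≤ (N:ℝ) := Nat.le_ceil _
      calc ((t:ℝ) - 1) * Real.log k + C = (((t : ℝ) - 1) * Real.log k + C) / L * L := by
            field_simp
        _ ≤ (N:ℝ) * L := mul_le_mul_of_nonneg_right h1 hLpos.le
    have hlhs : ((2*k : ℕ):ℝ)^t * (v:ℝ)^t * q^N
        = Real.exp ((t:ℝ) * Real.log ((2*k:ℕ):ℝ) + (t:ℝ) * Real.log v + (N:ℝ) * Real.log q) := by
      rw [Real.exp_add, Real.exp_add]
      rw [← Real.log_pow, ← Real.log_pow, ← Real.log_pow, Real.exp_log (by positivity),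
        Real.exp_log (by positivity), Real.exp_log (by positivity)]
    have hrhs : (k:ℝ) = Real.exp (Real.log k) := (Real.exp_log hk0).symm
    rw [hlhs, hrhs]
    apply Real.exp_le_exp.mpr
    have hlog2k : Real.log ((2*k:ℕ):ℝ) = Real.log 2 + Real.log k := by
      push_cast
      rw [Real.log_mul (by norm_num) (ne_of_gt hk0)]
    rw [hqlog, hlog2k]
    rw [hC] at hNL
    nlinarith [hNL]
  have hh2k : (((2 * k : ℕ)) : ℝ) = 2 * (k : ℝ) := by push_cast; ring
  have hreal : (((2*k : ℕ)):ℝ)^t * (v:ℝ)^t * ((v ^ (2*k) - v ^ (2*k-t) : ℕ) : ℝ)^N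
      < ((k:ℝ) + 1) * (v:ℝ)^(2*k*N) := by
    rw [hcast, hsplit, mul_pow, pow_mul (v:ℝ) (2*k) N]
    have hBpos : (0:ℝ) < ((v:ℝ)^(2*k))^N := by positivity
    calc ((2*k : ℕ):ℝ)^t * (v:ℝ)^t * (((v:ℝ)^(2*k))^N * q^N)
        = (((2*k : ℕ):ℝ)^t * (v:ℝ)^t * q^N) * ((v:ℝ)^(2*k))^N := by ring
      _ ≤ (k:ℝ) * ((v:ℝ)^(2*k))^N := mul_le_mul_of_nonneg_right key hBpos.le
      _ < ((k:ℝ) + 1) * ((v:ℝ)^(2*k))^N := by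
          apply mul_lt_mul_of_pos_right _ hBpos
          linarith
  exact_mod_cast hreal

theorem gss_bound (t v : ℕ) (ht : 2 ≤ t) (hv : 2 ≤ v) :
    Filter.limsup (fun k : ℕ => (CAN t k v : ℝ) / Real.log k) Filter.atTop ≤
      ((t : ℝ) - 1) / Real.log ((v : ℝ) ^ t / ((v : ℝ) ^ t - 1)) := by
  set L : ℝ := Real.log ((v : ℝ) ^ t / ((v : ℝ) ^ t - 1)) with hL
  set C : ℝ := (t : ℝ) * Real.log 2 + t * Real.log v with hC
  have hv1 : (1 : ℝ) ≤ (v : ℝ) := by exact_mod_cast (by omega : 1 ≤ v)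
  have hvt1 : (2 : ℝ) ≤ (v : ℝ) ^ t := by
    calc (2:ℝ) ≤ (v:ℝ) := by exact_mod_cast hv
      _ = (v:ℝ)^1 := (pow_one _).symm
      _ ≤ (v:ℝ)^t := pow_le_pow_right₀ hv1 (by omega)
  have hLpos : 0 < L := by
    rw [hL]
    apply Real.log_pos
    rw [lt_div_iff₀ (by linarith)]
    linarith
  have hC0 : 0 ≤ C := by
    rw [hC]
    have h2 : (0:ℝ) ≤ Real.log 2 := Real.log_nonneg (by norm_num)
    have h3 : (0:ℝ) ≤ Real.log v := Real.log_nonneg hv1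
    positivity
  set g : ℕ → ℝ := fun k => ((t:ℝ) - 1)/L + (C/L + 1)/Real.log k with hg
  have hgt : Filter.Tendsto g Filter.atTop (nhds (((t:ℝ) - 1)/L)) := by
    have hlog : Filter.Tendsto (fun k : ℕ => Real.log k) Filter.atTop Filter.atTop :=
      Real.tendsto_log_atTop.comp tendsto_natCast_atTop_atTop
    have h0 : Filter.Tendsto (fun k : ℕ => (C/L + 1)/Real.log k) Filter.atTop (nhds 0) :=
      Filter.Tendsto.div_atTop tendsto_const_nhds hlog
    simpa using Filter.Tendsto.add
      (tendsto_const_nhds : Filter.Tendsto (fun _ : ℕ => ((t:ℝ)-1)/L) Filter.atTop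
        (nhds (((t:ℝ)-1)/L))) h0
  have hev : ∀ᶠ k : ℕ in Filter.atTop, (CAN t k v : ℝ) / Real.log k ≤ g k := by
    filter_upwards [Filter.eventually_ge_atTop (max t 3)] with k hk
    have hkt : t ≤ k := le_trans (le_max_left _ _) hk
    have hk3 : 3 ≤ k := le_trans (le_max_right _ _) hk
    have hlogk : 0 < Real.log k := by
      apply Real.log_pos
      exact_mod_cast (by omega : 1 < k)
    have hx0 : 0 ≤ (((t : ℝ) - 1) * Real.log k + C) / L := by
      apply div_nonneg _ hLpos.le
      have : (0:ℝ) ≤ Real.log k := hlogk.le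
      have ht1 : (1:ℝ) ≤ (t:ℝ) := by exact_mod_cast (by omega : 1 ≤ t)
      nlinarith
    have h1 : (CAN t k v : ℝ) ≤ (⌈(((t : ℝ) - 1) * Real.log k + C) / L⌉₊ : ℝ) := by
      exact Nat.cast_le.mpr (can_upper t v ht hv k hkt (by omega))
    have h2 : (⌈(((t : ℝ) - 1) * Real.log k + C) / L⌉₊ : ℝ)
        ≤ (((t : ℝ) - 1) * Real.log k + C) / L + 1 :=
      (Nat.ceil_lt_add_one hx0).le
    have h3 : (CAN t k v : ℝ) / Real.log k ≤ ((((t : ℝ) - 1) * Real.log k + C) / L + 1) / Real.log k :=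
      div_le_div_of_nonneg_right (h1.trans h2) hlogk.le |>.trans_eq rfl
    refine h3.trans_eq ?_
    rw [hg]
    field_simp
    ring
  have hcob : Filter.IsCoboundedUnder (· ≤ ·) Filter.atTop
      (fun k : ℕ => (CAN t k v : ℝ) / Real.log k) := by
    apply Filter.isCoboundedUnder_le_of_le Filter.atTop (x := 0)
    intro k
    exact div_nonneg (Nat.cast_nonneg _) (Real.log_natCast_nonneg k)
  calc Filter.limsup (fun k : ℕ => (CAN t k v : ℝ) / Real.log k) Filter.atTop
      ≤ Filter.limsup g Filter.atTop :=
        Filter.limsup_le_limsup hev hcob hgt.isBoundedUnder_le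
    _ = ((t:ℝ) - 1)/L := hgt.limsup_eq
end

section
/- Let t, k, v, n be integers with k ≥ 2t, t ≥ 2, v ≥ 2 and n ≥ 1. If e·v^{t−1}·(1 − 1/v^{t−1})^n·t·C(k,t−1) < 1, then CAN(t,k,v) ≤ v·n. (Here e is Euler's number.) -/
open Finset

section LLL
open scoped Classical

variable {ι β : Type*} [Fintype ι] [DecidableEq ι] [Fintype β]

/-- combine two functions: take `f` on `W`, `g` off `W`. -/
noncomputable def combineOn (W : Finset ι) (f g : ι → β) : ι → β :=
  fun j => if j ∈ W then f j else g j

lemma indep_card (W : Finset ι) (A B : Finset (ι → β))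
    (hA : ∀ f g : ι → β, (∀ j ∈ W, f j = g j) → f ∈ A → g ∈ A)
    (hB : ∀ f g : ι → β, (∀ j ∉ W, f j = g j) → f ∈ B → g ∈ B) :
    (A ∩ B).card * Fintype.card (ι → β) = A.card * B.card := by
  have key : ((A ∩ B) ×ˢ (univ : Finset (ι → β))).card = (A ×ˢ B).card := by
    refine Finset.card_bij' (fun p _ => (combineOn W p.1 p.2, combineOn W p.2 p.1))
      (fun p _ => (combineOn W p.1 p.2, combineOn W p.2 p.1)) ?hi ?hj ?li ?ri
    case hi =>
      rintro ⟨f, w⟩ hp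
      simp only [mem_product, mem_inter, mem_univ, and_true] at hp ⊢
      exact ⟨hA f _ (fun j hj => by simp [combineOn, hj]) hp.1,
        hB f _ (fun j hj => by simp [combineOn, hj]) hp.2⟩
    case hj =>
      rintro ⟨f, g⟩ hp
      simp only [mem_product, mem_inter, mem_univ, and_true] at hp ⊢
      exact ⟨hA f _ (fun j hj => by simp [combineOn, hj]) hp.1,
        hB g _ (fun j hj => by simp [combineOn, hj]) hp.2⟩
    case li =>
      rintro ⟨f, w⟩ _
      refine Prod.ext ?_ ?_ <;> · funext j; by_cases hj : j ∈ W <;> simp [combineOn, hj]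
    case ri =>
      rintro ⟨f, g⟩ _
      refine Prod.ext ?_ ?_ <;> · funext j; by_cases hj : j ∈ W <;> simp [combineOn, hj]
  rw [Finset.card_product, Finset.card_product, card_univ] at key
  exact key

variable {σ : Type*} [Fintype σ]

/-- The set of points avoiding all events in `S`. -/
noncomputable def Avoid (E : σ → Finset (ι → β)) (S : Finset σ) : Finset (ι → β) :=
  univ.filter (fun f => ∀ s ∈ S, f ∉ E s)

lemma avoid_anti (E : σ → Finset (ι → β)) {S T : Finset σ} (h : S ⊆ T) :
    Avoid E T ⊆ Avoid E S := by
  intro f hf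
  simp only [Avoid, mem_filter, mem_univ, true_and] at hf ⊢
  exact fun s hs => hf s (h hs)

lemma avoid_insert_card (E : σ → Finset (ι → β)) (j : σ) (S : Finset σ) :
    ((Avoid E (insert j S)).card : ℝ)
      = (Avoid E S).card - ((E j ∩ Avoid E S)).card := by
  have h1 : Avoid E (insert j S) = Avoid E S \ (E j ∩ Avoid E S) := by
    ext f
    simp only [Avoid, mem_sdiff, mem_filter, mem_univ, true_and, mem_inter, mem_insert]
    constructor
    · intro hf
      exact ⟨fun s hs => hf s (Or.inr hs), fun hc => hf j (Or.inl rfl) hc.1⟩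
    · rintro ⟨hf, hj⟩ s hs
      rcases hs with rfl | hs
      · exact fun hc => hj ⟨hc, by simpa [Avoid] using hf⟩
      · exact hf s hs
  have h2 : (E j ∩ Avoid E S) ⊆ Avoid E S := inter_subset_right
  rw [h1, card_sdiff_of_subset h2]
  have := card_le_card h2
  push_cast [Nat.cast_sub (card_le_card h2)]
  ring

variable (E : σ → Finset (ι → β)) (V : σ → Finset ι)

lemma lll_key [Nonempty β]
    (hdet : ∀ s, ∀ f g : ι → β, (∀ j ∈ V s, f j = g j) → f ∈ E s → g ∈ E s)
    (hVne : ∀ s, (V s).Nonempty)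
    (D : ℕ) (hD : 2 ≤ D)
    (hnbr : ∀ s, (univ.filter (fun s' => ((V s) ∩ (V s')).Nonempty)).card ≤ D)
    (p : ℝ)
    (hp : ∀ s, ((E s).card : ℝ) ≤ p * Fintype.card (ι → β))
    (hpx : p ≤ (1 / D) * (1 - 1 / D) ^ (D - 1)) :
    ∀ N : ℕ, ∀ S : Finset σ, S.card ≤ N → ∀ i, i ∉ S →
      ((E i ∩ Avoid E S).card : ℝ) ≤ (1 / D) * (Avoid E S).card := by
  have hD0 : (0:ℝ) < D := by positivity
  have hx0 : (0:ℝ) < 1 / D := by positivity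
  have hx1 : 1 / (D:ℝ) < 1 := by
    rw [div_lt_one hD0]; exact_mod_cast by omega
  have h1x0 : (0:ℝ) ≤ 1 - 1 / D := by linarith
  have h1x1 : 1 - 1 / (D:ℝ) ≤ 1 := by linarith
  have hΩpos : (0:ℝ) < Fintype.card (ι → β) := by
    have : 0 < Fintype.card (ι → β) := Fintype.card_pos
    exact_mod_cast this
  intro N
  induction N with
  | zero =>
    intro S hS i _
    have hSe : S = ∅ := Finset.card_eq_zero.mp (Nat.le_zero.mp hS)
    subst hSe
    have hAv : Avoid E (∅ : Finset σ) = univ := by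
      ext f; simp [Avoid]
    rw [hAv]
    calc ((E i ∩ univ).card : ℝ) ≤ (E i).card := by
          exact_mod_cast card_le_card inter_subset_left
      _ ≤ p * Fintype.card (ι → β) := hp i
      _ ≤ ((1/D) * (1 - 1/D) ^ (D-1)) * Fintype.card (ι → β) := by
          apply mul_le_mul_of_nonneg_right hpx hΩpos.le
      _ ≤ (1/D) * (card univ) := by
          rw [card_univ]
          have h2 : (1 - 1/(D:ℝ)) ^ (D-1) ≤ 1 := pow_le_one₀ h1x0 h1x1
          have h3 := mul_le_mul_of_nonneg_right
            (mul_le_mul_of_nonneg_left h2 hx0.le) hΩpos.le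
          linarith
  | succ N ih =>
    intro S hS i hi
    by_cases hSN : S.card ≤ N
    · exact ih S hSN i hi
    have hScard : S.card = N + 1 := by omega
    set S₁ := S.filter (fun s' => ((V i) ∩ (V s')).Nonempty) with hS₁def
    set S₂ := S.filter (fun s' => ¬ ((V i) ∩ (V s')).Nonempty) with hS₂def
    have hsplit : S₁ ∪ S₂ = S := Finset.filter_union_filter_not_eq _ S
    -- peeling
    have peel : ∀ T : Finset σ, T ⊆ S₁ →
        (1 - 1/D) ^ T.card * ((Avoid E S₂).card : ℝ) ≤ (Avoid E (T ∪ S₂)).card := by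
      intro T
      induction T using Finset.induction_on with
      | empty => intro _; simp
      | @insert j T hj ihT =>
        intro hsub
        have hjS₁ : j ∈ S₁ := hsub (mem_insert_self j T)
        have hTsub : T ⊆ S₁ := fun x hx => hsub (mem_insert_of_mem hx)
        have hjT2 : j ∉ T ∪ S₂ := by
          simp only [mem_union]
          rintro (hc | hc)
          · exact hj hc
          · rw [hS₂def] at hc; rw [hS₁def] at hjS₁
            simp only [mem_filter] at hc hjS₁
            exact hc.2 hjS₁.2
        have hcard : (T ∪ S₂).card ≤ N := by
          have hsub2 : T ∪ S₂ ⊆ S.erase j := by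
            intro x hx
            rcases mem_union.mp hx with hx | hx
            · exact mem_erase.mpr ⟨fun he => (hj (he ▸ hx)).elim, (mem_filter.mp (hTsub hx)).1⟩
            · refine mem_erase.mpr ⟨?_, (mem_filter.mp hx).1⟩
              rintro rfl
              exact hjT2 (mem_union_right _ hx)
          calc (T ∪ S₂).card ≤ (S.erase j).card := card_le_card hsub2
            _ = S.card - 1 := Finset.card_erase_of_mem (mem_filter.mp hjS₁).1
            _ ≤ N := by omega
        have hkey := ih (T ∪ S₂) hcard j hjT2
        have hins : insert j T ∪ S₂ = insert j (T ∪ S₂) := by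
          rw [Finset.insert_union]
        rw [hins, avoid_insert_card]
        have := ihT hTsub
        have hAc : (0:ℝ) ≤ (Avoid E (T ∪ S₂)).card := by positivity
        rw [Finset.card_insert_of_notMem hj]
        calc (1 - 1/D) ^ (T.card + 1) * ((Avoid E S₂).card : ℝ)
            = (1 - 1/D) * ((1 - 1/D) ^ T.card * (Avoid E S₂).card) := by ring
          _ ≤ (1 - 1/D) * (Avoid E (T ∪ S₂)).card := by
              apply mul_le_mul_of_nonneg_left this h1x0
          _ ≤ (Avoid E (T ∪ S₂)).card - (E j ∩ Avoid E (T ∪ S₂)).card := by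
              nlinarith [hkey]
    -- independence
    have hindep : ((E i ∩ Avoid E S₂).card : ℝ) * Fintype.card (ι → β)
        = (E i).card * (Avoid E S₂).card := by
      have := indep_card (V i) (E i) (Avoid E S₂) (hdet i) ?_
      · exact_mod_cast this
      · intro f g hfg hf
        simp only [Avoid, mem_filter, mem_univ, true_and] at hf ⊢
        intro s hs hg
        apply hf s hs
        apply hdet s g f _ hg
        intro j hj
        have hjV : j ∉ V i := by
          rw [hS₂def] at hs
          have := (mem_filter.mp hs).2
          intro hji
          exact this ⟨j, mem_inter.mpr ⟨hji, hj⟩⟩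
        exact (hfg j hjV).symm
    have hS₁card : S₁.card ≤ D - 1 := by
      have hiS₁ : i ∉ S₁ := fun hc => hi (mem_filter.mp hc).1
      have hsub : S₁ ⊆ (univ.filter (fun s' => ((V i) ∩ (V s')).Nonempty)).erase i := by
        intro x hx
        refine mem_erase.mpr ⟨fun he => hiS₁ (he ▸ hx), ?_⟩
        exact mem_filter.mpr ⟨mem_univ x, (mem_filter.mp hx).2⟩
      have hifil : i ∈ univ.filter (fun s' => ((V i) ∩ (V s')).Nonempty) := by
        refine mem_filter.mpr ⟨mem_univ i, ?_⟩
        obtain ⟨j, hj⟩ := hVne i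
        exact ⟨j, mem_inter.mpr ⟨hj, hj⟩⟩
      calc S₁.card ≤ _ := card_le_card hsub
        _ = _ - 1 := Finset.card_erase_of_mem hifil
        _ ≤ D - 1 := by have := hnbr i; omega
    -- assemble
    have hsub : E i ∩ Avoid E S ⊆ E i ∩ Avoid E S₂ := by
      apply Finset.inter_subset_inter (subset_refl _)
      apply avoid_anti
      rw [hS₂def]; exact filter_subset _ S
    have hA2 : ((E i ∩ Avoid E S₂).card : ℝ) ≤ p * (Avoid E S₂).card := by
      have h1 : ((E i ∩ Avoid E S₂).card : ℝ)
          = (E i).card * (Avoid E S₂).card / Fintype.card (ι → β) := by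
        rw [eq_div_iff hΩpos.ne']
        exact hindep
      rw [h1]
      rw [div_le_iff₀ hΩpos]
      calc ((E i).card : ℝ) * (Avoid E S₂).card
          ≤ (p * Fintype.card (ι → β)) * (Avoid E S₂).card := by
            apply mul_le_mul_of_nonneg_right (hp i) (by positivity)
        _ = p * (Avoid E S₂).card * Fintype.card (ι → β) := by ring
    have hpeel := peel S₁ (subset_refl S₁)
    rw [hsplit] at hpeel
    have hpow : (1 - 1/(D:ℝ)) ^ (D - 1) ≤ (1 - 1/(D:ℝ)) ^ S₁.card :=
      pow_le_pow_of_le_one h1x0 h1x1 hS₁card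
    calc ((E i ∩ Avoid E S).card : ℝ) ≤ (E i ∩ Avoid E S₂).card := by
          exact_mod_cast card_le_card hsub
      _ ≤ p * (Avoid E S₂).card := hA2
      _ ≤ ((1/D) * (1 - 1/D) ^ (D-1)) * (Avoid E S₂).card := by
          apply mul_le_mul_of_nonneg_right hpx (Nat.cast_nonneg _)
      _ ≤ ((1/D) * (1 - 1/D) ^ S₁.card) * (Avoid E S₂).card := by
          apply mul_le_mul_of_nonneg_right _ (Nat.cast_nonneg _)
          exact mul_le_mul_of_nonneg_left hpow hx0.le
      _ = (1/D) * ((1 - 1/D) ^ S₁.card * (Avoid E S₂).card) := by ring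
      _ ≤ (1/D) * (Avoid E S).card := mul_le_mul_of_nonneg_left hpeel hx0.le

lemma lll_main [Nonempty β]
    (hdet : ∀ s, ∀ f g : ι → β, (∀ j ∈ V s, f j = g j) → f ∈ E s → g ∈ E s)
    (hVne : ∀ s, (V s).Nonempty)
    (D : ℕ) (hD : 2 ≤ D)
    (hnbr : ∀ s, (univ.filter (fun s' => ((V s) ∩ (V s')).Nonempty)).card ≤ D)
    (p : ℝ)
    (hp : ∀ s, ((E s).card : ℝ) ≤ p * Fintype.card (ι → β))
    (hpx : p ≤ (1 / D) * (1 - 1 / D) ^ (D - 1)) :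
    ∃ f : ι → β, ∀ s, f ∉ E s := by
  have key := lll_key E V hdet hVne D hD hnbr p hp hpx
  have hD0 : (0:ℝ) < D := by positivity
  have hx1 : 1 / (D:ℝ) < 1 := by
    rw [div_lt_one hD0]; exact_mod_cast by omega
  have h1x0 : (0:ℝ) < 1 - 1 / D := by linarith
  have hΩpos : (0:ℝ) < Fintype.card (ι → β) := by
    have : 0 < Fintype.card (ι → β) := Fintype.card_pos
    exact_mod_cast this
  have main : ∀ S : Finset σ,
      (1 - 1/D) ^ S.card * (Fintype.card (ι → β) : ℝ) ≤ (Avoid E S).card := by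
    intro S
    induction S using Finset.induction_on with
    | empty =>
      simp only [card_empty, pow_zero, one_mul]
      have : Avoid E (∅ : Finset σ) = univ := by ext f; simp [Avoid]
      rw [this, card_univ]
    | @insert j S hj ihS =>
      rw [avoid_insert_card, Finset.card_insert_of_notMem hj]
      have hkey := key S.card S le_rfl j hj
      calc (1 - 1/D) ^ (S.card + 1) * (Fintype.card (ι → β) : ℝ)
          = (1 - 1/D) * ((1 - 1/D) ^ S.card * Fintype.card (ι → β)) := by ring
        _ ≤ (1 - 1/D) * (Avoid E S).card := mul_le_mul_of_nonneg_left ihS h1x0.le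
        _ ≤ (Avoid E S).card - (E j ∩ Avoid E S).card := by nlinarith [hkey]
  have hpos : (0:ℝ) < (Avoid E (univ : Finset σ)).card := by
    calc (0:ℝ) < (1 - 1/D) ^ (univ : Finset σ).card * Fintype.card (ι → β) := by positivity
      _ ≤ _ := main univ
  have : (Avoid E (univ : Finset σ)).Nonempty := by
    rw [← Finset.card_pos]; exact_mod_cast hpos
  obtain ⟨f, hf⟩ := this
  exact ⟨f, fun s => (mem_filter.mp hf).2 s (mem_univ s)⟩

end LLL

section APP
open scoped Classical

variable (t k m n : ℕ)

/-- Index type for bad events: a strictly monotone column choice and a normalized value tuple. -/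
def SigT [NeZero t] : Type :=
  {c : Fin t → Fin k // StrictMono c} × {a : Fin t → Fin (m+1) // a 0 = 0}

noncomputable instance [NeZero t] : Fintype (SigT t k m) := by
  unfold SigT; infer_instance

/-- Rows not matching the normalized interaction `(c, a)`. -/
noncomputable def badRow [NeZero t] (c : Fin t → Fin k) (a : Fin t → Fin (m+1)) :
    Finset (Fin k → Fin (m+1)) :=
  univ.filter (fun f => ¬ ∀ i, f (c i) = f (c 0) + a i)

/-- The bad event: no row of the base array matches the normalized interaction. -/
noncomputable def BadEv [NeZero t] (s : SigT t k m) :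
    Finset (Fin k → Fin n → Fin (m+1)) :=
  univ.filter (fun B => ∀ r : Fin n, ¬ ∀ i, B (s.1.1 i) r = B (s.1.1 0) r + s.2.1 i)

lemma card_BadEv [NeZero t] (s : SigT t k m) :
    (BadEv t k m n s).card = (badRow t k m s.1.1 s.2.1).card ^ n := by
  have : (BadEv t k m n s).card = (Fintype.piFinset (fun _ : Fin n => badRow t k m s.1.1 s.2.1)).card := by
    apply Finset.card_bij' (fun B _ => fun r j => B j r) (fun g _ => fun j r => g r j)
    · intro B hB
      simp only [BadEv, mem_filter, mem_univ, true_and] at hB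
      rw [Fintype.mem_piFinset]
      intro r
      simp only [badRow, mem_filter, mem_univ, true_and]
      exact hB r
    · intro g hg
      rw [Fintype.mem_piFinset] at hg
      simp only [BadEv, mem_filter, mem_univ, true_and]
      intro r
      have := hg r
      simp only [badRow, mem_filter, mem_univ, true_and] at this
      exact this
    · intro B _; rfl
    · intro g _; rfl
  rw [this, Fintype.card_piFinset]
  simp

lemma card_badRow_le [NeZero t] (ht : 2 ≤ t) (htk : t - 1 ≤ k)
    (c : Fin t → Fin k) (hc : Function.Injective c)
    (a : Fin t → Fin (m+1)) (ha : a 0 = 0) :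
    (badRow t k m c a).card ≤ (m+1)^k - (m+1)^(k-(t-1)) := by
  classical
  -- good rows
  set good : Finset (Fin k → Fin (m+1)) :=
    univ.filter (fun f => ∀ i, f (c i) = f (c 0) + a i) with hgood
  have hsplit : (badRow t k m c a).card = (m+1)^k - good.card := by
    have h1 : (badRow t k m c a) = univ \ good := by
      ext f; simp [badRow, hgood]
    rw [h1, card_sdiff_of_subset (subset_univ _), card_univ]
    congr 1
    simp [Fintype.card_fun]
  rw [hsplit]
  have hgoodge : (m+1)^(k-(t-1)) ≤ good.card := by
    -- injection from functions on the free coordinates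
    have h0free : ∀ i : Fin t, i ≠ 0 → c i ≠ c 0 := fun i hi hc' => hi (hc hc')
    have hγcard : Fintype.card ({j : Fin k // ∀ i : Fin t, i ≠ 0 → c i ≠ j} → Fin (m+1))
        = (m+1)^(k-(t-1)) := by
      rw [Fintype.card_fun, Fintype.card_fin]
      congr 1
      have : Fintype.card {j : Fin k // ∀ i : Fin t, i ≠ 0 → c i ≠ j}
          = k - Fintype.card {j : Fin k // ¬ ∀ i : Fin t, i ≠ 0 → c i ≠ j} := by
        have := Fintype.card_subtype_compl (fun j : Fin k => ¬ ∀ i : Fin t, i ≠ 0 → c i ≠ j)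
        simp only [not_not] at this
        rw [this, Fintype.card_fin]
      rw [this]
      congr 1
      have e1 : ∀ j : Fin k, (¬ ∀ i : Fin t, i ≠ 0 → c i ≠ j)
          ↔ j ∈ (univ.filter (fun i : Fin t => i ≠ 0)).image c := by
        intro j
        push_neg
        simp only [mem_image, mem_filter, mem_univ, true_and]
      rw [Fintype.card_congr (Equiv.subtypeEquivRight e1), Fintype.card_coe,
        card_image_of_injective _ hc, Finset.filter_ne' univ (0 : Fin t),
        card_erase_of_mem (mem_univ _), card_univ, Fintype.card_fin]
    -- the extension map
    set F : ({j : Fin k // ∀ i : Fin t, i ≠ 0 → c i ≠ j} → Fin (m+1)) → (Fin k → Fin (m+1)) := fun h j =>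
      if hj : ∃ i : Fin t, i ≠ 0 ∧ c i = j then h ⟨c 0, fun i hi hc' => h0free i hi hc'⟩ + a hj.choose
      else h ⟨j, fun i hi hc' => hj ⟨i, hi, hc'⟩⟩ with hF
    have hne0 : ¬ ∃ i' : Fin t, i' ≠ 0 ∧ c i' = c 0 := by
      rintro ⟨i', hi', hc'⟩; exact h0free i' hi' hc'
    have hmem : ∀ hh, F hh ∈ good := by
      intro hh
      simp only [hgood, mem_filter, mem_univ, true_and]
      intro i
      by_cases hi : i = 0
      · subst hi; rw [ha, add_zero]
      · have hex : ∃ i' : Fin t, i' ≠ 0 ∧ c i' = c i := ⟨i, hi, rfl⟩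
        have hchoice : hex.choose = i := hc hex.choose_spec.2
        rw [hF]
        simp only [dif_pos hex]
        rw [hchoice, dif_neg hne0]
    have hinj : Function.Injective F := by
      intro h1 h2 he
      funext ⟨j, hj⟩
      have := congrFun he j
      rw [hF] at this
      have hne : ¬ ∃ i : Fin t, i ≠ 0 ∧ c i = j := by
        rintro ⟨i, hi, hc'⟩; exact hj i hi hc'
      simp only [dif_neg hne] at this
      exact this
    have huniv : ((univ : Finset ({j : Fin k // ∀ i : Fin t, i ≠ 0 → c i ≠ j} → Fin (m+1)))).card
        = (m+1)^(k-(t-1)) := by rw [card_univ, hγcard]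
    calc (m+1)^(k-(t-1)) = _ := huniv.symm
      _ ≤ good.card := card_le_card_of_injOn F (fun x _ => hmem x) (hinj.injOn)
  omega


lemma orderEmb_coe_congr {α : Type*} [LinearOrder α] {s₁ s₂ : Finset α} (h : s₁ = s₂)
    {tt : ℕ} (h1 : s₁.card = tt) (h2 : s₂.card = tt) :
    ⇑(s₁.orderEmbOfFin h1) = ⇑(s₂.orderEmbOfFin h2) := by subst h; rfl

/-- The columns on which the event indexed by `s` depends. -/
noncomputable def Vsets [NeZero t] (s : SigT t k m) : Finset (Fin k) := image s.1.1 univ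

lemma BadEv_det [NeZero t] (s : SigT t k m) (f g : Fin k → Fin n → Fin (m+1))
    (hfg : ∀ j ∈ Vsets t k m s, f j = g j) :
    f ∈ BadEv t k m n s → g ∈ BadEv t k m n s := by
  intro hf
  simp only [BadEv, mem_filter, mem_univ, true_and] at hf ⊢
  intro r hr
  apply hf r
  intro i
  rw [hfg (s.1.1 i) (by exact mem_image_of_mem _ (mem_univ _)),
    hfg (s.1.1 0) (by exact mem_image_of_mem _ (mem_univ _))]
  exact hr i

lemma image_card_of_strictMono [NeZero t] {c : Fin t → Fin k} (hc : StrictMono c) :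
    (image c univ).card = t := by
  rw [card_image_of_injective _ hc.injective, card_univ, Fintype.card_fin]

lemma nbr_card_le [NeZero t] (ht : 2 ≤ t) (htk : t - 1 ≤ k) (s : SigT t k m) :
    (univ.filter (fun s' : SigT t k m =>
      ((Vsets t k m s) ∩ (Vsets t k m s')).Nonempty)).card
      ≤ t * (Nat.choose k (t-1)) * (m+1)^(t-1) := by
  classical
  simp only [Vsets]
  set c := s.1.1 with hcdef
  haveI hne2 : Nonempty {S : Finset (Fin k) // S.card = t - 1} := by
    obtain ⟨S, _, hS⟩ := Finset.exists_subset_card_eq (s := (univ : Finset (Fin k))) (n := t-1)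
      (by rw [card_univ, Fintype.card_fin]; exact htk)
    exact ⟨⟨S, hS⟩⟩
  set Cod := Fin t × {S : Finset (Fin k) // S.card = t - 1} × ({i : Fin t // i ≠ (0:Fin t)} → Fin (m+1))
    with hCod
  have hcodcard : Fintype.card Cod = t * (Nat.choose k (t-1)) * (m+1)^(t-1) := by
    show Fintype.card (Fin t × {S : Finset (Fin k) // S.card = t - 1} × ({i : Fin t // i ≠ (0:Fin t)} → Fin (m+1))) = _
    rw [Fintype.card_prod, Fintype.card_prod, Fintype.card_fin,
      Fintype.card_finset_len, Fintype.card_fin, Fintype.card_fun, Fintype.card_fin]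
    have : Fintype.card {i : Fin t // i ≠ (0:Fin t)} = t - 1 := by
      simp [Fintype.card_subtype_compl]
    rw [this, mul_assoc]
  set Φ : SigT t k m → Cod := fun s' =>
    if hex : ∃ pr : Fin t × Fin t, s'.1.1 pr.1 = c pr.2 then
      (hex.choose.2,
       ⟨(image s'.1.1 univ).erase (s'.1.1 hex.choose.1), by
          rw [card_erase_of_mem (mem_image_of_mem _ (mem_univ _)), image_card_of_strictMono (hc := s'.1.2)]⟩,
       fun i => s'.2.1 i.1)
    else (0, Classical.arbitrary _, fun _ => 0) with hΦ
  have hinj : Set.InjOn Φ (univ.filter (fun s' : SigT t k m =>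
      ((image c univ) ∩ (image s'.1.1 univ)).Nonempty)) := by
    intro s' hs' s'' hs'' heq
    have hex' : ∃ pr : Fin t × Fin t, s'.1.1 pr.1 = c pr.2 := by
      obtain ⟨j, hj⟩ := (mem_filter.mp hs').2
      obtain ⟨hj1, hj2⟩ := mem_inter.mp hj
      obtain ⟨i1, _, hi1⟩ := mem_image.mp hj2
      obtain ⟨i2, _, hi2⟩ := mem_image.mp hj1
      exact ⟨(i1, i2), by rw [hi1, hi2]⟩
    have hex'' : ∃ pr : Fin t × Fin t, s''.1.1 pr.1 = c pr.2 := by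
      obtain ⟨j, hj⟩ := (mem_filter.mp hs'').2
      obtain ⟨hj1, hj2⟩ := mem_inter.mp hj
      obtain ⟨i1, _, hi1⟩ := mem_image.mp hj2
      obtain ⟨i2, _, hi2⟩ := mem_image.mp hj1
      exact ⟨(i1, i2), by rw [hi1, hi2]⟩
    rw [hΦ] at heq
    simp only [dif_pos hex', dif_pos hex''] at heq
    have h1 : hex'.choose.2 = hex''.choose.2 := congrArg Prod.fst heq
    have h2 : (image s'.1.1 univ).erase (s'.1.1 hex'.choose.1)
        = (image s''.1.1 univ).erase (s''.1.1 hex''.choose.1) :=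
      congrArg Subtype.val (congrArg Prod.fst (congrArg Prod.snd heq))
    have h3 : (fun i : {i : Fin t // i ≠ (0:Fin t)} => s'.2.1 i.1)
        = (fun i : {i : Fin t // i ≠ (0:Fin t)} => s''.2.1 i.1) :=
      congrArg Prod.snd (congrArg Prod.snd heq)
    -- images are equal
    have himg : image s'.1.1 univ = image s''.1.1 univ := by
      have e' : image s'.1.1 univ
          = insert (c hex'.choose.2) ((image s'.1.1 univ).erase (s'.1.1 hex'.choose.1)) := by
        rw [← hex'.choose_spec]
        exact (insert_erase (mem_image_of_mem _ (mem_univ _))).symm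
      have e'' : image s''.1.1 univ
          = insert (c hex''.choose.2) ((image s''.1.1 univ).erase (s''.1.1 hex''.choose.1)) := by
        rw [← hex''.choose_spec]
        exact (insert_erase (mem_image_of_mem _ (mem_univ _))).symm
      rw [e', e'', h1, h2]
    have hcfun : s'.1.1 = s''.1.1 := by
      have hc1 : (image s'.1.1 univ).card = t := image_card_of_strictMono (hc := s'.1.2)
      have hc2 : (image s''.1.1 univ).card = t := image_card_of_strictMono (hc := s''.1.2)
      exact (Finset.orderEmbOfFin_unique hc1 (fun x => mem_image_of_mem _ (mem_univ x)) s'.1.2).trans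
        ((orderEmb_coe_congr himg hc1 hc2).trans
          (Finset.orderEmbOfFin_unique hc2 (fun x => mem_image_of_mem _ (mem_univ x)) s''.1.2).symm)
    have hafun : s'.2.1 = s''.2.1 := by
      funext i
      by_cases hi : i = (0 : Fin t)
      · subst hi; rw [s'.2.2, s''.2.2]
      · exact congrFun h3 ⟨i, hi⟩
    obtain ⟨⟨c1, hc1⟩, ⟨a1, ha1⟩⟩ := s'
    obtain ⟨⟨c2, hc2⟩, ⟨a2, ha2⟩⟩ := s''
    simp only at hcfun hafun
    subst hcfun hafun
    rfl
  calc (univ.filter (fun s' : SigT t k m =>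
      ((image c univ) ∩ (image s'.1.1 univ)).Nonempty)).card
      ≤ (univ : Finset Cod).card := card_le_card_of_injOn Φ (fun a _ => mem_univ _) hinj
    _ = t * (Nat.choose k (t-1)) * (m+1)^(t-1) := by rw [card_univ, hcodcard]

end APP
open Finset

lemma inv_exp_le_pow (D : ℕ) (hD : 2 ≤ D) :
    1 / Real.exp 1 ≤ (1 - 1/(D:ℝ))^(D-1) := by
  obtain ⟨d, rfl⟩ : ∃ d, D = d + 1 := ⟨D - 1, by omega⟩
  have hd1 : 1 ≤ d := by omega
  have hd0 : (0:ℝ) < d := by exact_mod_cast hd1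
  have h1 : ((1:ℝ) + 1/d)^d ≤ Real.exp 1 := by
    calc ((1:ℝ) + 1/d)^d ≤ (Real.exp (1/d))^d := by
          apply pow_le_pow_left₀ (by positivity)
          have := Real.add_one_le_exp (1/(d:ℝ))
          linarith
      _ = Real.exp (d * (1/d)) := by rw [← Real.exp_nat_mul]
      _ = Real.exp 1 := by rw [mul_one_div, div_self hd0.ne']
  have hprod : ((1:ℝ) - 1/(d+1))^d * ((1:ℝ) + 1/d)^d = 1 := by
    rw [← mul_pow]
    have he : ((1:ℝ) - 1/(d+1)) * (1 + 1/d) = 1 := by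
      field_simp
      ring
    rw [he, one_pow]
  have hpos : (0:ℝ) < ((1:ℝ) + 1/d)^d := by positivity
  have hq : ((1:ℝ) - 1/(d+1))^d = 1 / ((1:ℝ) + 1/d)^d := by
    rw [eq_div_iff hpos.ne']
    exact hprod
  have hcast : ((d:ℝ) + 1) = ((d+1 : ℕ) : ℝ) := by push_cast; ring
  have hsub : (d + 1) - 1 = d := by omega
  rw [hsub, ← hcast, hq]
  apply one_div_le_one_div_of_le hpos h1

lemma hp_bound (t k m n : ℕ) [NeZero t] (ht : 2 ≤ t) (htk : t - 1 ≤ k) (s : SigT t k m) :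
    ((BadEv t k m n s).card : ℝ)
      ≤ (1 - 1/((m:ℝ)+1)^(t-1))^n * Fintype.card (Fin k → Fin n → Fin (m+1)) := by
  classical
  rw [card_BadEv]
  have hbr := card_badRow_le t k m ht htk s.1.1 s.1.2.injective s.2.1 s.2.2
  have hΩ : (Fintype.card (Fin k → Fin n → Fin (m+1)) : ℝ) = (((m:ℝ)+1)^k)^n := by
    rw [Fintype.card_fun, Fintype.card_fun, Fintype.card_fin, Fintype.card_fin]
    push_cast
    rw [← pow_mul, ← pow_mul, Nat.mul_comm]
    rw [Fintype.card_fin]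
  rw [hΩ, Nat.cast_pow]
  have hple : ((m+1:ℕ)^k - (m+1:ℕ)^(k-(t-1)) : ℕ) ≤ ((m+1:ℕ))^k := Nat.sub_le _ _
  have hcast : (((m+1:ℕ)^k - (m+1:ℕ)^(k-(t-1)) : ℕ) : ℝ)
      = ((m:ℝ)+1)^k - ((m:ℝ)+1)^(k-(t-1)) := by
    rw [Nat.cast_sub (Nat.pow_le_pow_right (by omega) (by omega))]
    push_cast
    ring
  have hfac : ((m:ℝ)+1)^k - ((m:ℝ)+1)^(k-(t-1))
      = ((m:ℝ)+1)^k * (1 - 1/((m:ℝ)+1)^(t-1)) := by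
    have hsplit : ((m:ℝ)+1)^(k-(t-1)) * ((m:ℝ)+1)^(t-1) = ((m:ℝ)+1)^k := by
      rw [← pow_add]
      congr 1
      omega
    field_simp
    nlinarith [hsplit]
  calc ((badRow t k m s.1.1 s.2.1).card : ℝ)^n
      ≤ (((m+1:ℕ)^k - (m+1:ℕ)^(k-(t-1)) : ℕ) : ℝ)^n := by
        apply pow_le_pow_left₀ (Nat.cast_nonneg _)
        exact_mod_cast hbr
    _ = (((m:ℝ)+1)^k * (1 - 1/((m:ℝ)+1)^(t-1)))^n := by rw [hcast, hfac]

    _ = (1 - 1/((m:ℝ)+1)^(t-1))^n * (((m:ℝ)+1)^k)^n := by rw [mul_pow]; ring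


set_option maxHeartbeats 2000000 in
theorem cyclic_group_lll_finite (t k v n : ℕ) (ht : 2 ≤ t) (hk : 2 * t ≤ k)
    (hv : 2 ≤ v) (hn : 1 ≤ n)
    (h : Real.exp 1 * (v : ℝ) ^ (t - 1) * (1 - 1 / (v : ℝ) ^ (t - 1)) ^ n *
        (t : ℝ) * (Nat.choose k (t - 1) : ℝ) < 1) :
    CAN t k v ≤ v * n := by
  obtain ⟨m, rfl⟩ : ∃ m, v = m + 1 := ⟨v - 1, by omega⟩
  haveI : NeZero t := ⟨by omega⟩
  push_cast at h
  have htk : t - 1 ≤ k := by omega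
  have hm1 : (1:ℝ) ≤ (m:ℝ) + 1 := by push_cast; linarith
  -- the LLL parameters
  set D : ℕ := t * Nat.choose k (t-1) * (m+1)^(t-1) with hDdef
  have hchpos : 0 < Nat.choose k (t-1) := Nat.choose_pos htk
  have hD2 : 2 ≤ D := by
    have h1 : 1 * 1 * 1 ≤ t * Nat.choose k (t-1) * (m+1)^(t-1) := by
      apply Nat.mul_le_mul (Nat.mul_le_mul (by omega) hchpos) (Nat.one_le_pow _ _ (by omega))
    calc 2 ≤ t := ht
      _ = t * 1 * 1 := by ring
      _ ≤ t * Nat.choose k (t-1) * (m+1)^(t-1) := by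
        apply Nat.mul_le_mul (Nat.mul_le_mul le_rfl hchpos) (Nat.one_le_pow _ _ (by omega))
  set p : ℝ := (1 - 1/((m:ℝ)+1)^(t-1))^n with hpdef
  have hVpow : (0:ℝ) < ((m:ℝ)+1)^(t-1) := by positivity
  have hVpow1 : (1:ℝ) ≤ ((m:ℝ)+1)^(t-1) := one_le_pow₀ hm1
  have hp0 : (0:ℝ) ≤ p := by
    apply pow_nonneg
    have : 1/((m:ℝ)+1)^(t-1) ≤ 1 := by
      rw [div_le_one hVpow]; exact hVpow1
    linarith
  -- LLL condition
  have hDcast : ((D:ℝ)) = (t:ℝ) * (Nat.choose k (t-1) : ℝ) * ((m:ℝ)+1)^(t-1) := by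
    rw [hDdef]; push_cast; ring
  have hD0 : (0:ℝ) < D := by positivity
  have hpx : p ≤ (1/(D:ℝ)) * (1 - 1/(D:ℝ))^(D-1) := by
    have h' : Real.exp 1 * p * D < 1 := by
      calc Real.exp 1 * p * D
          = Real.exp 1 * ((m:ℝ)+1)^(t-1) * p * (t:ℝ) * (Nat.choose k (t-1) : ℝ) := by
            rw [hDcast]; ring
        _ < 1 := h
    have hepos : (0:ℝ) < Real.exp 1 := Real.exp_pos 1
    have hp1 : p ≤ 1 / (Real.exp 1 * D) := by
      rw [le_div_iff₀ (by positivity)]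
      nlinarith [h']
    calc p ≤ 1 / (Real.exp 1 * D) := hp1
      _ = (1/(D:ℝ)) * (1 / Real.exp 1) := by ring
      _ ≤ (1/(D:ℝ)) * (1 - 1/(D:ℝ))^(D-1) := by
          apply mul_le_mul_of_nonneg_left (inv_exp_le_pow D hD2) (by positivity)
  -- apply the local lemma
  obtain ⟨B, hB⟩ := lll_main (σ := SigT t k m) (BadEv t k m n)
    (Vsets t k m) (BadEv_det t k m n)
    (fun s => ⟨s.1.1 0, by exact mem_image_of_mem _ (mem_univ _)⟩)
    D hD2 (fun s => by rw [hDdef]; exact nbr_card_le t k m ht htk s) p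
    (fun s => by
      have := hp_bound t k m n ht htk s
      rw [hpdef]
      exact this)
    hpx
  -- build the covering array by group development
  set A : Fin ((m+1)*n) → Fin k → Fin (m+1) :=
    fun r j => B j ((finProdFinEquiv.symm r).2) + (finProdFinEquiv.symm r).1 with hA
  have hCA : IsCoveringArray ((m+1)*n) t k (m+1) A := by
    intro c' hc' a'
    have hcard : (image c' univ).card = t := by
      rw [card_image_of_injective _ hc', card_univ, Fintype.card_fin]
    set ce : Fin t → Fin k := ⇑((image c' univ).orderEmbOfFin hcard) with hce
    have hmono : StrictMono ce := by rw [hce]; exact OrderEmbedding.strictMono _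
    have hrange : ∀ i : Fin t, ∃ w : Fin t, ce w = c' i := by
      intro i
      have h1 : c' i ∈ Set.range ce := by
        rw [hce, Finset.range_orderEmbOfFin]
        exact mem_coe.mpr (mem_image_of_mem _ (mem_univ i))
      exact h1
    choose π hπspec using hrange
    have hπinj : Function.Injective π := by
      intro i j hij
      apply hc'
      rw [← hπspec i, ← hπspec j, hij]
    have hπbij : Function.Bijective π := Finite.injective_iff_bijective.mp hπinj
    obtain ⟨ρ, hρ1, hρ2⟩ := Function.bijective_iff_has_inverse.mp hπbij
    have hb := hB ((⟨ce, hmono⟩, ⟨fun w => a' (ρ w) - a' (ρ 0), sub_self _⟩) : SigT t k m)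
    have hb' : ∃ r : Fin n, ∀ i, B (ce i) r = B (ce 0) r + (a' (ρ i) - a' (ρ 0)) := by
      by_contra hcon
      push_neg at hcon
      apply hb
      simp only [BadEv, mem_filter, mem_univ, true_and]
      intro r hall
      obtain ⟨i, hi⟩ := hcon r
      exact hi (hall i)
    obtain ⟨r, hr⟩ := hb'
    refine ⟨finProdFinEquiv (a' (ρ 0) - B (ce 0) r, r), ?_⟩
    intro i
    simp only [hA, Equiv.symm_apply_apply]
    rw [← hπspec i, hr (π i), hρ1 i]
    abel
  have hmem : (m+1) * n ∈ {N : ℕ | ∃ A : Fin N → Fin k → Fin (m+1),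
      IsCoveringArray N t k (m+1) A} := ⟨A, hCA⟩
  exact Nat.sInf_le hmem
end

section
/- Let t, v be fixed integers with t ≥ 2 and v ≥ 2. Then d(t,v) = limsup_{k→∞} CAN(t,k,v)/log k ≤ v(t − 1) / log(v^{t−1}/(v^{t−1} − 1)). -/
open Finset Filter

def GoodRow {K t v : ℕ} [NeZero v] (c : Fin t → Fin K) (a : Fin t → Fin v) (x : Fin K → Fin v) : Prop :=
  ∃ g : Fin v, ∀ i, x (c i) + g = a i

instance {K t v : ℕ} [NeZero v] (c : Fin t → Fin K) (a : Fin t → Fin v) (x : Fin K → Fin v) :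
    Decidable (GoodRow c a x) := by unfold GoodRow; infer_instance

lemma rowgood_card {K t v : ℕ} [NeZero v] (ht : 1 ≤ t) (htK : t ≤ K)
    (c : Fin t → Fin K) (hc : Function.Injective c) (a : Fin t → Fin v) :
    v ^ (K + 1 - t) ≤ (univ.filter (GoodRow c a)).card := by
  classical
  set E : Fin v → Finset (Fin K → Fin v) := fun g =>
    Fintype.piFinset (fun j => if h : ∃ i, c i = j then {a h.choose - g} else univ) with hE
  have hmem : ∀ g x, x ∈ E g ↔ ∀ i : Fin t, x (c i) = a i - g := by
    intro g x
    rw [hE, Fintype.mem_piFinset]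
    constructor
    · intro h i
      have h2 := h (c i)
      rw [dif_pos ⟨i, rfl⟩] at h2
      have : (⟨i, rfl⟩ : ∃ i', c i' = c i).choose = i := hc (⟨i, rfl⟩ : ∃ i', c i' = c i).choose_spec
      simpa [this] using h2
    · intro h j
      by_cases hj : ∃ i, c i = j
      · rw [dif_pos hj]
        have := h hj.choose
        rw [hj.choose_spec] at this
        simp [this]
      · rw [dif_neg hj]; simp
  have hcard : ∀ g, (E g).card = v ^ (K - t) := by
    intro g
    rw [hE]
    rw [Fintype.card_piFinset]
    have : ∀ j : Fin K, ((if h : ∃ i, c i = j then ({a h.choose - g} : Finset (Fin v)) else univ).card)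
        = if ∃ i, c i = j then 1 else v := by
      intro j; by_cases hj : ∃ i, c i = j <;> simp [hj]
    rw [Finset.prod_congr rfl (fun j _ => this j)]
    rw [Finset.prod_ite]
    simp only [Finset.prod_const_one, Finset.prod_const, one_mul]
    congr 1
    have h1 : (univ.filter (fun j : Fin K => ∃ i, c i = j)) = univ.image c := by
      ext j; simp [eq_comm]
    have h2 : (univ.filter (fun j : Fin K => ∃ i, c i = j)).card = t := by
      rw [h1, Finset.card_image_of_injective _ hc, Finset.card_univ, Fintype.card_fin]
    have h3 := Finset.card_filter_add_card_filter_not (s := (univ : Finset (Fin K)))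
      (p := fun j => ∃ i, c i = j)
    rw [Finset.card_univ, Fintype.card_fin] at h3
    omega
  have hsub : (univ : Finset (Fin v)).biUnion E ⊆ univ.filter (GoodRow c a) := by
    intro x hx
    rw [Finset.mem_biUnion] at hx
    obtain ⟨g, -, hg⟩ := hx
    rw [Finset.mem_filter]
    refine ⟨Finset.mem_univ _, g, fun i => ?_⟩
    rw [(hmem g x).1 hg i, sub_add_cancel]
  have hdisj : ∀ g ∈ (univ : Finset (Fin v)), ∀ g' ∈ (univ : Finset (Fin v)), g ≠ g' →
      Disjoint (E g) (E g') := by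
    intro g _ g' _ hgg'
    rw [Finset.disjoint_left]
    intro x hx hx'
    have i0 : Fin t := ⟨0, by omega⟩
    have h1 := (hmem g x).1 hx i0
    have h2 := (hmem g' x).1 hx' i0
    exact hgg' (by have := h1.symm.trans h2; exact sub_right_injective this)
  calc v ^ (K + 1 - t) = v * v ^ (K - t) := by
        rw [← pow_succ']
        congr 1
        omega
    _ = ((univ : Finset (Fin v)).biUnion E).card := by
        rw [Finset.card_biUnion hdisj]
        simp [hcard, Finset.card_univ, mul_comm]
    _ ≤ _ := Finset.card_le_card hsub

def BadP {n K t v : ℕ} [NeZero v] (B : Fin n → Fin K → Fin v) (c : Fin t → Fin K)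
    (a : Fin t → Fin v) : Prop :=
  ¬ ∃ r : Fin n, GoodRow c a (B r)

instance {n K t v : ℕ} [NeZero v] (B : Fin n → Fin K → Fin v) (c : Fin t → Fin K)
    (a : Fin t → Fin v) : Decidable (BadP B c a) := by unfold BadP; infer_instance

lemma badB_card {n K t v : ℕ} [NeZero v] (ht : 1 ≤ t) (htK : t ≤ K)
    (c : Fin t → Fin K) (hc : Function.Injective c) (a : Fin t → Fin v) :
    (univ.filter (fun B : Fin n → Fin K → Fin v => BadP B c a)).card
      ≤ (v ^ K - v ^ (K + 1 - t)) ^ n := by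
  classical
  have heq : univ.filter (fun B : Fin n → Fin K → Fin v => BadP B c a)
      = Fintype.piFinset (fun _ : Fin n => univ.filter (fun x => ¬ GoodRow c a x)) := by
    ext B
    simp only [Finset.mem_filter, Finset.mem_univ, true_and, Fintype.mem_piFinset, BadP,
      not_exists]
  rw [heq, Fintype.card_piFinset, Finset.prod_const, Finset.card_univ, Fintype.card_fin]
  apply Nat.pow_le_pow_left
  have h3 := Finset.card_filter_add_card_filter_not (s := (univ : Finset (Fin K → Fin v)))
    (p := GoodRow c a)
  have h4 : (univ : Finset (Fin K → Fin v)).card = v ^ K := by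
    rw [Finset.card_univ, Fintype.card_fun, Fintype.card_fin, Fintype.card_fin]
  have h5 := rowgood_card (v := v) ht htK c hc a
  omega

lemma exists_fewbad {n K t v k : ℕ} [NeZero v] (ht : 1 ≤ t) (htK : t ≤ K)
    (H : K ^ t * v ^ t * (v ^ K - v ^ (K + 1 - t)) ^ n ≤ k * (v ^ K) ^ n) :
    ∃ B : Fin n → Fin K → Fin v,
      (univ.filter (fun p : (Fin t → Fin K) × (Fin t → Fin v) =>
        Function.Injective p.1 ∧ BadP B p.1 p.2)).card ≤ k := by
  classical
  by_contra hcon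
  push_neg at hcon
  have hswap : ∑ B : Fin n → Fin K → Fin v,
      (univ.filter (fun p : (Fin t → Fin K) × (Fin t → Fin v) =>
        Function.Injective p.1 ∧ BadP B p.1 p.2)).card
      = ∑ p : (Fin t → Fin K) × (Fin t → Fin v),
        (univ.filter (fun B : Fin n → Fin K → Fin v =>
          Function.Injective p.1 ∧ BadP B p.1 p.2)).card := by
    simp only [Finset.card_filter]
    exact Finset.sum_comm
  have hbound : ∀ p : (Fin t → Fin K) × (Fin t → Fin v),
      (univ.filter (fun B : Fin n → Fin K → Fin v =>
          Function.Injective p.1 ∧ BadP B p.1 p.2)).card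
        ≤ (v ^ K - v ^ (K + 1 - t)) ^ n := by
    intro p
    by_cases hp : Function.Injective p.1
    · refine le_trans (Finset.card_le_card ?_) (badB_card ht htK p.1 hp p.2)
      intro B hB
      rw [Finset.mem_filter] at hB ⊢
      exact ⟨hB.1, hB.2.2⟩
    · have : (univ.filter (fun B : Fin n → Fin K → Fin v =>
          Function.Injective p.1 ∧ BadP B p.1 p.2)) = ∅ := by
        apply Finset.filter_false_of_mem
        intro B _ hB
        exact hp hB.1
      rw [this]
      simp
  have hup : ∑ B : Fin n → Fin K → Fin v,
      (univ.filter (fun p : (Fin t → Fin K) × (Fin t → Fin v) =>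
        Function.Injective p.1 ∧ BadP B p.1 p.2)).card
      ≤ K ^ t * v ^ t * (v ^ K - v ^ (K + 1 - t)) ^ n := by
    rw [hswap]
    calc _ ≤ ∑ _p : (Fin t → Fin K) × (Fin t → Fin v), (v ^ K - v ^ (K + 1 - t)) ^ n :=
          Finset.sum_le_sum (fun p _ => hbound p)
      _ = K ^ t * v ^ t * (v ^ K - v ^ (K + 1 - t)) ^ n := by
          rw [Finset.sum_const, Finset.card_univ]
          simp [Fintype.card_fun, mul_comm]
  have hlow : (k + 1) * (v ^ K) ^ n ≤ ∑ B : Fin n → Fin K → Fin v,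
      (univ.filter (fun p : (Fin t → Fin K) × (Fin t → Fin v) =>
        Function.Injective p.1 ∧ BadP B p.1 p.2)).card := by
    calc (k + 1) * (v ^ K) ^ n = ∑ _B : Fin n → Fin K → Fin v, (k+1) := by
          rw [Finset.sum_const, Finset.card_univ]
          simp [Fintype.card_fun, mul_comm, Fintype.card_pi]
      _ ≤ _ := Finset.sum_le_sum (fun B _ => hcon B)
  have hpos : 0 < (v ^ K) ^ n := by
    have : 0 < v := Nat.pos_of_ne_zero (NeZero.ne v)
    positivity
  nlinarith [hup, hlow, H, hpos]

lemma can_le {n t v k : ℕ} [NeZero v] (ht : 1 ≤ t) (htK : t ≤ 2 * k)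
    (H : (2*k) ^ t * v ^ t * (v ^ (2*k) - v ^ (2*k + 1 - t)) ^ n ≤ k * (v ^ (2*k)) ^ n) :
    CAN t k v ≤ v * n := by
  classical
  obtain ⟨B, hB⟩ := exists_fewbad (K := 2*k) (k := k) ht htK H
  set bad := univ.filter (fun p : (Fin t → Fin (2*k)) × (Fin t → Fin v) =>
    Function.Injective p.1 ∧ BadP B p.1 p.2) with hbad
  have i0 : Fin t := ⟨0, by omega⟩
  set D : Finset (Fin (2*k)) := bad.image (fun p => p.1 i0) with hDdef
  have hD : D.card ≤ k := le_trans (Finset.card_image_le) hB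
  have hcompl : k ≤ Dᶜ.card := by
    rw [Finset.card_compl, Fintype.card_fin]
    omega
  obtain ⟨S, hSsub, hScard⟩ := Finset.exists_subset_card_eq hcompl
  let e : Fin k ≃o {x // x ∈ S} := S.orderIsoOfFin hScard
  let emb : Fin k → Fin (2*k) := fun j => (e j : Fin (2*k))
  have hembinj : Function.Injective emb := by
    intro j j' hjj'
    exact e.injective (Subtype.ext hjj')
  let A : Fin (v*n) → Fin k → Fin v := fun s j =>
    B (finProdFinEquiv.symm s).2 (emb j) + (finProdFinEquiv.symm s).1
  have hCA : IsCoveringArray (v*n) t k v A := by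
    intro c hc a
    have hinj : Function.Injective (emb ∘ c) := hembinj.comp hc
    have hnotbad : ¬ BadP B (emb ∘ c) a := by
      intro hbadp
      have hp : ((emb ∘ c, a)) ∈ bad := by
        rw [hbad, Finset.mem_filter]
        exact ⟨Finset.mem_univ _, hinj, hbadp⟩
      have h1 : emb (c i0) ∈ D := by
        rw [hDdef]
        exact Finset.mem_image_of_mem (fun p => p.1 i0) hp
      have h2 : emb (c i0) ∈ Dᶜ := hSsub (e (c i0)).2
      rw [Finset.mem_compl] at h2
      exact h2 h1
    rw [BadP, not_not] at hnotbad
    obtain ⟨r, g, hrg⟩ := hnotbad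
    refine ⟨finProdFinEquiv (g, r), fun i => ?_⟩
    show B (finProdFinEquiv.symm (finProdFinEquiv (g, r))).2 (emb (c i))
        + (finProdFinEquiv.symm (finProdFinEquiv (g, r))).1 = a i
    rw [Equiv.symm_apply_apply]
    exact hrg i
  exact Nat.sInf_le ⟨A, hCA⟩

lemma can_le_real {n t v k : ℕ} [NeZero v] (ht : 2 ≤ t) (hv : 2 ≤ v) (htK : t ≤ 2*k)
    (H : ((2*k : ℕ) : ℝ) ^ t * (v:ℝ) ^ t * (1 - ((v:ℝ) ^ (t-1))⁻¹) ^ n ≤ (k:ℝ)) :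
    CAN t k v ≤ v * n := by
  apply can_le (le_trans one_le_two ht) htK
  have hv0 : (0:ℝ) < (v:ℝ) := by positivity
  have hsub : v ^ (2*k + 1 - t) ≤ v ^ (2*k) :=
    Nat.pow_le_pow_right (by omega) (by omega)
  have hqpow : (v:ℝ) ^ (2*k + 1 - t) * (v:ℝ) ^ (t-1) = (v:ℝ) ^ (2*k) := by
    rw [← pow_add]; congr 1; omega
  have hqne : ((v:ℝ) ^ (t-1)) ≠ 0 := by positivity
  have hkey : ((v ^ (2*k) - v ^ (2*k + 1 - t) : ℕ) : ℝ)
      = (v:ℝ) ^ (2*k) * (1 - ((v:ℝ) ^ (t-1))⁻¹) := by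
    rw [Nat.cast_sub hsub]
    push_cast
    field_simp
    linarith [hqpow]
  have main : ((2*k:ℕ):ℝ)^t * (v:ℝ)^t * ((v:ℝ)^(2*k) * (1 - ((v:ℝ)^(t-1))⁻¹))^n
      ≤ (k:ℝ) * ((v:ℝ)^(2*k))^n := by
    rw [mul_pow]
    calc ((2*k:ℕ):ℝ)^t * (v:ℝ)^t * (((v:ℝ)^(2*k))^n * (1 - ((v:ℝ)^(t-1))⁻¹)^n)
        = (((2*k:ℕ):ℝ)^t * (v:ℝ)^t * (1 - ((v:ℝ)^(t-1))⁻¹)^n) * ((v:ℝ)^(2*k))^n := by ring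
      _ ≤ (k:ℝ) * ((v:ℝ)^(2*k))^n := mul_le_mul_of_nonneg_right H (by positivity)
  rw [← Nat.cast_le (α := ℝ)]
  refine le_trans (le_of_eq ?_) (le_trans main (le_of_eq ?_)) <;> push_cast [hkey] <;> ring

lemma eventual_bound {t v : ℕ} [NeZero v] (ht : 2 ≤ t) (hv : 2 ≤ v) {k : ℕ}
    (hk : max t 3 ≤ k) :
    (CAN t k v : ℝ) / Real.log k ≤
      (v : ℝ) * ((t : ℝ) - 1) / Real.log ((v : ℝ) ^ (t - 1) / ((v : ℝ) ^ (t - 1) - 1)) +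
      ((v:ℝ) * ((t:ℝ) * Real.log 2 + (t:ℝ) * Real.log v) /
        Real.log ((v : ℝ) ^ (t - 1) / ((v : ℝ) ^ (t - 1) - 1)) + (v:ℝ)) / Real.log k := by
  have hkt : t ≤ k := le_trans (le_max_left _ _) hk
  have hk3 : 3 ≤ k := le_trans (le_max_right _ _) hk
  have hkr : (3:ℝ) ≤ (k:ℝ) := by exact_mod_cast hk3
  have hkr0 : (0:ℝ) < (k:ℝ) := by linarith
  set q : ℝ := (v:ℝ) ^ (t-1) with hqdef
  have hq2 : (2:ℝ) ≤ q := by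
    calc (2:ℝ) = 2 ^ 1 := (pow_one 2).symm
      _ ≤ (2:ℝ) ^ (t-1) := pow_le_pow_right₀ one_le_two (by omega)
      _ ≤ (v:ℝ) ^ (t-1) := by
          apply pow_le_pow_left₀ (by norm_num)
          exact_mod_cast hv
  set L : ℝ := Real.log (q / (q - 1)) with hLdef
  have hq1 : (0:ℝ) < q - 1 := by linarith
  have hL : 0 < L := Real.log_pos (by rw [lt_div_iff₀ hq1]; linarith)
  have hexp : 1 - q⁻¹ = Real.exp (-L) := by
    rw [hLdef, Real.exp_neg, Real.exp_log (by positivity)]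
    field_simp
  have hq5 : (0:ℝ) < 1 - q⁻¹ := by rw [hexp]; positivity
  set R : ℝ := (t:ℝ) * Real.log (2*k) + (t:ℝ) * Real.log v - Real.log k with hRdef
  have hlogk : (0:ℝ) < Real.log k := Real.log_pos (by linarith)
  have hlog2k : Real.log k ≤ Real.log (2*(k:ℝ)) :=
    Real.log_le_log (by positivity) (by linarith)
  have htr : (2:ℝ) ≤ (t:ℝ) := by exact_mod_cast ht
  have hR0 : 0 ≤ R := by
    have h1 : Real.log (2*(k:ℝ)) ≤ (t:ℝ) * Real.log (2*k) := by
      nlinarith [Real.log_nonneg (by linarith : (1:ℝ) ≤ 2*(k:ℝ))]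
    have h2 : 0 ≤ (t:ℝ) * Real.log v := by
      apply mul_nonneg (by positivity)
      apply Real.log_nonneg
      exact_mod_cast by omega
    rw [hRdef]; linarith
  set n : ℕ := ⌈R / L⌉₊ with hndef
  have hnL : R ≤ (n:ℝ) * L := by
    have := Nat.le_ceil (R / L)
    rw [div_le_iff₀ hL] at this
    exact this
  have hH : ((2*k : ℕ) : ℝ) ^ t * (v:ℝ) ^ t * (1 - q⁻¹) ^ n ≤ (k:ℝ) := by
    have h2k : (0:ℝ) < ((2*k:ℕ):ℝ) := by positivity
    have hLHSpos : 0 < ((2*k : ℕ) : ℝ) ^ t * (v:ℝ) ^ t * (1 - q⁻¹) ^ n := by positivity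
    rw [← Real.log_le_log_iff hLHSpos hkr0]
    rw [Real.log_mul (by positivity) (by positivity), Real.log_mul (by positivity) (by positivity)]
    rw [Real.log_pow, Real.log_pow, Real.log_pow]
    rw [hexp, Real.log_exp]
    have hcast : ((2*k : ℕ) : ℝ) = 2*(k:ℝ) := by push_cast; ring
    rw [hcast]
    have hneg : (n:ℝ) * (-L) = -((n:ℝ)*L) := by ring
    rw [hneg]
    rw [hRdef] at hnL
    linarith
  have hcan := can_le_real ht hv (by omega) hH
  have hcanr : (CAN t k v : ℝ) ≤ (v:ℝ) * (n:ℝ) := by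
    calc (CAN t k v : ℝ) ≤ ((v * n : ℕ) : ℝ) := by exact_mod_cast hcan
      _ = (v:ℝ) * (n:ℝ) := by push_cast; ring
  have hnlt : (n:ℝ) < R / L + 1 := Nat.ceil_lt_add_one (by positivity)
  have hvpos : (0:ℝ) < v := by positivity
  have h6 : (CAN t k v : ℝ) ≤ (v:ℝ) * (R/L + 1) :=
    hcanr.trans (mul_le_mul_of_nonneg_left hnlt.le hvpos.le)
  have hRL : R = ((t:ℝ) - 1) * Real.log k + ((t:ℝ) * Real.log 2 + (t:ℝ) * Real.log v) := by
    rw [hRdef]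
    have : Real.log (2*(k:ℝ)) = Real.log 2 + Real.log k :=
      Real.log_mul (by norm_num) (by positivity)
    rw [this]; ring
  have hlogne := hlogk.ne'
  have hLne := hL.ne'
  calc (CAN t k v : ℝ) / Real.log k ≤ ((v:ℝ) * (R / L + 1)) / Real.log k :=
        (div_le_div_iff_of_pos_right hlogk).mpr h6
    _ = _ := by rw [hRL]; field_simp; ring

theorem cyclic_group_lll_bound (t v : ℕ) (ht : 2 ≤ t) (hv : 2 ≤ v) :
    Filter.limsup (fun k : ℕ => (CAN t k v : ℝ) / Real.log k) Filter.atTop ≤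
      (v : ℝ) * ((t : ℝ) - 1) /
        Real.log ((v : ℝ) ^ (t - 1) / ((v : ℝ) ^ (t - 1) - 1)) := by
  haveI : NeZero v := ⟨by omega⟩
  set L : ℝ := Real.log ((v : ℝ) ^ (t - 1) / ((v : ℝ) ^ (t - 1) - 1)) with hLdef
  set tgt : ℝ := (v : ℝ) * ((t : ℝ) - 1) / L with htgt
  set C : ℝ := (v:ℝ) * ((t:ℝ) * Real.log 2 + (t:ℝ) * Real.log v) / L + (v:ℝ) with hC
  set g : ℕ → ℝ := fun k => tgt + C / Real.log k with hg
  have hev : ∀ᶠ k in atTop, (CAN t k v : ℝ) / Real.log k ≤ g k := by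
    filter_upwards [eventually_ge_atTop (max t 3)] with k hk
    exact eventual_bound ht hv hk
  have htend : Tendsto g atTop (nhds tgt) := by
    have h1 : Tendsto (fun k : ℕ => Real.log k) atTop atTop :=
      Real.tendsto_log_atTop.comp tendsto_natCast_atTop_atTop
    have h2 : Tendsto (fun k : ℕ => (Real.log k)⁻¹) atTop (nhds 0) := h1.inv_tendsto_atTop
    have h3 : Tendsto (fun k : ℕ => C / Real.log k) atTop (nhds 0) := by
      simpa [div_eq_mul_inv] using h2.const_mul C
    simpa using tendsto_const_nhds.add h3
  have hb : IsBoundedUnder (· ≤ ·) atTop g := htend.isBoundedUnder_le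
  have hcb : IsCoboundedUnder (· ≤ ·) atTop (fun k : ℕ => (CAN t k v : ℝ) / Real.log k) := by
    apply isCoboundedUnder_le_of_le (x := 0) atTop
    intro k
    apply div_nonneg (by positivity)
    rcases Nat.eq_zero_or_pos k with h | h
    · simp [h]
    · exact Real.log_natCast_nonneg k
  calc Filter.limsup (fun k : ℕ => (CAN t k v : ℝ) / Real.log k) atTop
      ≤ Filter.limsup g atTop := Filter.limsup_le_limsup hev hcb hb
    _ = tgt := htend.limsup_eq
end

section
/- Let t ≥ 2 be a fixed integer and v a fixed prime power with v ≥ 2. Then d(t,v) = limsup_{k→∞} CAN(t,k,v)/log k ≤ v(v−1)(t − 1) / log(v^{t−1}/(v^{t−1} − v + 1)). -/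
open Finset


lemma orbit_count {F : Type} [Field F] [Fintype F] [DecidableEq F] {t : ℕ} (τ : Fin t → F)
    (hτ : ∃ i j, τ i ≠ τ j) :
    (Finset.univ.filter (fun w : Fin t → F => ∃ a b : F, a ≠ 0 ∧ ∀ i, a * w i + b = τ i)).card
      = Fintype.card F * (Fintype.card F - 1) := by
  have hset : (Finset.univ.filter (fun w : Fin t → F => ∃ a b : F, a ≠ 0 ∧ ∀ i, a * w i + b = τ i))
      = ((Finset.univ.filter (fun a : F => a ≠ 0)) ×ˢ Finset.univ).image
          (fun p : F × F => fun i => p.1⁻¹ * (τ i - p.2)) := by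
    ext w
    simp only [mem_filter, mem_image, mem_product, mem_univ, true_and, and_true]
    constructor
    · rintro ⟨a, b, ha, hab⟩
      refine ⟨(a, b), ha, ?_⟩
      funext i
      have h := hab i
      rw [inv_mul_eq_div, div_eq_iff ha]
      linear_combination -h
    · rintro ⟨⟨a, b⟩, ha, rfl⟩
      exact ⟨a, b, ha, fun i => by field_simp; ring⟩
  have hcf : (Finset.univ.filter (fun a : F => a ≠ 0)) = Finset.univ.erase 0 := by
    rw [← Finset.filter_ne']
  rw [hset, Finset.card_image_of_injOn, Finset.card_product, hcf,
    Finset.card_erase_of_mem (Finset.mem_univ _), Finset.card_univ, mul_comm]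
  rintro ⟨a, b⟩ hab ⟨a', b'⟩ hab' heq
  simp only [Finset.mem_coe, mem_product, mem_filter, mem_univ, true_and, and_true] at hab hab'
  have key : ∀ i, a⁻¹ * (τ i - b) = a'⁻¹ * (τ i - b') := fun i => congrFun heq i
  have haa : a = a' := by
    by_contra hne
    have hne' : a⁻¹ - a'⁻¹ ≠ 0 := by
      intro h
      exact hne (inv_injective (sub_eq_zero.mp h))
    obtain ⟨i, j, hij⟩ := hτ
    have hconst : ∀ i, τ i = (a⁻¹ - a'⁻¹)⁻¹ * (a⁻¹ * b - a'⁻¹ * b') := by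
      intro i
      rw [inv_mul_eq_div, eq_div_iff hne']
      linear_combination key i
    exact hij ((hconst i).trans (hconst j).symm)
  subst haa
  obtain ⟨i, -, -⟩ := hτ
  have hb : b = b' := by
    have h2 := mul_left_cancel₀ (inv_ne_zero hab) (key i)
    linear_combination -h2
  simp [hb]


lemma fiber_count {F : Type} [Fintype F] [DecidableEq F] {t K : ℕ}
    (c : Fin t → Fin K) (hc : Function.Injective c) (q : (Fin t → F) → Prop) [DecidablePred q] :
    (Finset.univ.filter (fun y : Fin K → F => q (y ∘ c))).card
      = (Finset.univ.filter q).card * Fintype.card F ^ (K - t) := by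
  classical
  have hbij : Function.Bijective (fun y : {y : Fin K → F // q (y ∘ c)} =>
      ((⟨y.1 ∘ c, y.2⟩, fun j => y.1 j.1) :
        {w : Fin t → F // q w} × ({j : Fin K // j ∉ Set.range c} → F))) := by
    constructor
    · rintro ⟨y, hy⟩ ⟨y', hy'⟩ h
      simp only [Prod.mk.injEq, Subtype.mk.injEq] at h
      ext j
      by_cases hj : j ∈ Set.range c
      · obtain ⟨i, rfl⟩ := hj
        exact congrFun h.1 i
      · exact congrFun h.2 ⟨j, hj⟩
    · rintro ⟨⟨w, hw⟩, z⟩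
      set y : Fin K → F := fun j => if h : ∃ i, c i = j then w h.choose else
        z ⟨j, fun hr => absurd hr h⟩ with hy
      have hyc : y ∘ c = w := by
        funext i
        have hex : ∃ i', c i' = c i := ⟨i, rfl⟩
        simp only [hy, Function.comp_apply, dif_pos hex]
        exact congrArg w (hc hex.choose_spec)
      refine ⟨⟨y, by rw [hyc]; exact hw⟩, ?_⟩
      refine Prod.ext (Subtype.ext hyc) ?_
      funext j
      rcases j with ⟨j, hj⟩
      have h : ¬∃ i, c i = j := fun hex => hj hex
      simp only [hy, dif_neg h]
  have h1 := Fintype.card_congr (Equiv.ofBijective _ hbij)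
  rw [Fintype.card_subtype, Fintype.card_prod, Fintype.card_subtype] at h1
  rw [h1, Fintype.card_fun]
  congr 2
  rw [Fintype.card_subtype_compl]
  congr 1
  · exact Fintype.card_fin K
  · have : Fintype.card {j : Fin K // j ∈ Set.range c} = Fintype.card (Set.range c) := rfl
    rw [this, Set.card_range_of_injective hc, Fintype.card_fin]

lemma pi_count {α : Type} [Fintype α] [DecidableEq α] {n : ℕ} (p : α → Prop) [DecidablePred p] :
    (Finset.univ.filter (fun x : Fin n → α => ∀ j, p (x j))).card
      = (Finset.univ.filter p).card ^ n := by
  classical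
  have h1 := Fintype.card_congr (Equiv.subtypePiEquivPi (p := fun _ : Fin n => p))
  rw [Fintype.card_subtype, Fintype.card_pi] at h1
  rw [h1, Finset.prod_const, Finset.card_univ, Fintype.card_fin, Fintype.card_subtype]

lemma W_facts {t v : ℕ} (ht : 2 ≤ t) (hv : 2 ≤ v) :
    v ≤ v^t - v*(v-1) ∧ v*(v-1) ≤ v^t ∧ v^t - v*(v-1) < v^t := by
  have h2 : v^2 ≤ v^t := Nat.pow_le_pow_right (by omega) ht
  have h3 : v * (v - 1) = v * v - v := by
    rcases Nat.exists_eq_add_of_le hv with ⟨w, rfl⟩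
    simp [Nat.mul_sub, Nat.add_mul, Nat.mul_add]
    ring_nf
    omega
  have h4 : v ^ 2 = v * v := sq v
  have hv1 : 1 ≤ v * (v-1) := by
    have : 1 ≤ v - 1 := by omega
    calc 1 = 1 * 1 := by ring
    _ ≤ v * (v-1) := Nat.mul_le_mul (by omega) this
  refine ⟨?_, ?_, ?_⟩ <;> omega


lemma core {F : Type} [Field F] [Fintype F] [DecidableEq F] {t v k n : ℕ}
    (ht : 2 ≤ t) (hv : 2 ≤ v) (hk : t ≤ k) (hF : Fintype.card F = v)
    (hn : (2*k)^t * v^t * ((v^t - v*(v-1)))^n ≤ k * (v^t)^n) :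
    ∃ A : Fin (n*(v*(v-1)) + v) → Fin k → F, ∀ c : Fin t → Fin k, Function.Injective c →
      ∀ a : Fin t → F, ∃ r, ∀ i, A r (c i) = a i := by
  classical
  set K := 2 * k with hK
  have hk1 : 1 ≤ k := by omega
  have htK : t ≤ K := by omega
  have ht0 : 0 < t := by omega
  have hvpos : 0 < v := by omega
  haveI : Nonempty F := Fintype.card_pos_iff.mp (by rw [hF]; omega)
  set Cov : (Fin t → F) → (Fin t → F) → Prop :=
    fun y τ => ∃ a b : F, a ≠ 0 ∧ ∀ i, a * y i + b = τ i with hCov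
  set Bad : ((Fin t → Fin K) × (Fin t → F)) → (Fin n → Fin K → F) → Prop :=
    fun p x => Function.Injective p.1 ∧ (∃ i j, p.2 i ≠ p.2 j) ∧
      ∀ j, ¬ Cov (x j ∘ p.1) p.2 with hBad
  have hcardfun : (Fintype.card (Fin n → Fin K → F)) = (v ^ K) ^ n := by
    rw [Fintype.card_fun, Fintype.card_fun, hF, Fintype.card_fin, Fintype.card_fin]
  -- per-interaction count
  have hper : ∀ p : (Fin t → Fin K) × (Fin t → F),
      (Finset.univ.filter (fun x : Fin n → Fin K → F => Bad p x)).card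
        ≤ ((v^t - v*(v-1)) * v^(K-t))^n := by
    intro p
    by_cases hp : Function.Injective p.1 ∧ (∃ i j, p.2 i ≠ p.2 j)
    · have heq : (Finset.univ.filter (fun x : Fin n → Fin K → F => Bad p x))
          = (Finset.univ.filter (fun x : Fin n → Fin K → F =>
              ∀ j, ¬ Cov (x j ∘ p.1) p.2)) := by
        apply Finset.filter_congr
        rintro x -
        rw [hBad]
        exact ⟨fun h => h.2.2, fun h => ⟨hp.1, hp.2, h⟩⟩
      rw [heq]
      have hpc : (Finset.univ.filter (fun x : Fin n → Fin K → F =>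
            ∀ j, ¬ Cov (x j ∘ p.1) p.2)).card
          = ((Finset.univ.filter (fun y : Fin K → F => ¬ Cov (y ∘ p.1) p.2)).card)^n :=
        pi_count (fun y : Fin K → F => ¬ Cov (y ∘ p.1) p.2)
      rw [hpc]
      apply Nat.pow_le_pow_left
      have hnot : (Finset.univ.filter (fun y : Fin K → F => ¬ Cov (y ∘ p.1) p.2))
          = Finset.univ \ (Finset.univ.filter (fun y : Fin K → F => Cov (y ∘ p.1) p.2)) :=
        Finset.filter_not _ _
      rw [hnot, Finset.card_sdiff_of_subset (Finset.filter_subset _ _)]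
      rw [fiber_count p.1 hp.1 (fun w => Cov w p.2)]
      have horb : (Finset.univ.filter (fun w : Fin t → F => Cov w p.2)).card
          = Fintype.card F * (Fintype.card F - 1) := orbit_count p.2 hp.2
      rw [horb, hF]
      have hcu : (Finset.univ : Finset (Fin K → F)).card = v ^ K := by
        rw [Finset.card_univ, Fintype.card_fun, hF, Fintype.card_fin]
      rw [hcu, Nat.sub_mul]
      have hvk : v ^ t * v ^ (K - t) = v ^ K := by
        rw [← pow_add, Nat.add_sub_cancel' htK]
      rw [hvk]
    · have hemp : (Finset.univ.filter (fun x : Fin n → Fin K → F => Bad p x)) = ∅ := by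
        apply Finset.filter_false_of_mem
        rintro x -
        rw [hBad]
        rintro ⟨h1, h2, -⟩
        exact hp ⟨h1, h2⟩
      rw [hemp]
      simp
  -- sum bound
  have hsum : ∑ x : Fin n → Fin K → F,
      (Finset.univ.filter (fun p : (Fin t → Fin K) × (Fin t → F) => Bad p x)).card
      ≤ (v ^ K) ^ n * k := by
    have h1 : ∑ x : Fin n → Fin K → F,
        (Finset.univ.filter (fun p : (Fin t → Fin K) × (Fin t → F) => Bad p x)).card
        = ∑ p : (Fin t → Fin K) × (Fin t → F),
            (Finset.univ.filter (fun x : Fin n → Fin K → F => Bad p x)).card := by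
      simp only [Finset.card_filter]
      exact Finset.sum_comm
    rw [h1]
    have h2 : ∑ p : (Fin t → Fin K) × (Fin t → F),
        (Finset.univ.filter (fun x : Fin n → Fin K → F => Bad p x)).card
        ≤ (K^t * v^t) * ((v^t - v*(v-1)) * v^(K-t))^n := by
      calc ∑ p : (Fin t → Fin K) × (Fin t → F),
          (Finset.univ.filter (fun x : Fin n → Fin K → F => Bad p x)).card
          ≤ ∑ _p : (Fin t → Fin K) × (Fin t → F), ((v^t - v*(v-1)) * v^(K-t))^n :=
            Finset.sum_le_sum (fun p _ => hper p)
        _ = (K^t * v^t) * ((v^t - v*(v-1)) * v^(K-t))^n := by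
            rw [Finset.sum_const, smul_eq_mul, Finset.card_univ]
            congr 1
            rw [Fintype.card_prod, Fintype.card_fun, Fintype.card_fun, hF]
            simp
    refine le_trans h2 ?_
    have h3 : (K^t * v^t) * ((v^t - v*(v-1)) * v^(K-t))^n
        = ((2*k)^t * v^t * ((v^t - v*(v-1)))^n) * (v^(K-t))^n := by
      rw [mul_pow]; ring
    rw [h3]
    refine le_trans (Nat.mul_le_mul_right _ hn) (le_of_eq ?_)
    rw [mul_assoc, ← mul_pow, ← pow_add, Nat.add_sub_cancel' htK, mul_comm]
  -- pigeonhole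
  have hex : ∃ x : Fin n → Fin K → F,
      (Finset.univ.filter (fun p : (Fin t → Fin K) × (Fin t → F) => Bad p x)).card ≤ k := by
    have huniv : (Finset.univ : Finset (Fin n → Fin K → F)).Nonempty := Finset.univ_nonempty
    obtain ⟨x, -, hx⟩ := Finset.exists_le_of_sum_le (g := fun _ => k) huniv (by
      refine le_trans hsum (le_of_eq ?_)
      rw [Finset.sum_const, smul_eq_mul, Finset.card_univ, hcardfun])
    exact ⟨x, hx⟩
  obtain ⟨x, hx⟩ := hex
  set U := Finset.univ.filter (fun p : (Fin t → Fin K) × (Fin t → F) => Bad p x) with hU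
  set D := U.image (fun p => p.1 ⟨0, ht0⟩) with hD
  have hDcard : D.card ≤ k := le_trans (Finset.card_image_le) hx
  have hGood : k ≤ Dᶜ.card := by
    rw [Finset.card_compl, Fintype.card_fin]
    omega
  obtain ⟨S, hSsub, hScard⟩ := Finset.exists_subset_card_eq hGood
  set emb : Fin k → Fin K := fun i => (S.orderIsoOfFin hScard i : Fin K) with hemb
  have hembinj : Function.Injective emb := by
    intro i j hij
    exact (S.orderIsoOfFin hScard).injective (Subtype.ext hij)
  have hembS : ∀ i, emb i ∈ S := fun i => (S.orderIsoOfFin hScard i).2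
  -- the array
  set N := n*(v*(v-1)) + v with hN
  have hcardR : Fintype.card ((Fin n × ({a : F // a ≠ 0} × F)) ⊕ F) = N := by
    rw [Fintype.card_sum, Fintype.card_prod, Fintype.card_prod, Fintype.card_fin, hF]
    have : Fintype.card {a : F // a ≠ 0} = v - 1 := by
      rw [Fintype.card_subtype_compl, Fintype.card_subtype_eq, hF]
    rw [this, hN]
    ring_nf
  set σ : Fin N ≃ ((Fin n × ({a : F // a ≠ 0} × F)) ⊕ F) :=
    (Fintype.equivFinOfCardEq hcardR).symm with hσ
  refine ⟨fun r j => Sum.elim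
      (fun q : Fin n × ({a : F // a ≠ 0} × F) => q.2.1.1 * x q.1 (emb j) + q.2.2)
      (fun b => b) (σ r), ?_⟩
  intro c hc τ
  by_cases hconst : ∀ i, τ i = τ ⟨0, ht0⟩
  · refine ⟨σ.symm (Sum.inr (τ ⟨0, ht0⟩)), ?_⟩
    intro i
    simp only [Equiv.apply_symm_apply, Sum.elim_inr]
    exact (hconst i).symm
  · push_neg at hconst
    obtain ⟨i0, hi0⟩ := hconst
    have hNC : ∃ i j, τ i ≠ τ j := ⟨i0, ⟨0, ht0⟩, hi0⟩
    set cK : Fin t → Fin K := fun i => emb (c i) with hcK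
    have hcKinj : Function.Injective cK := fun i j h => hc (hembinj h)
    have hpU : ((cK, τ) : (Fin t → Fin K) × (Fin t → F)) ∉ U := by
      intro hmem
      have : cK ⟨0, ht0⟩ ∈ D := Finset.mem_image.mpr ⟨(cK, τ), hmem, rfl⟩
      have hS0 : cK ⟨0, ht0⟩ ∈ S := hembS _
      have : cK ⟨0, ht0⟩ ∈ Dᶜ := hSsub hS0
      simp only [Finset.mem_compl] at this
      exact this (Finset.mem_image.mpr ⟨(cK, τ), hmem, rfl⟩)
    have hnbad : ¬ Bad (cK, τ) x := by
      intro hb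
      exact hpU (Finset.mem_filter.mpr ⟨Finset.mem_univ _, hb⟩)
    rw [hBad] at hnbad
    simp only [not_and] at hnbad
    have := hnbad hcKinj hNC
    push_neg at this
    obtain ⟨j, hcov⟩ := this
    rw [hCov] at hcov
    obtain ⟨a, b, ha, hab⟩ := hcov
    refine ⟨σ.symm (Sum.inl (j, (⟨a, ha⟩, b))), ?_⟩
    intro i
    simp only [Equiv.apply_symm_apply, Sum.elim_inl]
    exact hab i

lemma CAN_le_s15 {t v k n : ℕ} (ht : 2 ≤ t) (hv : 2 ≤ v) (hpp : IsPrimePow v) (hk : t ≤ k)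
    (hn : (2*k)^t * v^t * ((v^t - v*(v-1)))^n ≤ k * (v^t)^n) :
    CAN t k v ≤ n*(v*(v-1)) + v := by
  obtain ⟨p, m, hp, hm, hpm⟩ := hpp
  haveI : Fact (Nat.Prime p) := Fact.mk hp.nat_prime
  haveI : Fintype (GaloisField p m) := Fintype.ofFinite _
  haveI : DecidableEq (GaloisField p m) := Classical.decEq _
  have hcard : Fintype.card (GaloisField p m) = v := by
    rw [← Nat.card_eq_fintype_card, GaloisField.card p m (by omega), hpm]
  obtain ⟨A, hA⟩ := core ht hv hk hcard hn
  set φ : GaloisField p m ≃ Fin v := Fintype.equivFinOfCardEq hcard with hφ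
  apply Nat.sInf_le
  refine ⟨fun r j => φ (A r j), ?_⟩
  intro c hc a
  obtain ⟨r, hr⟩ := hA c hc (fun i => φ.symm (a i))
  exact ⟨r, fun i => by show φ (A r (c i)) = a i; rw [hr i, Equiv.apply_symm_apply]⟩

lemma numeric {t v k n : ℕ} (ht : 2 ≤ t) (hv : 2 ≤ v) (hk1 : 1 ≤ k)
    (hnge : ((t:ℝ) * Real.log (2*(k:ℝ)) + t * Real.log v - Real.log k)
      ≤ n * (Real.log ((v:ℝ)^t) - Real.log ((v^t - v*(v-1) : ℕ) : ℝ))) :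
    (2*k)^t * v^t * ((v^t - v*(v-1)))^n ≤ k * (v^t)^n := by
  obtain ⟨hWv, hWle, hWlt⟩ := W_facts ht hv
  have hWpos : (0:ℝ) < ((v^t - v*(v-1) : ℕ) : ℝ) := by
    have : 0 < v^t - v*(v-1) := by omega
    exact_mod_cast this
  have hvpos : (0:ℝ) < (v:ℝ) := by positivity
  have hkpos : (0:ℝ) < (k:ℝ) := by exact_mod_cast hk1
  rw [← Nat.cast_le (α := ℝ)]
  push_cast
  have hL : (0:ℝ) < (2*(k:ℝ))^t * (v:ℝ)^t * ((v^t - v*(v-1) : ℕ) : ℝ)^n := by positivity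
  have hR : (0:ℝ) < (k:ℝ) * ((v:ℝ)^t)^n := by positivity
  rw [← Real.log_le_log_iff hL hR]
  rw [Real.log_mul (by positivity) (by positivity), Real.log_mul (by positivity) (by positivity),
    Real.log_mul (by positivity) (by positivity), Real.log_pow, Real.log_pow, Real.log_pow,
    Real.log_pow]
  simp only [Real.log_pow] at hnge ⊢
  linarith [hnge]


open Filter in
theorem frobenius_lll_bound (t v : ℕ) (ht : 2 ≤ t) (hv : 2 ≤ v)
    (hpp : IsPrimePow v) :
    Filter.limsup (fun k : ℕ => (CAN t k v : ℝ) / Real.log k) Filter.atTop ≤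
      (v : ℝ) * ((v : ℝ) - 1) * ((t : ℝ) - 1) /
        Real.log ((v : ℝ) ^ (t - 1) / ((v : ℝ) ^ (t - 1) - (v : ℝ) + 1)) := by
  obtain ⟨hWv, hWle, hWlt⟩ := W_facts ht hv
  have hvR : (2:ℝ) ≤ (v:ℝ) := by exact_mod_cast hv
  have htR : (2:ℝ) ≤ (t:ℝ) := by exact_mod_cast ht
  have hWpos : (0:ℝ) < ((v^t - v*(v-1) : ℕ) : ℝ) := by
    have : 0 < v^t - v*(v-1) := by omega
    exact_mod_cast this
  set L : ℝ := Real.log ((v:ℝ)^t) - Real.log ((v^t - v*(v-1) : ℕ) : ℝ) with hLdef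
  have hL : 0 < L := by
    rw [hLdef]
    have hlt : ((v^t - v*(v-1) : ℕ) : ℝ) < (v:ℝ)^t := by
      have : ((v^t : ℕ) : ℝ) = (v:ℝ)^t := by push_cast; ring
      rw [← this]
      exact_mod_cast hWlt
    linarith [Real.log_lt_log hWpos hlt]
  set c₀ : ℝ := t*Real.log 2 + t*Real.log v with hc0
  have hc0nn : 0 ≤ c₀ := by
    have h2 : 0 ≤ Real.log 2 := Real.log_nonneg (by norm_num)
    have h3 : 0 ≤ Real.log v := Real.log_nonneg (by linarith)
    have : (0:ℝ) ≤ t := by positivity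
    rw [hc0]; positivity
  set C : ℝ := (v:ℝ)*((v:ℝ)-1)*((t:ℝ)-1)/L with hC
  set M : ℝ := (v:ℝ)*((v:ℝ)-1)*c₀/L + (v:ℝ)*((v:ℝ)-1) + v with hM
  have hvv1 : (0:ℝ) ≤ (v:ℝ)*((v:ℝ)-1) := by nlinarith
  have hev : ∀ᶠ k : ℕ in atTop, (CAN t k v : ℝ)/Real.log k ≤ C + M/Real.log k := by
    filter_upwards [Filter.eventually_ge_atTop (t+1)] with k hkt
    have hk1 : 1 ≤ k := by omega
    have hkt' : t ≤ k := by omega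
    have hkR : (1:ℝ) < (k:ℝ) := by exact_mod_cast (show 1 < k by omega)
    have hlogk : 0 < Real.log k := Real.log_pos hkR
    set num : ℝ := (t:ℝ)*Real.log (2*(k:ℝ)) + t*Real.log v - Real.log k with hnum
    have hnum_eq : num = ((t:ℝ)-1)*Real.log k + c₀ := by
      rw [hnum, hc0, Real.log_mul two_ne_zero (by positivity)]
      ring
    have hnum_nn : 0 ≤ num := by
      rw [hnum_eq]
      have h1 : 0 ≤ Real.log k := by linarith
      nlinarith
    set n := ⌈num/L⌉₊ with hn
    have hnge : num ≤ (n:ℝ)*L := by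
      have h := Nat.le_ceil (num/L)
      rw [div_le_iff₀ hL] at h
      exact h
    have hCANle := CAN_le_s15 ht hv hpp hkt' (numeric ht hv hk1 hnge)
    have hnle : (n:ℝ) ≤ num/L + 1 := le_of_lt (Nat.ceil_lt_add_one (by positivity))
    have h1 : (CAN t k v : ℝ) ≤ (n:ℝ)*((v:ℝ)*((v:ℝ)-1)) + v := by
      have hc := (Nat.cast_le (α := ℝ)).mpr hCANle
      have hcast : ((n*(v*(v-1)) + v : ℕ):ℝ) = (n:ℝ)*((v:ℝ)*((v:ℝ)-1)) + v := by
        push_cast [Nat.cast_sub (show 1 ≤ v by omega)]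
        ring
      rw [hcast] at hc
      exact hc
    have h2 : (CAN t k v : ℝ) ≤ C*Real.log k + M := by
      refine le_trans h1 ?_
      have hstep : (n:ℝ)*((v:ℝ)*((v:ℝ)-1)) ≤ (num/L + 1)*((v:ℝ)*((v:ℝ)-1)) :=
        mul_le_mul_of_nonneg_right hnle hvv1
      have heq : (num/L + 1)*((v:ℝ)*((v:ℝ)-1)) + v = C*Real.log k + M := by
        rw [hnum_eq, hC, hM]
        field_simp
        ring
      rw [← heq]
      linarith [hstep]
    have h3 : (CAN t k v : ℝ)/Real.log k ≤ (C*Real.log k + M)/Real.log k := by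
      gcongr
    refine le_trans h3 (le_of_eq ?_)
    field_simp
  have htend : Tendsto (fun k : ℕ => C + M/Real.log k) atTop (nhds C) := by
    have h0 : Tendsto (fun k : ℕ => M/Real.log k) atTop (nhds 0) :=
      Filter.Tendsto.div_atTop tendsto_const_nhds
        (Real.tendsto_log_atTop.comp tendsto_natCast_atTop_atTop)
    simpa using tendsto_const_nhds.add h0
  have hcb : IsCoboundedUnder (· ≤ ·) atTop (fun k : ℕ => (CAN t k v:ℝ)/Real.log k) := by
    apply Filter.IsCoboundedUnder.of_frequently_ge (a := 0)
    apply Filter.Eventually.frequently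
    filter_upwards [Filter.eventually_ge_atTop 1] with k hk
    exact div_nonneg (Nat.cast_nonneg _) (Real.log_nonneg (by exact_mod_cast hk))
  have hls : Filter.limsup (fun k : ℕ => (CAN t k v : ℝ) / Real.log k) Filter.atTop ≤ C :=
    le_trans (Filter.limsup_le_limsup hev hcb htend.isBoundedUnder_le)
      (le_of_eq htend.limsup_eq)
  refine le_trans hls (le_of_eq ?_)
  have hpowv : (v:ℝ) ≤ (v:ℝ)^(t-1) := by
    calc (v:ℝ) = (v:ℝ)^1 := (pow_one _).symm
    _ ≤ (v:ℝ)^(t-1) := pow_le_pow_right₀ (by linarith) (by omega)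
  have hd2 : (0:ℝ) < (v:ℝ)^(t-1) - v + 1 := by linarith
  have hvt : (v:ℝ)^t = (v:ℝ)^(t-1)*v := by
    conv_lhs => rw [show t = (t-1)+1 by omega]
    rw [pow_succ]
  have hWcast : ((v^t - v*(v-1) : ℕ):ℝ) = (v:ℝ)*((v:ℝ)^(t-1) - v + 1) := by
    rw [Nat.cast_sub hWle]
    push_cast [Nat.cast_sub (show 1 ≤ v by omega)]
    rw [hvt]
    ring
  have hdenom : Real.log ((v:ℝ)^(t-1)/((v:ℝ)^(t-1) - (v:ℝ) + 1)) = L := by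
    rw [Real.log_div (by positivity) (ne_of_gt hd2), hLdef, hWcast,
      Real.log_mul (by positivity) (ne_of_gt hd2), hvt,
      Real.log_mul (by positivity) (by positivity)]
    ring
  rw [hC, ← hdenom]
end

section
/- For all integers t ≥ 2 and v ≥ 2, v·log(v^t/(v^t − 1)) < log(v^{t−1}/(v^{t−1} − 1)); equivalently, (1 − 1/v^t)^v > 1 − 1/v^{t−1}. Consequently v(t−1)/log(v^{t−1}/(v^{t−1} − 1)) < (t−1)/log(v^t/(v^t − 1)), i.e., the group-action bound is strictly tighter than the Godbole–Skipper–Sunley bound. -/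
lemma bern_strict (a : ℝ) (ha0 : 0 < a) (ha1 : a < 1) {v : ℕ} (hv : 2 ≤ v) :
    1 - (v : ℝ) * a < (1 - a) ^ v := by
  have h1 : 1 ≤ v := by omega
  have hb : 1 + ((v - 1 : ℕ) : ℝ) * (-a) ≤ (1 + (-a)) ^ (v - 1) :=
    one_add_mul_le_pow (by linarith) _
  have hc : ((v - 1 : ℕ) : ℝ) = (v : ℝ) - 1 := by
    push_cast [Nat.cast_sub h1]; ring
  have hpow : (1 - a) ^ v = (1 - a) ^ (v - 1) * (1 - a) := by
    rw [← pow_succ]; congr 1; omega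
  rw [hc] at hb
  have hb' : 1 + ((v : ℝ) - 1) * (-a) ≤ (1 - a) ^ (v - 1) := by
    rw [sub_eq_add_neg]; exact hb
  have hvr : (2 : ℝ) ≤ (v : ℝ) := by exact_mod_cast hv
  have hm := mul_le_mul_of_nonneg_right hb' (by linarith : (0:ℝ) ≤ 1 - a)
  nlinarith [sq_nonneg a, mul_pos ha0 ha0]

theorem group_action_bound_tighter (t v : ℕ) (ht : 2 ≤ t) (hv : 2 ≤ v) :
    (v : ℝ) * Real.log ((v : ℝ) ^ t / ((v : ℝ) ^ t - 1)) <
        Real.log ((v : ℝ) ^ (t - 1) / ((v : ℝ) ^ (t - 1) - 1)) ∧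
    (1 - 1 / (v : ℝ) ^ t) ^ v > 1 - 1 / (v : ℝ) ^ (t - 1) ∧
    (v : ℝ) * ((t : ℝ) - 1) /
        Real.log ((v : ℝ) ^ (t - 1) / ((v : ℝ) ^ (t - 1) - 1)) <
      ((t : ℝ) - 1) / Real.log ((v : ℝ) ^ t / ((v : ℝ) ^ t - 1)) := by
  set V : ℝ := (v : ℝ) with hVdef
  have hV : (2 : ℝ) ≤ V := by rw [hVdef]; exact_mod_cast hv
  set y : ℝ := V ^ (t - 1) with hydef
  set x : ℝ := V ^ t with hxdef
  have hxy : x = V * y := by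
    rw [hxdef, hydef, ← pow_succ']
    congr 1; omega
  have hy2 : (2 : ℝ) ≤ y := by
    calc (2:ℝ) ≤ V := hV
    _ ≤ V ^ (t - 1) := le_self_pow₀ (by linarith) (by omega)
  have hx2 : (4 : ℝ) ≤ x := by rw [hxy]; nlinarith
  have hy1 : (0:ℝ) < y - 1 := by linarith
  have hx1 : (0:ℝ) < x - 1 := by linarith
  have hx0 : (0:ℝ) < x := by linarith
  have hy0 : (0:ℝ) < y := by linarith
  -- key: (1 - 1/x)^v > 1 - 1/y
  have hkey : 1 - 1 / y < (1 - 1 / x) ^ v := by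
    have := bern_strict (1 / x) (by positivity) (by rw [div_lt_one hx0]; linarith) hv
    have hvx : V * (1 / x) = 1 / y := by
      rw [hxy]; field_simp
    calc 1 - 1 / y = 1 - V * (1 / x) := by rw [hvx]
    _ < (1 - 1 / x) ^ v := this
  -- positivity of the base terms
  have hbx : (0:ℝ) < 1 - 1 / x := by
    rw [sub_pos, div_lt_one hx0]; linarith
  have hby : (0:ℝ) < 1 - 1 / y := by
    rw [sub_pos, div_lt_one hy0]; linarith
  -- log form
  have hlog : Real.log (1 - 1 / y) < V * Real.log (1 - 1 / x) := by
    have := Real.log_lt_log hby hkey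
    rwa [Real.log_pow] at this
  have hinvx : x / (x - 1) = (1 - 1 / x)⁻¹ := by field_simp
  have hinvy : y / (y - 1) = (1 - 1 / y)⁻¹ := by field_simp
  have h1 : V * Real.log (x / (x - 1)) < Real.log (y / (y - 1)) := by
    rw [hinvx, hinvy, Real.log_inv, Real.log_inv]; linarith
  refine ⟨h1, hkey, ?_⟩
  have hL1 : 0 < Real.log (x / (x - 1)) :=
    Real.log_pos (by rw [lt_div_iff₀ hx1]; linarith)
  have hL2 : 0 < Real.log (y / (y - 1)) :=
    Real.log_pos (by rw [lt_div_iff₀ hy1]; linarith)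
  have hT : (0:ℝ) < (t : ℝ) - 1 := by
    have : (2:ℝ) ≤ (t:ℝ) := by exact_mod_cast ht
    linarith
  rw [div_lt_div_iff₀ hL2 hL1]
  nlinarith
end

section
/- (Conditional Lovász local lemma two-stage bound) Let t, k, v be integers with k ≥ 2t, t ≥ 2 and v ≥ 2. Then CAN(t,k,v) ≤ ⌈log(e·t·C(k,t−1)) / log(v^t/(v^t − 1))⌉ + ⌊k·e^t·(v^t − 1)·(1 − 1/t)^{t−1} / t^2⌋. (Here e is Euler's number.) -/
open Finset

attribute [local instance] Classical.propDecidable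

noncomputable def matchEquiv {k v t : ℕ} (c : Fin t → Fin k) (hc : Function.Injective c)
    (a : Fin t → Fin v) :
    {g : Fin k → Fin v // ∀ i, g (c i) = a i} ≃ ({x : Fin k // ¬ ∃ i, c i = x} → Fin v) where
  toFun g := fun x => g.1 x.1
  invFun h := ⟨fun x => if hx : ∃ i, c i = x then a hx.choose else h ⟨x, hx⟩, by
    intro i
    have hx : ∃ j, c j = c i := ⟨i, rfl⟩
    simp only [dif_pos hx]
    exact congrArg a (hc hx.choose_spec)⟩
  left_inv g := by
    apply Subtype.ext
    funext x
    by_cases hx : ∃ i, c i = x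
    · simp only [dif_pos hx]
      have := g.2 hx.choose
      rw [hx.choose_spec] at this
      exact this.symm
    · simp only [dif_neg hx]
  right_inv h := by
    funext x
    simp only [dif_neg x.2]

lemma card_match {k v t : ℕ} (c : Fin t → Fin k) (hc : Function.Injective c)
    (a : Fin t → Fin v) :
    Fintype.card {g : Fin k → Fin v // ∀ i, g (c i) = a i} = v ^ (k - t) := by
  rw [Fintype.card_congr (matchEquiv c hc a), Fintype.card_fun]
  congr 1
  · simp
  · have h1 : Fintype.card {x : Fin k // ∃ i, c i = x} = t := by
      have e : {x : Fin k // ∃ i, c i = x} ≃ Fin t :=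
        (Equiv.subtypeEquivRight (fun x => Iff.rfl)).trans (Equiv.ofInjective c hc).symm
      rw [Fintype.card_congr e, Fintype.card_fin]
    rw [Fintype.card_subtype_compl, h1, Fintype.card_fin]

lemma card_nonmatch {k v t : ℕ} (c : Fin t → Fin k) (hc : Function.Injective c)
    (a : Fin t → Fin v) :
    Fintype.card {g : Fin k → Fin v // ¬ ∀ i, g (c i) = a i} = v ^ k - v ^ (k - t) := by
  rw [Fintype.card_subtype_compl (fun g : Fin k → Fin v => ∀ i, g (c i) = a i)]
  rw [card_match c hc a, Fintype.card_fun, Fintype.card_fin, Fintype.card_fin]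

lemma card_notCovers {N k v t : ℕ} (c : Fin t → Fin k) (hc : Function.Injective c)
    (a : Fin t → Fin v) :
    Fintype.card {A : Fin N → Fin k → Fin v // ¬ Covers A c a} =
      (v ^ k - v ^ (k - t)) ^ N := by
  have he : {A : Fin N → Fin k → Fin v // ¬ Covers A c a} ≃
      (Fin N → {g : Fin k → Fin v // ¬ ∀ i, g (c i) = a i}) := by
    refine (Equiv.subtypeEquivRight ?_).trans Equiv.subtypePiEquivPi
    intro A
    simp only [Covers, not_exists]
  rw [Fintype.card_congr he, Fintype.card_fun, card_nonmatch c hc a, Fintype.card_fin]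

lemma card_strictMono_le (t k : ℕ) :
    (univ.filter fun c : Fin t → Fin k => StrictMono c).card ≤ k.choose t := by
  have h := Finset.card_le_card_of_injOn (fun c : Fin t → Fin k => Finset.image c univ)
    (s := univ.filter fun c : Fin t → Fin k => StrictMono c)
    (t := Finset.powersetCard t (univ : Finset (Fin k)))
    (by
      intro c hc
      rw [Finset.mem_coe, Finset.mem_filter] at hc
      rw [Finset.mem_coe, Finset.mem_powersetCard]
      exact ⟨Finset.subset_univ _,
        by rw [Finset.card_image_of_injective _ hc.2.injective, Finset.card_univ, Fintype.card_fin]⟩)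
    (by
      intro c hc c' hc' hcc
      simp only [Finset.coe_filter, Set.mem_setOf_eq, Finset.mem_univ, true_and] at hc hc'
      have hcard : (Finset.image c univ).card = t := by
        rw [Finset.card_image_of_injective _ hc.injective, Finset.card_univ, Fintype.card_fin]
      have h1 : c = ⇑((Finset.image c univ).orderEmbOfFin hcard) :=
        Finset.orderEmbOfFin_unique hcard (fun x => Finset.mem_image_of_mem c (mem_univ x)) hc
      have h2 : c' = ⇑((Finset.image c univ).orderEmbOfFin hcard) := by
        apply Finset.orderEmbOfFin_unique hcard _ hc'
        intro x
        simp only [] at hcc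
        rw [hcc]
        exact Finset.mem_image_of_mem c' (mem_univ x)
      rw [h1, h2])
  simpa using h

lemma exists_good_array (N t k v : ℕ) (hv : 0 < v) :
    ∃ A : Fin N → Fin k → Fin v,
      ((((univ.filter fun c : Fin t → Fin k => StrictMono c) ×ˢ
          (univ : Finset (Fin t → Fin v))).filter
        (fun p => ¬ Covers A p.1 p.2)).card) * (v ^ k) ^ N
        ≤ (k.choose t * v ^ t) * (v ^ k - v ^ (k - t)) ^ N := by
  haveI : NeZero v := ⟨hv.ne'⟩
  set S := ((univ.filter fun c : Fin t → Fin k => StrictMono c) ×ˢ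
      (univ : Finset (Fin t → Fin v))) with hS
  set F : (Fin N → Fin k → Fin v) → ℕ := fun A => (S.filter (fun p => ¬ Covers A p.1 p.2)).card
    with hF
  have hsum : ∑ A : Fin N → Fin k → Fin v, F A ≤ (k.choose t * v ^ t) * (v ^ k - v ^ (k - t)) ^ N := by
    have h1 : ∀ A, F A = ∑ p ∈ S, if ¬ Covers A p.1 p.2 then 1 else 0 := by
      intro A; rw [hF]; exact Finset.card_filter _ _
    calc ∑ A : Fin N → Fin k → Fin v, F A
        = ∑ p ∈ S, ∑ A : Fin N → Fin k → Fin v, (if ¬ Covers A p.1 p.2 then 1 else 0) := by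
          simp only [h1]; exact Finset.sum_comm
      _ = ∑ p ∈ S, (v ^ k - v ^ (k - t)) ^ N := by
          apply Finset.sum_congr rfl
          intro p hp
          have hpm : StrictMono p.1 := by
            rw [hS, Finset.mem_product, Finset.mem_filter] at hp
            exact hp.1.2
          rw [← Finset.card_filter]
          rw [← Fintype.card_subtype, card_notCovers p.1 hpm.injective p.2]
      _ = S.card * (v ^ k - v ^ (k - t)) ^ N := by rw [Finset.sum_const, smul_eq_mul]
      _ ≤ (k.choose t * v ^ t) * (v ^ k - v ^ (k - t)) ^ N := by
          apply Nat.mul_le_mul_right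
          rw [hS, Finset.card_product]
          apply Nat.mul_le_mul (card_strictMono_le t k)
          simp
  obtain ⟨A0, -, hmin⟩ := Finset.exists_min_image (univ : Finset (Fin N → Fin k → Fin v)) F
    ⟨fun _ _ => ⟨0, hv⟩, mem_univ _⟩
  refine ⟨A0, ?_⟩
  have hcard : (univ : Finset (Fin N → Fin k → Fin v)).card = (v ^ k) ^ N := by
    simp [Fintype.card_fun]
  calc F A0 * (v ^ k) ^ N = ∑ _A : Fin N → Fin k → Fin v, F A0 := by
        rw [Finset.sum_const, hcard, smul_eq_mul, mul_comm]
    _ ≤ ∑ A : Fin N → Fin k → Fin v, F A := Finset.sum_le_sum (fun A _ => hmin A (mem_univ A))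
    _ ≤ _ := hsum

noncomputable def matchRow {k v t : ℕ} (hv : 0 < v) (c : Fin t → Fin k) (a : Fin t → Fin v) :
    Fin k → Fin v :=
  fun x => if h : ∃ i, c i = x then a h.choose else ⟨0, hv⟩

lemma matchRow_covers {k v t : ℕ} (hv : 0 < v) (c : Fin t → Fin k)
    (hc : Function.Injective c) (a : Fin t → Fin v) (i : Fin t) :
    matchRow hv c a (c i) = a i := by
  have h : ∃ j, c j = c i := ⟨i, rfl⟩
  simp only [matchRow, dif_pos h]
  exact congrArg a (hc h.choose_spec)

lemma exists_CA_s19 (t k v N m : ℕ) (hv : 0 < v) (A : Fin N → Fin k → Fin v)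
    (h : ((((univ.filter fun c : Fin t → Fin k => StrictMono c) ×ˢ
        (univ : Finset (Fin t → Fin v))).filter
      (fun p => ¬ Covers A p.1 p.2)).card) ≤ m) :
    ∃ B : Fin (N + m) → Fin k → Fin v, IsCoveringArray (N + m) t k v B := by
  set U := (((univ.filter fun c : Fin t → Fin k => StrictMono c) ×ˢ
      (univ : Finset (Fin t → Fin v))).filter (fun p => ¬ Covers A p.1 p.2)) with hU
  set l := U.toList with hl
  have hlen : l.length ≤ m := by rw [hl, Finset.length_toList]; exact h
  set B : Fin (N + m) → Fin k → Fin v := fun r =>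
    if hr : (r : ℕ) < N then A ⟨r, hr⟩
    else if hr2 : (r : ℕ) - N < l.length then
      matchRow hv (l.get ⟨(r : ℕ) - N, hr2⟩).1 (l.get ⟨(r : ℕ) - N, hr2⟩).2
    else fun _ => ⟨0, hv⟩ with hB
  refine ⟨B, ?_⟩
  intro c hc a
  set σ := Tuple.sort c with hσ
  have hmono : StrictMono (c ∘ σ) :=
    (Tuple.monotone_sort c).strictMono_of_injective (hc.comp σ.injective)
  have hcov : Covers B (c ∘ σ) (a ∘ σ) := by
    by_cases hA : Covers A (c ∘ σ) (a ∘ σ)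
    · obtain ⟨r, hr⟩ := hA
      set r' : Fin (N + m) := ⟨r, lt_of_lt_of_le r.2 (Nat.le_add_right N m)⟩ with hr'
      refine ⟨r', fun i => ?_⟩
      have hlt : (r' : ℕ) < N := r.2
      simp only [hB, dif_pos hlt]
      have he : (⟨(r' : ℕ), hlt⟩ : Fin N) = r := Fin.ext rfl
      rw [he]
      exact hr i
    · have hmem : ((c ∘ σ, a ∘ σ) : (Fin t → Fin k) × (Fin t → Fin v)) ∈ U := by
        rw [hU, Finset.mem_filter, Finset.mem_product, Finset.mem_filter]
        exact ⟨⟨⟨mem_univ _, hmono⟩, mem_univ _⟩, hA⟩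
      have hmeml : ((c ∘ σ, a ∘ σ) : (Fin t → Fin k) × (Fin t → Fin v)) ∈ l := by
        rw [hl, Finset.mem_toList]; exact hmem
      obtain ⟨j, hj⟩ := List.mem_iff_get.mp hmeml
      have hrow : N + (j : ℕ) < N + m := Nat.add_lt_add_left (lt_of_lt_of_le j.2 hlen) N
      refine ⟨⟨N + (j : ℕ), hrow⟩, ?_⟩
      intro i
      have h1 : ¬ ((N + (j : ℕ)) < N) := by omega
      have h2 : (N + (j : ℕ)) - N < l.length := by
        have := j.2; omega
      simp only [hB, dif_neg h1, dif_pos h2]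
      have hget : l.get ⟨N + (j : ℕ) - N, h2⟩ = (c ∘ σ, a ∘ σ) := by
        have h3 : (⟨N + (j : ℕ) - N, h2⟩ : Fin l.length) = j := by
          apply Fin.ext
          simp only [Fin.val_mk]
          omega
        rw [h3]
        exact hj
      rw [hget]
      exact matchRow_covers hv (c ∘ σ) (hc.comp σ.injective) (a ∘ σ) i
  obtain ⟨r, hr⟩ := hcov
  refine ⟨r, fun j => ?_⟩
  have := hr (σ.symm j)
  simpa using this

lemma one_sub_inv_pow_ge (t : ℕ) (ht : 2 ≤ t) :
    (Real.exp 1)⁻¹ ≤ (1 - 1/(t:ℝ)) ^ (t - 1) := by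
  have ht2 : (2:ℝ) ≤ (t:ℝ) := by exact_mod_cast ht
  have hpos : (0:ℝ) < (t:ℝ) - 1 := by linarith
  have htpos : (0:ℝ) < (t:ℝ) := by linarith
  have hcast : ((t - 1 : ℕ) : ℝ) = (t:ℝ) - 1 := by
    have h1 : 1 ≤ t := le_trans one_le_two ht
    push_cast [Nat.cast_sub h1]; ring
  have h1 : (1 + 1/((t:ℝ)-1)) ^ (t-1 : ℕ) ≤ Real.exp 1 := by
    have h2 : 1 + 1/((t:ℝ)-1) ≤ Real.exp (1/((t:ℝ)-1)) := by
      have := Real.add_one_le_exp (1/((t:ℝ)-1)); linarith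
    calc (1 + 1/((t:ℝ)-1)) ^ (t-1:ℕ)
        ≤ Real.exp (1/((t:ℝ)-1)) ^ (t-1:ℕ) := by
          apply pow_le_pow_left₀ (by positivity) h2
      _ = Real.exp (((t-1:ℕ):ℝ) * (1/((t:ℝ)-1))) := (Real.exp_nat_mul _ _).symm
      _ = Real.exp 1 := by rw [hcast]; congr 1; field_simp
  have hbase : (1 - 1/(t:ℝ)) = (1 + 1/((t:ℝ)-1))⁻¹ := by
    rw [inv_eq_one_div]
    field_simp; ring
  rw [hbase, inv_pow]
  apply inv_anti₀
  · positivity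
  · exact h1

lemma real_key (t k v : ℕ) (ht : 2 ≤ t) (hk : 2 * t ≤ k) (hv : 2 ≤ v) :
    (k.choose t : ℝ) * (v:ℝ)^t *
      ((((v:ℝ)^t - 1)/(v:ℝ)^t) ^ (⌈Real.log (Real.exp 1 * (t:ℝ) * (k.choose (t-1) : ℝ))
        / Real.log ((v:ℝ)^t / ((v:ℝ)^t - 1))⌉₊ : ℕ))
    ≤ (k:ℝ) * (Real.exp 1)^t * ((v:ℝ)^t - 1) * (1 - 1/(t:ℝ))^(t-1) / (t:ℝ)^2 := by
  have ht2 : (2:ℝ) ≤ (t:ℝ) := by exact_mod_cast ht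
  have hv2 : (2:ℝ) ≤ (v:ℝ) := by exact_mod_cast hv
  have htk : t ≤ k := le_trans (Nat.le_mul_of_pos_left t (by norm_num)) hk
  have ht1k : t - 1 ≤ k := le_trans (Nat.sub_le t 1) htk
  have hvt4 : (4:ℝ) ≤ (v:ℝ)^t := by
    calc (4:ℝ) = 2^2 := by norm_num
      _ ≤ (2:ℝ)^t := pow_le_pow_right₀ one_le_two ht
      _ ≤ (v:ℝ)^t := pow_le_pow_left₀ (by norm_num) hv2 t
  have hvt1 : (0:ℝ) < (v:ℝ)^t - 1 := by linarith
  have hvt0 : (0:ℝ) < (v:ℝ)^t := by linarith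
  set q : ℝ := ((v:ℝ)^t - 1)/(v:ℝ)^t with hq
  set r : ℝ := (v:ℝ)^t / ((v:ℝ)^t - 1) with hr
  have hq0 : 0 < q := by positivity
  have hr1 : 1 < r := by
    rw [hr, lt_div_iff₀ hvt1]; linarith
  have hqr : q * r = 1 := by
    rw [hq, hr]; field_simp
  set M : ℝ := Real.exp 1 * (t:ℝ) * (k.choose (t-1) : ℝ) with hM
  have hC1 : (1:ℝ) ≤ (k.choose (t-1) : ℝ) := by
    exact_mod_cast Nat.one_le_iff_ne_zero.mpr (Nat.choose_pos ht1k).ne'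
  have he2 : (2:ℝ) ≤ Real.exp 1 := by
    have := Real.add_one_le_exp (1:ℝ); linarith
  have hM1 : 1 < M := by
    calc (1:ℝ) < 2 * 2 * 1 := by norm_num
      _ ≤ Real.exp 1 * (t:ℝ) * (k.choose (t-1) : ℝ) := by
        apply mul_le_mul (mul_le_mul he2 ht2 (by norm_num) (by linarith)) hC1
          (by norm_num) (by positivity)
  set n : ℕ := ⌈Real.log M / Real.log r⌉₊ with hn
  have hlogr : 0 < Real.log r := Real.log_pos hr1
  have hM0 : (0:ℝ) < M := by linarith
  have hMlern : M ≤ r ^ n := by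
    have h1 : Real.log M / Real.log r ≤ (n : ℝ) := Nat.le_ceil _
    have h2 : Real.log M ≤ (n:ℝ) * Real.log r := by
      rw [div_le_iff₀ hlogr] at h1; linarith
    have h3 : Real.log M ≤ Real.log (r ^ n) := by
      rw [Real.log_pow]; exact h2
    exact (Real.log_le_log_iff hM0 (by positivity)).mp h3
  have hqn : q ^ n ≤ M⁻¹ := by
    have hqinv : q = r⁻¹ := by
      rw [eq_comm, inv_eq_iff_eq_inv, eq_comm, inv_eq_one_div]
      rw [hq, hr]
      rw [one_div_div]
    rw [hqinv, inv_pow]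
    exact inv_anti₀ (by linarith) hMlern
  have hchain : (k.choose t : ℝ) * (v:ℝ)^t * q ^ n ≤ (k.choose t : ℝ) * (v:ℝ)^t * M⁻¹ :=
    mul_le_mul_of_nonneg_left hqn (by positivity)
  refine le_trans hchain ?_
  rw [mul_inv_le_iff₀ hM0]
  set d : ℕ := k - (t-1) with hdd
  have hid : (k.choose t : ℝ) * (t:ℝ) = (k.choose (t-1) : ℝ) * (d : ℝ) := by
    have h0 := Nat.choose_succ_right_eq k (t-1)
    have ht' : t - 1 + 1 = t := Nat.succ_pred_eq_of_pos (lt_of_lt_of_le Nat.zero_lt_two ht)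
    rw [ht'] at h0
    rw [hdd, ← Nat.cast_mul, ← Nat.cast_mul]
    exact congrArg _ h0
  have hd : (d : ℝ) ≤ (k:ℝ) := by
    rw [hdd]; exact_mod_cast Nat.sub_le k (t-1)
  have hP : (Real.exp 1)⁻¹ ≤ (1 - 1/(t:ℝ))^(t-1) := one_sub_inv_pow_ge t ht
  have het : (2:ℝ) ≤ (Real.exp 1)^t := by
    calc (2:ℝ) ≤ 2^t :=
          le_self_pow₀ one_le_two (by intro h; rw [h] at ht; exact absurd ht (by norm_num))
      _ ≤ (Real.exp 1)^t := pow_le_pow_left₀ (by norm_num) he2 t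
  have ht0 : (0:ℝ) < (t:ℝ) := by linarith
  have key : (d : ℝ) * (v:ℝ)^t ≤ (k:ℝ) * (Real.exp 1)^t * ((v:ℝ)^t - 1) *
      ((1 - 1/(t:ℝ))^(t-1) * Real.exp 1) := by
    have hvts : (v:ℝ)^t ≤ 2 * ((v:ℝ)^t - 1) := by linarith
    have hPe : 1 ≤ (1 - 1/(t:ℝ))^(t-1) * Real.exp 1 := by
      have h0 : (0:ℝ) < Real.exp 1 := Real.exp_pos 1
      calc (1:ℝ) = (Real.exp 1)⁻¹ * Real.exp 1 := by field_simp
        _ ≤ (1 - 1/(t:ℝ))^(t-1) * Real.exp 1 := mul_le_mul_of_nonneg_right hP (le_of_lt h0)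
    calc (d : ℝ) * (v:ℝ)^t ≤ (k:ℝ) * (2 * ((v:ℝ)^t - 1)) :=
          mul_le_mul hd hvts (by positivity) (by positivity)
      _ = (k:ℝ) * 2 * ((v:ℝ)^t - 1) * 1 := by ring
      _ ≤ (k:ℝ) * (Real.exp 1)^t * ((v:ℝ)^t - 1) *
          ((1 - 1/(t:ℝ))^(t-1) * Real.exp 1) := by
          apply mul_le_mul _ hPe (by norm_num) (by positivity)
          apply mul_le_mul_of_nonneg_right _ (le_of_lt hvt1)
          exact mul_le_mul_of_nonneg_left (by linarith) (by positivity)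
  have hRHS : ((k:ℝ) * (Real.exp 1)^t * ((v:ℝ)^t - 1) * (1 - 1/(t:ℝ))^(t-1) / (t:ℝ)^2) * M
      = (k.choose (t-1) : ℝ) * ((k:ℝ) * (Real.exp 1)^t * ((v:ℝ)^t - 1) *
          ((1 - 1/(t:ℝ))^(t-1) * Real.exp 1)) / (t:ℝ) := by
    rw [hM]; field_simp
  rw [hRHS, le_div_iff₀ ht0]
  calc (k.choose t : ℝ) * (v:ℝ)^t * (t:ℝ)
      = (k.choose (t-1) : ℝ) * ((d:ℝ) * (v:ℝ)^t) := by
        linear_combination hid * (v:ℝ)^t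
    _ ≤ (k.choose (t-1) : ℝ) * ((k:ℝ) * (Real.exp 1)^t * ((v:ℝ)^t - 1) *
          ((1 - 1/(t:ℝ))^(t-1) * Real.exp 1)) :=
        mul_le_mul_of_nonneg_left key (by positivity)

theorem conditional_lll_two_stage (t k v : ℕ) (ht : 2 ≤ t) (hk : 2 * t ≤ k)
    (hv : 2 ≤ v) :
    CAN t k v ≤
      ⌈Real.log (Real.exp 1 * (t : ℝ) * (Nat.choose k (t - 1) : ℝ)) /
          Real.log ((v : ℝ) ^ t / ((v : ℝ) ^ t - 1))⌉₊ +
        ⌊(k : ℝ) * (Real.exp 1) ^ t * ((v : ℝ) ^ t - 1) *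
            (1 - 1 / (t : ℝ)) ^ (t - 1) / (t : ℝ) ^ 2⌋₊ := by
  have hv0 : 0 < v := lt_of_lt_of_le Nat.zero_lt_two hv
  have htk : t ≤ k := le_trans (Nat.le_mul_of_pos_left t (by norm_num)) hk
  set n1 : ℕ := ⌈Real.log (Real.exp 1 * (t : ℝ) * (Nat.choose k (t - 1) : ℝ)) /
      Real.log ((v : ℝ) ^ t / ((v : ℝ) ^ t - 1))⌉₊ with hn1
  set b : ℝ := (k : ℝ) * (Real.exp 1) ^ t * ((v : ℝ) ^ t - 1) *
      (1 - 1 / (t : ℝ)) ^ (t - 1) / (t : ℝ) ^ 2 with hb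
  obtain ⟨A0, hA0⟩ := exists_good_array n1 t k v hv0
  set F : ℕ := ((((univ.filter fun c : Fin t → Fin k => StrictMono c) ×ˢ
      (univ : Finset (Fin t → Fin v))).filter (fun p => ¬ Covers A0 p.1 p.2)).card) with hFdef
  -- Real bounds
  have hv2 : (2:ℝ) ≤ (v:ℝ) := by exact_mod_cast hv
  have ht2 : (2:ℝ) ≤ (t:ℝ) := by exact_mod_cast ht
  have hvt4 : (4:ℝ) ≤ (v:ℝ)^t := by
    calc (4:ℝ) = 2^2 := by norm_num
      _ ≤ (2:ℝ)^t := pow_le_pow_right₀ one_le_two ht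
      _ ≤ (v:ℝ)^t := pow_le_pow_left₀ (by norm_num) hv2 t
  have hvt1 : (0:ℝ) < (v:ℝ)^t - 1 := by linarith
  have hvt0 : (0:ℝ) < (v:ℝ)^t := by linarith
  have hwk : v ^ (k-t) ≤ v ^ k := Nat.pow_le_pow_right hv0 (Nat.sub_le k t)
  have hkeq : (k - t) + t = k := Nat.sub_add_cancel htk
  have hsplitk : ((v:ℝ))^k = (v:ℝ)^(k-t) * (v:ℝ)^t := by
    rw [← pow_add, hkeq]
  have hcast : ((v ^ k - v ^ (k - t) : ℕ) : ℝ) = (v:ℝ)^(k-t) * ((v:ℝ)^t - 1) := by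
    rw [Nat.cast_sub hwk]
    push_cast
    rw [hsplitk]; ring
  have hreal : (F:ℝ) * ((v:ℝ)^(k-t) * (v:ℝ)^t)^n1
      ≤ ((k.choose t : ℝ) * (v:ℝ)^t) * ((v:ℝ)^(k-t) * ((v:ℝ)^t - 1))^n1 := by
    have := hA0
    have hcastineq : ((F * (v ^ k) ^ n1 : ℕ) : ℝ)
        ≤ (((k.choose t * v ^ t) * (v ^ k - v ^ (k - t)) ^ n1 : ℕ) : ℝ) := by
      exact_mod_cast this
    push_cast at hcastineq
    rw [hcast] at hcastineq
    calc (F:ℝ) * ((v:ℝ)^(k-t) * (v:ℝ)^t)^n1 = (F:ℝ) * ((v:ℝ)^k)^n1 := by rw [hsplitk]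
      _ ≤ ((k.choose t : ℝ) * (v:ℝ)^t) * ((v:ℝ)^(k-t) * ((v:ℝ)^t - 1))^n1 := hcastineq
  have hFq : (F:ℝ) ≤ (k.choose t : ℝ) * (v:ℝ)^t * (((v:ℝ)^t - 1)/(v:ℝ)^t)^n1 := by
    have hkt0 : (0:ℝ) < ((v:ℝ)^(k-t))^n1 := by positivity
    have h1 : (F:ℝ) * ((v:ℝ)^t)^n1 * ((v:ℝ)^(k-t))^n1
        ≤ ((k.choose t : ℝ) * (v:ℝ)^t) * ((v:ℝ)^t - 1)^n1 * ((v:ℝ)^(k-t))^n1 := by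
      calc (F:ℝ) * ((v:ℝ)^t)^n1 * ((v:ℝ)^(k-t))^n1
          = (F:ℝ) * ((v:ℝ)^(k-t) * (v:ℝ)^t)^n1 := by rw [mul_pow]; ring
        _ ≤ ((k.choose t : ℝ) * (v:ℝ)^t) * ((v:ℝ)^(k-t) * ((v:ℝ)^t - 1))^n1 := hreal
        _ = ((k.choose t : ℝ) * (v:ℝ)^t) * ((v:ℝ)^t - 1)^n1 * ((v:ℝ)^(k-t))^n1 := by
            rw [mul_pow]; ring
    have h2 : (F:ℝ) * ((v:ℝ)^t)^n1 ≤ ((k.choose t : ℝ) * (v:ℝ)^t) * ((v:ℝ)^t - 1)^n1 :=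
      le_of_mul_le_mul_right h1 hkt0
    rw [div_pow, mul_div_assoc']
    rw [le_div_iff₀ (by positivity : (0:ℝ) < ((v:ℝ)^t)^n1)]
    exact h2
  have hFb : (F:ℝ) ≤ b := le_trans hFq (by
    have := real_key t k v ht hk hv
    rw [hb, hn1]
    exact this)
  have hFm : F ≤ ⌊b⌋₊ := Nat.le_floor hFb
  obtain ⟨B, hB⟩ := exists_CA_s19 t k v n1 ⌊b⌋₊ hv0 A0 hFm
  exact Nat.sInf_le ⟨B, hB⟩
end
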